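/- arXiv:2004.11950 — 8 statements merged into one kernel-verified Lean document; each statement's English description precedes it below -/
import Mathlib

section
/- Let v : [0,π] → ℝ be continuous. For each λ ∈ ℝ the function d(λ) = y₁(π,λ) is differentiable in λ and its derivative is given by d'(λ) = ∫₀^π y₁(x,λ) y₂(x,λ) dx. -/
open Real Set MeasureTheory intervalIntegral

/-- for continuous `v` on `[0,π]`, let `y₁(·,λ)`, `y₂(·,λ)` be the solutions of
`-y'' + v·y = λ·y` on `[0,π]` with `y₁(0,λ) = 0`, `y₁'(0,λ) = 1`, `y₂(π,λ) = 0`, `y₂'(π,λ) = 1`.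
Then `d(λ) = y₁(π,λ)` is differentiable in `λ` with `d'(λ) = ∫₀^π y₁(x,λ) y₂(x,λ) dx`. -/
theorem characteristic_determinant_deriv
    (v : ℝ → ℝ) (hv : ContinuousOn v (Icc (0:ℝ) π))
    (y₁ y₁' y₂ y₂' : ℝ → ℝ → ℝ)
    (hy₁ : ∀ l : ℝ, ∀ x ∈ Icc (0:ℝ) π, HasDerivWithinAt (y₁ l) (y₁' l x) (Icc (0:ℝ) π) x)
    (hy₁' : ∀ l : ℝ, ∀ x ∈ Icc (0:ℝ) π,
      HasDerivWithinAt (y₁' l) ((v x - l) * y₁ l x) (Icc (0:ℝ) π) x)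
    (h10 : ∀ l : ℝ, y₁ l 0 = 0) (h11 : ∀ l : ℝ, y₁' l 0 = 1)
    (hy₂ : ∀ l : ℝ, ∀ x ∈ Icc (0:ℝ) π, HasDerivWithinAt (y₂ l) (y₂' l x) (Icc (0:ℝ) π) x)
    (hy₂' : ∀ l : ℝ, ∀ x ∈ Icc (0:ℝ) π,
      HasDerivWithinAt (y₂' l) ((v x - l) * y₂ l x) (Icc (0:ℝ) π) x)
    (h20 : ∀ l : ℝ, y₂ l π = 0) (h21 : ∀ l : ℝ, y₂' l π = 1) :
    ∀ l : ℝ, HasDerivAt (fun μ : ℝ => y₁ μ π) (∫ x in (0:ℝ)..π, y₁ l x * y₂ l x) l := by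
  intro l
  have hπ : (0:ℝ) ≤ π := pi_nonneg
  have h0mem : (0:ℝ) ∈ Icc (0:ℝ) π := ⟨le_refl 0, hπ⟩
  -- continuity of the solutions
  have cont₁ : ∀ μ : ℝ, ContinuousOn (y₁ μ) (Icc 0 π) :=
    fun μ x hx => (hy₁ μ x hx).continuousWithinAt
  have cont₁' : ∀ μ : ℝ, ContinuousOn (y₁' μ) (Icc 0 π) :=
    fun μ x hx => (hy₁' μ x hx).continuousWithinAt
  have cont₂ : ∀ μ : ℝ, ContinuousOn (y₂ μ) (Icc 0 π) :=
    fun μ x hx => (hy₂ μ x hx).continuousWithinAt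
  have cont₂' : ∀ μ : ℝ, ContinuousOn (y₂' μ) (Icc 0 π) :=
    fun μ x hx => (hy₂' μ x hx).continuousWithinAt
  have hintg : ∀ μ : ℝ, IntervalIntegrable (fun x => y₁ μ x * y₂ l x) volume 0 π := by
    intro μ
    apply ContinuousOn.intervalIntegrable
    rw [uIcc_of_le hπ]
    exact (cont₁ μ).mul (cont₂ l)
  -- Step 1: the Wronskian identity
  have key : ∀ μ : ℝ, y₁ μ π + y₂ l 0 = (μ - l) * ∫ x in (0:ℝ)..π, y₁ μ x * y₂ l x := by
    intro μ
    set W : ℝ → ℝ := fun x => y₁ μ x * y₂' l x - y₁' μ x * y₂ l x with hWdef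
    have hW : ∀ x ∈ Icc (0:ℝ) π,
        HasDerivWithinAt W ((μ - l) * (y₁ μ x * y₂ l x)) (Icc 0 π) x := by
      intro x hx
      have h := ((hy₁ μ x hx).mul (hy₂' l x hx)).sub ((hy₁' μ x hx).mul (hy₂ l x hx))
      exact h.congr_deriv (by ring)
    have hWc : ContinuousOn W (Icc 0 π) := fun x hx => (hW x hx).continuousWithinAt
    have hderiv : ∀ x ∈ Ioo (0:ℝ) π, HasDerivAt W ((μ - l) * (y₁ μ x * y₂ l x)) x := by
      intro x hx
      exact (hW x (Ioo_subset_Icc_self hx)).hasDerivAt (Icc_mem_nhds hx.1 hx.2)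
    have hint : IntervalIntegrable (fun x => (μ - l) * (y₁ μ x * y₂ l x)) volume 0 π :=
      (hintg μ).const_mul _
    have hFTC := integral_eq_sub_of_hasDerivAt_of_le hπ hWc hderiv hint
    rw [intervalIntegral.integral_const_mul] at hFTC
    have hWπ : W π = y₁ μ π := by simp [hWdef, h20, h21]
    have hW0 : W 0 = -y₂ l 0 := by simp [hWdef, h10, h11]
    rw [hWπ, hW0] at hFTC
    linarith
  have key2 : ∀ μ : ℝ, y₁ μ π - y₁ l π = (μ - l) * ∫ x in (0:ℝ)..π, y₁ μ x * y₂ l x := by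
    intro μ
    have h1 := key μ
    have h2 := key l
    simp only [sub_self, zero_mul] at h2
    linarith
  -- Step 2: bounds
  obtain ⟨Cv, hCv⟩ := isCompact_Icc.exists_bound_of_continuousOn hv
  obtain ⟨M₁, hM₁⟩ := isCompact_Icc.exists_bound_of_continuousOn (cont₁ l)
  obtain ⟨M₂, hM₂⟩ := isCompact_Icc.exists_bound_of_continuousOn (cont₂ l)
  simp only [Real.norm_eq_abs] at hCv hM₁ hM₂
  have hCv0 : 0 ≤ Cv := le_trans (abs_nonneg _) (hCv 0 h0mem)
  have hM₁0 : 0 ≤ M₁ := le_trans (abs_nonneg _) (hM₁ 0 h0mem)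
  have hM₂0 : 0 ≤ M₂ := le_trans (abs_nonneg _) (hM₂ 0 h0mem)
  set K : ℝ := Cv + |l| + 2 with hKdef
  have hK1 : 1 ≤ K := by have := abs_nonneg l; linarith
  have hK0 : 0 < K := lt_of_lt_of_le one_pos hK1
  set C : ℝ := M₁ * exp (K * π) / K with hCdef
  have hC0 : 0 ≤ C := by positivity
  -- Step 3: Gronwall estimate for the difference of solutions
  have grow : ∀ μ : ℝ, |μ - l| ≤ 1 → ∀ x ∈ Icc (0:ℝ) π,
      |y₁ μ x - y₁ l x| ≤ |μ - l| * C := by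
    intro μ hμ
    set f : ℝ → ℝ × ℝ := fun x => (y₁ μ x - y₁ l x, y₁' μ x - y₁' l x) with hfdef
    set g : ℝ → ℝ × ℝ := fun x =>
      (y₁' μ x - y₁' l x, (v x - μ) * y₁ μ x - (v x - l) * y₁ l x) with hgdef
    have hf : ∀ x ∈ Icc (0:ℝ) π, HasDerivWithinAt f (g x) (Icc 0 π) x := by
      intro x hx
      exact HasDerivWithinAt.prodMk ((hy₁ μ x hx).sub (hy₁ l x hx)) ((hy₁' μ x hx).sub (hy₁' l x hx))
    have hfc : ContinuousOn f (Icc 0 π) := fun x hx => (hf x hx).continuousWithinAt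
    have hf' : ∀ x ∈ Ico (0:ℝ) π, HasDerivWithinAt f (g x) (Ici x) x := by
      intro x hx
      exact HasDerivWithinAt.mono_of_mem_nhdsWithin (hf x ⟨hx.1, le_of_lt hx.2⟩) (Icc_mem_nhdsGE_of_mem ⟨hx.1, hx.2⟩)
    have hbound : ∀ x ∈ Ico (0:ℝ) π, ‖g x‖ ≤ K * ‖f x‖ + |μ - l| * M₁ := by
      intro x hx
      have hxI : x ∈ Icc (0:ℝ) π := ⟨hx.1, le_of_lt hx.2⟩
      have hv1 : |v x - μ| ≤ K := by
        have h1 : |v x| ≤ Cv := hCv x hxI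
        have h2 : |μ| ≤ |l| + 1 := by
          calc |μ| = |l + (μ - l)| := by ring_nf
          _ ≤ |l| + |μ - l| := abs_add_le _ _
          _ ≤ |l| + 1 := by linarith
        calc |v x - μ| ≤ |v x| + |μ| := abs_sub _ _
        _ ≤ K := by simp only [hKdef]; linarith
      have hfx1 : |y₁ μ x - y₁ l x| ≤ ‖f x‖ := norm_fst_le (f x)
      have hfx2 : |y₁' μ x - y₁' l x| ≤ ‖f x‖ := norm_snd_le (f x)
      have hfx0 : 0 ≤ ‖f x‖ := norm_nonneg _
      rw [Prod.norm_def]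
      apply max_le
      · calc ‖(g x).1‖ = |y₁' μ x - y₁' l x| := rfl
        _ ≤ ‖f x‖ := hfx2
        _ ≤ K * ‖f x‖ + |μ - l| * M₁ := by nlinarith [abs_nonneg (μ - l)]
      · have heq : (g x).2 = (v x - μ) * (y₁ μ x - y₁ l x) + (l - μ) * y₁ l x := by
          simp only [hgdef]; ring
        calc ‖(g x).2‖ = |(v x - μ) * (y₁ μ x - y₁ l x) + (l - μ) * y₁ l x| := by rw [heq, Real.norm_eq_abs]
        _ ≤ |(v x - μ) * (y₁ μ x - y₁ l x)| + |(l - μ) * y₁ l x| := abs_add_le _ _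
        _ = |v x - μ| * |y₁ μ x - y₁ l x| + |l - μ| * |y₁ l x| := by rw [abs_mul, abs_mul]
        _ ≤ K * ‖f x‖ + |μ - l| * M₁ := by
            rw [abs_sub_comm l μ]
            have h1 := hM₁ x hxI
            have h2 := abs_nonneg (v x - μ)
            have h3 := abs_nonneg (μ - l)
            have h4 := abs_nonneg (y₁ l x)
            nlinarith
    have hfa : ‖f 0‖ ≤ 0 := by
      have : f 0 = (0, 0) := by simp [hfdef, h10, h11]
      rw [this]; simp
    have hgron := norm_le_gronwallBound_of_norm_deriv_right_le hfc hf' hfa hbound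
    intro x hx
    have h1 := hgron x hx
    have h2 : gronwallBound 0 K (|μ - l| * M₁) (x - 0) ≤ |μ - l| * C := by
      rw [gronwallBound_of_K_ne_0 (ne_of_gt hK0)]
      simp only [zero_mul, zero_add]
      have hex : exp (K * (x - 0)) - 1 ≤ exp (K * π) := by
        have h5 : exp (K * (x - 0)) ≤ exp (K * π) := by
          apply exp_le_exp.2
          have := hx.2
          nlinarith
        linarith [h5]
      rw [hCdef, div_mul_eq_mul_div, div_le_iff₀ hK0, mul_assoc, mul_assoc, div_mul_cancel₀ _ (ne_of_gt hK0)]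
      have habs0 : 0 ≤ |μ - l| := abs_nonneg _
      nlinarith [mul_nonneg habs0 hM₁0, exp_pos (K * π)]
    calc |y₁ μ x - y₁ l x| ≤ ‖f x‖ := norm_fst_le (f x)
    _ ≤ gronwallBound 0 K (|μ - l| * M₁) (x - 0) := h1
    _ ≤ |μ - l| * C := h2
  -- Step 4: the difference quotient
  set G : ℝ → ℝ := fun μ => ∫ x in (0:ℝ)..π, y₁ μ x * y₂ l x with hGdef
  have hGlip : ∀ μ : ℝ, |μ - l| ≤ 1 → |G μ - G l| ≤ (C * M₂ * π) * |μ - l| := by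
    intro μ hμ
    have hsub : G μ - G l = ∫ x in (0:ℝ)..π, (y₁ μ x - y₁ l x) * y₂ l x := by
      rw [hGdef]
      simp only
      rw [← intervalIntegral.integral_sub (hintg μ) (hintg l)]
      congr 1
      ext x
      ring
    rw [hsub]
    have hb : ∀ x ∈ Set.uIoc (0:ℝ) π, ‖(y₁ μ x - y₁ l x) * y₂ l x‖ ≤ |μ - l| * C * M₂ := by
      intro x hx
      have hxI : x ∈ Icc (0:ℝ) π := by
        rw [uIoc_of_le hπ] at hx
        exact ⟨le_of_lt hx.1, hx.2⟩
      rw [norm_mul, Real.norm_eq_abs, Real.norm_eq_abs]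
      have h1 := grow μ hμ x hxI
      have h2 := hM₂ x hxI
      calc |y₁ μ x - y₁ l x| * |y₂ l x| ≤ (|μ - l| * C) * M₂ := by
            apply mul_le_mul h1 h2 (abs_nonneg _)
            positivity
      _ = |μ - l| * C * M₂ := rfl
    have := intervalIntegral.norm_integral_le_of_norm_le_const hb
    rw [sub_zero, abs_of_nonneg hπ] at this
    calc |∫ x in (0:ℝ)..π, (y₁ μ x - y₁ l x) * y₂ l x| ≤ |μ - l| * C * M₂ * π := this
    _ = (C * M₂ * π) * |μ - l| := by ring
  -- Step 5: conclude
  rw [hasDerivAt_iff_tendsto_slope]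
  have heq : ∀ μ ∈ ({l}ᶜ : Set ℝ), slope (fun μ : ℝ => y₁ μ π) l μ = G μ := by
    intro μ hμ
    have hne : μ - l ≠ 0 := sub_ne_zero.mpr hμ
    rw [slope_def_field]
    rw [div_eq_iff hne]
    rw [key2 μ]
    ring
  have hGcont : Filter.Tendsto G (nhdsWithin l {l}ᶜ) (nhds (G l)) := by
    apply Filter.Tendsto.mono_left _ nhdsWithin_le_nhds
    rw [tendsto_iff_dist_tendsto_zero]
    have hbd : ∀ᶠ μ in nhds l, dist (G μ) (G l) ≤ (C * M₂ * π) * |μ - l| := by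
      have hev : ∀ᶠ μ in nhds l, |μ - l| ≤ 1 := by
        have := Metric.closedBall_mem_nhds l one_pos
        filter_upwards [this] with μ hμ
        simpa [Real.dist_eq] using hμ
      filter_upwards [hev] with μ hμ
      rw [Real.dist_eq]
      exact hGlip μ hμ
    have hg0 : Filter.Tendsto (fun μ : ℝ => (C * M₂ * π) * |μ - l|) (nhds l) (nhds 0) := by
      have h1 : Filter.Tendsto (fun μ : ℝ => (C * M₂ * π) * |μ - l|) (nhds l)
          (nhds ((C * M₂ * π) * |l - l|)) :=
        (continuous_const.mul ((continuous_id.sub continuous_const).abs)).tendsto l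
      simpa using h1
    exact squeeze_zero' (Filter.Eventually.of_forall (fun μ => dist_nonneg)) hbd hg0
  refine Filter.Tendsto.congr' ?_ hGcont
  filter_upwards [self_mem_nhdsWithin] with μ hμ
  exact (heq μ hμ).symm
end

section
/- Let v : [0,π] → ℝ be continuous and let λ ∈ ℝ be such that d(λ) ≠ 0. Then for every continuous function f : [0,π] → ℝ, the function u(x) = −(1/d(λ)) ( y₂(x,λ) ∫₀^x y₁(ξ,λ) f(ξ) dξ + y₁(x,λ) ∫_x^π y₂(ξ,λ) f(ξ) dξ ) is twice continuously differentiable on [0,π] and satisfies −u'' + v(x)u − λu = f on [0,π] together with the boundary conditions u(0) = u(π) = 0. -/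
open Real Set MeasureTheory intervalIntegral

private lemma ftc_icc (g : ℝ → ℝ) (hg : ContinuousOn g (Icc (0:ℝ) π))
    (a : ℝ) (ha : a ∈ Icc (0:ℝ) π) :
    ∀ x ∈ Icc (0:ℝ) π,
      HasDerivWithinAt (fun t => ∫ ξ in a..t, g ξ) (g x) (Icc (0:ℝ) π) x := by
  intro x hx
  haveI : Fact (x ∈ Icc (0:ℝ) π) := ⟨hx⟩
  exact intervalIntegral.integral_hasDerivWithinAt_right
    ((hg.mono (uIcc_subset_Icc ha hx)).intervalIntegrable)
    (hg.stronglyMeasurableAtFilter_nhdsWithin measurableSet_Icc x)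
    (hg x hx)

/-- for continuous `v` on `[0,π]` and `λ` with `d(λ) = y₁(π,λ) ≠ 0`, applying the
resolvent kernel to a continuous `f` yields a twice continuously differentiable solution `u` of
`-u'' + v·u - λ·u = f` on `[0,π]` with `u(0) = u(π) = 0`. -/
theorem resolvent_solves_inhomogeneous
    (v : ℝ → ℝ) (hv : ContinuousOn v (Icc (0:ℝ) π))
    (l : ℝ) (y₁ y₁' y₂ y₂' : ℝ → ℝ)
    (hy₁ : ∀ x ∈ Icc (0:ℝ) π, HasDerivWithinAt y₁ (y₁' x) (Icc (0:ℝ) π) x)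
    (hy₁' : ∀ x ∈ Icc (0:ℝ) π, HasDerivWithinAt y₁' ((v x - l) * y₁ x) (Icc (0:ℝ) π) x)
    (h10 : y₁ 0 = 0) (h11 : y₁' 0 = 1)
    (hy₂ : ∀ x ∈ Icc (0:ℝ) π, HasDerivWithinAt y₂ (y₂' x) (Icc (0:ℝ) π) x)
    (hy₂' : ∀ x ∈ Icc (0:ℝ) π, HasDerivWithinAt y₂' ((v x - l) * y₂ x) (Icc (0:ℝ) π) x)
    (h20 : y₂ π = 0) (h21 : y₂' π = 1)
    (hd : y₁ π ≠ 0)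
    (f : ℝ → ℝ) (hf : ContinuousOn f (Icc (0:ℝ) π))
    (u : ℝ → ℝ)
    (hu : ∀ x : ℝ, u x = -(1 / y₁ π) *
      (y₂ x * (∫ ξ in (0:ℝ)..x, y₁ ξ * f ξ) + y₁ x * (∫ ξ in x..π, y₂ ξ * f ξ))) :
    ∃ u' u'' : ℝ → ℝ,
      (∀ x ∈ Icc (0:ℝ) π, HasDerivWithinAt u (u' x) (Icc (0:ℝ) π) x) ∧
      (∀ x ∈ Icc (0:ℝ) π, HasDerivWithinAt u' (u'' x) (Icc (0:ℝ) π) x) ∧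
      ContinuousOn u'' (Icc (0:ℝ) π) ∧
      (∀ x ∈ Icc (0:ℝ) π, -(u'' x) + v x * u x - l * u x = f x) ∧
      u 0 = 0 ∧ u π = 0 := by
  have h0 : (0:ℝ) ∈ Icc (0:ℝ) π := ⟨le_rfl, pi_pos.le⟩
  have hπ : π ∈ Icc (0:ℝ) π := ⟨pi_pos.le, le_rfl⟩
  set d : ℝ := y₁ π with hdef
  -- continuity of the ingredients
  have hcy₁ : ContinuousOn y₁ (Icc (0:ℝ) π) := fun x hx =>
    (hy₁ x hx).continuousWithinAt
  have hcy₂ : ContinuousOn y₂ (Icc (0:ℝ) π) := fun x hx =>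
    (hy₂ x hx).continuousWithinAt
  have hcy₁' : ContinuousOn y₁' (Icc (0:ℝ) π) := fun x hx =>
    (hy₁' x hx).continuousWithinAt
  have hcy₂' : ContinuousOn y₂' (Icc (0:ℝ) π) := fun x hx =>
    (hy₂' x hx).continuousWithinAt
  -- the two integral functions
  set F₁ : ℝ → ℝ := fun x => ∫ ξ in (0:ℝ)..x, y₁ ξ * f ξ with hF₁
  set G₂ : ℝ → ℝ := fun x => ∫ ξ in π..x, y₂ ξ * f ξ with hG₂
  have hF₁d : ∀ x ∈ Icc (0:ℝ) π,
      HasDerivWithinAt F₁ (y₁ x * f x) (Icc (0:ℝ) π) x :=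
    ftc_icc _ (hcy₁.mul hf) 0 h0
  have hG₂d : ∀ x ∈ Icc (0:ℝ) π,
      HasDerivWithinAt G₂ (y₂ x * f x) (Icc (0:ℝ) π) x :=
    ftc_icc _ (hcy₂.mul hf) π hπ
  have hF₁c : ContinuousOn F₁ (Icc (0:ℝ) π) := fun x hx =>
    (hF₁d x hx).continuousWithinAt
  have hG₂c : ContinuousOn G₂ (Icc (0:ℝ) π) := fun x hx =>
    (hG₂d x hx).continuousWithinAt
  -- Wronskian is constant, equal to d
  set W : ℝ → ℝ := fun x => y₁ x * y₂' x - y₁' x * y₂ x with hWdef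
  have hWd : ∀ x ∈ Icc (0:ℝ) π, HasDerivWithinAt W 0 (Icc (0:ℝ) π) x := by
    intro x hx
    have := (((hy₁ x hx).mul (hy₂' x hx)).sub ((hy₁' x hx).mul (hy₂ x hx)))
    convert this using 1
    · rfl
    · rfl
    · rfl
    · ring
  have hWc : ContinuousOn W (Icc (0:ℝ) π) := fun x hx =>
    (hWd x hx).continuousWithinAt
  have hWconst : ∀ x ∈ Icc (0:ℝ) π, W x = W 0 := by
    apply constant_of_has_deriv_right_zero hWc
    intro x hx
    exact (hWd x ⟨hx.1, hx.2.le⟩).mono_of_mem_nhdsWithin (Icc_mem_nhdsGE_of_mem hx)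
  have hW : ∀ x ∈ Icc (0:ℝ) π, W x = d := by
    intro x hx
    rw [hWconst x hx, ← hWconst π hπ]
    simp [hWdef, h20, h21, hdef]
  -- u as an explicit function of F₁ and G₂
  have hux : ∀ x, u x = -(1 / d) * (y₂ x * F₁ x - y₁ x * G₂ x) := by
    intro x
    rw [hu x]
    have : (∫ ξ in x..π, y₂ ξ * f ξ) = -G₂ x := by
      rw [hG₂]
      simp [intervalIntegral.integral_symm π x]
    rw [this]; ring
  -- define the derivatives
  refine ⟨fun x => -(1 / d) * (y₂' x * F₁ x - y₁' x * G₂ x),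
    fun x => -(1 / d) * ((v x - l) * y₂ x * F₁ x + y₂' x * (y₁ x * f x)
      - ((v x - l) * y₁ x * G₂ x + y₁' x * (y₂ x * f x))), ?_, ?_, ?_, ?_, ?_, ?_⟩
  · intro x hx
    have h : HasDerivWithinAt (fun x => -(1 / d) * (y₂ x * F₁ x - y₁ x * G₂ x))
        (-(1 / d) * ((y₂' x * F₁ x + y₂ x * (y₁ x * f x))
          - (y₁' x * G₂ x + y₁ x * (y₂ x * f x)))) (Icc (0:ℝ) π) x :=
      (((hy₂ x hx).mul (hF₁d x hx)).sub ((hy₁ x hx).mul (hG₂d x hx))).const_mul _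
    have heq : -(1 / d) * ((y₂' x * F₁ x + y₂ x * (y₁ x * f x))
        - (y₁' x * G₂ x + y₁ x * (y₂ x * f x)))
        = -(1 / d) * (y₂' x * F₁ x - y₁' x * G₂ x) := by ring
    rw [heq] at h
    exact h.congr (fun y _ => hux y) (hux x)
  · intro x hx
    have h : HasDerivWithinAt (fun x => -(1 / d) * (y₂' x * F₁ x - y₁' x * G₂ x))
        (-(1 / d) * (((v x - l) * y₂ x * F₁ x + y₂' x * (y₁ x * f x))
          - ((v x - l) * y₁ x * G₂ x + y₁' x * (y₂ x * f x)))) (Icc (0:ℝ) π) x :=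
      (((hy₂' x hx).mul (hF₁d x hx)).sub ((hy₁' x hx).mul (hG₂d x hx))).const_mul _
    exact h
  · apply ContinuousOn.mul continuousOn_const
    apply ContinuousOn.sub
    · exact (((hv.sub continuousOn_const).mul hcy₂).mul hF₁c).add
        (hcy₂'.mul (hcy₁.mul hf))
    · exact (((hv.sub continuousOn_const).mul hcy₁).mul hG₂c).add
        (hcy₁'.mul (hcy₂.mul hf))
  · intro x hx
    have hWx : y₁ x * y₂' x - y₁' x * y₂ x = d := hW x hx
    rw [hux x]
    have hd' : d ≠ 0 := hd
    field_simp
    linear_combination f x * hWx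
  · rw [hux 0]
    simp [hF₁, h10]
  · rw [hux π]
    simp [hG₂, h20]
end

section
/- Let v ∈ C²([0,π]) be real-valued and set c = (1/π)∫₀^π v(x)dx. Then as k → +∞, d(−k²) = (e^{πk}/(2k)) { 1 + πc/(2k) + (1/(8k²))(π²c² − 2(v(0) + v(π))) + O(1/k³) }; that is, there exist constants C > 0 and k₀ such that for all k ≥ k₀, |d(−k²) − (e^{πk}/(2k))(1 + πc/(2k) + (π²c² − 2(v(0)+v(π)))/(8k²))| ≤ C e^{πk} k^{−4}. -/
set_option maxHeartbeats 1000000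


open Real Set MeasureTheory intervalIntegral

lemma prim_hasDerivWithinAt {f : ℝ → ℝ} {b : ℝ} (hf : ContinuousOn f (Icc 0 b)) {t : ℝ}
    (ht : t ∈ Icc (0:ℝ) b) :
    HasDerivWithinAt (fun x => ∫ s in (0:ℝ)..x, f s) (f t) (Icc (0:ℝ) b) t := by
  haveI : Fact (t ∈ Icc (0:ℝ) b) := ⟨ht⟩
  exact intervalIntegral.integral_hasDerivWithinAt_right
    ((hf.mono (by rw [uIcc_of_le ht.1]; exact Icc_subset_Icc le_rfl ht.2)).intervalIntegrable)
    (hf.stronglyMeasurableAtFilter_nhdsWithin measurableSet_Icc t)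
    (hf t ht)

lemma myFTC {f f' : ℝ → ℝ} {b : ℝ} (hb : 0 ≤ b)
    (hd : ∀ x ∈ Icc (0:ℝ) b, HasDerivWithinAt f (f' x) (Icc (0:ℝ) b) x)
    (hc : ContinuousOn f' (Icc (0:ℝ) b)) :
    ∫ t in (0:ℝ)..b, f' t = f b - f 0 := by
  apply intervalIntegral.integral_eq_sub_of_hasDeriv_right_of_le hb
    (fun x hx => (hd x hx).continuousWithinAt)
    (fun x hx => ((hd x (Ioo_subset_Icc_self hx)).hasDerivAt
      (Icc_mem_nhds hx.1 hx.2)).hasDerivWithinAt)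
    ((show ContinuousOn f' (uIcc 0 b) by rwa [uIcc_of_le hb]).intervalIntegrable)

lemma gronwall_int {h : ℝ → ℝ} {b K eps : ℝ} (hb : 0 ≤ b)
    (hc : ContinuousOn h (Icc 0 b)) (hpos : ∀ x ∈ Icc (0:ℝ) b, 0 ≤ h x)
    (hK : 0 < K)
    (hbd : ∀ x ∈ Icc (0:ℝ) b, h x ≤ K * (∫ t in (0:ℝ)..x, h t) + eps) :
    h b ≤ eps * Real.exp (K * b) := by
  set Φ : ℝ → ℝ := fun x => ∫ t in (0:ℝ)..x, h t with hΦ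
  have hΦd : ∀ t ∈ Icc (0:ℝ) b, HasDerivWithinAt Φ (h t) (Icc 0 b) t :=
    fun t ht => prim_hasDerivWithinAt hc ht
  have hΦc : ContinuousOn Φ (Icc 0 b) := fun x hx => (hΦd x hx).continuousWithinAt
  have hΦd' : ∀ t ∈ Ico (0:ℝ) b, HasDerivWithinAt Φ (h t) (Ici t) t := by
    intro t ht
    refine (hΦd t (Ico_subset_Icc_self ht)).mono_of_mem_nhdsWithin ?_
    refine mem_nhdsWithin.2 ⟨Iio b, isOpen_Iio, ht.2, ?_⟩
    rintro y ⟨hy1, hy2⟩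
    exact ⟨le_trans ht.1 hy2, le_of_lt hy1⟩
  have hΦnn : ∀ x ∈ Icc (0:ℝ) b, 0 ≤ Φ x := by
    intro x hx
    apply intervalIntegral.integral_nonneg hx.1
    intro t ht
    exact hpos t ⟨ht.1, le_trans ht.2 hx.2⟩
  have key := norm_le_gronwallBound_of_norm_deriv_right_le (f := Φ) (f' := h)
    (δ := 0) (K := K) (ε := eps) (a := 0) (b := b) hΦc hΦd'
    (by simp [hΦ]) ?_
  · have hb2 := key b ⟨hb, le_rfl⟩
    rw [Real.norm_eq_abs, abs_of_nonneg (hΦnn b ⟨hb, le_rfl⟩), sub_zero,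
      gronwallBound_of_K_ne_0 (ne_of_gt hK)] at hb2
    have hbb := hbd b ⟨hb, le_rfl⟩
    calc h b ≤ K * Φ b + eps := hbb
      _ ≤ K * (0 * Real.exp (K * b) + eps / K * (Real.exp (K * b) - 1)) + eps := by
          have := mul_le_mul_of_nonneg_left hb2 (le_of_lt hK); linarith
      _ = eps * Real.exp (K * b) := by field_simp; ring
  · intro t ht
    rw [Real.norm_eq_abs, Real.norm_eq_abs, abs_of_nonneg (hpos t (Ico_subset_Icc_self ht)),
      abs_of_nonneg (hΦnn t (Ico_subset_Icc_self ht))]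
    exact hbd t (Ico_subset_Icc_self ht)

/-- asymptotics of the characteristic determinant `d(λ) = y₁(π,λ)` of the
Sturm–Liouville operator for `v ∈ C²([0,π])`, along `λ = -k²` as `k → +∞`:
`d(-k²) = (e^{πk}/(2k)) (1 + πc/(2k) + (π²c² - 2(v 0 + v π))/(8k²) + O(1/k³))` with
`c = (1/π)∫₀^π v`. -/
theorem characteristic_determinant_asymptotics
    (v : ℝ → ℝ) (hv : ContDiffOn ℝ 2 v (Icc (0:ℝ) π))
    (y₁ y₁' : ℝ → ℝ → ℝ)
    (hy₁ : ∀ l : ℝ, ∀ x ∈ Icc (0:ℝ) π, HasDerivWithinAt (y₁ l) (y₁' l x) (Icc (0:ℝ) π) x)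
    (hy₁' : ∀ l : ℝ, ∀ x ∈ Icc (0:ℝ) π,
      HasDerivWithinAt (y₁' l) ((v x - l) * y₁ l x) (Icc (0:ℝ) π) x)
    (h10 : ∀ l : ℝ, y₁ l 0 = 0) (h11 : ∀ l : ℝ, y₁' l 0 = 1) :
    ∃ C : ℝ, 0 < C ∧ ∃ k₀ : ℝ, ∀ k : ℝ, k₀ ≤ k →
      |y₁ (-(k ^ 2)) π - Real.exp (π * k) / (2 * k) *
          (1 + π * ((1 / π) * ∫ x in (0:ℝ)..π, v x) / (2 * k) +
            (π ^ 2 * ((1 / π) * ∫ x in (0:ℝ)..π, v x) ^ 2 - 2 * (v 0 + v π)) / (8 * k ^ 2))| ≤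
        C * Real.exp (π * k) / k ^ 4 := by
  have hπ : (0:ℝ) < π := Real.pi_pos
  have hIu : UniqueDiffOn ℝ (Icc (0:ℝ) π) := uniqueDiffOn_Icc hπ
  have hvc : ContinuousOn v (Icc 0 π) := hv.continuousOn
  obtain ⟨w, hwdef⟩ : ∃ f : ℝ → ℝ, f = derivWithin v (Icc 0 π) := ⟨_, rfl⟩
  have hvd : ∀ x ∈ Icc (0:ℝ) π, HasDerivWithinAt v (w x) (Icc 0 π) x := fun x hx => by
    rw [hwdef]; exact ((hv.differentiableOn (by norm_num)) x hx).hasDerivWithinAt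
  have hwC : ContDiffOn ℝ 1 w (Icc 0 π) := by
    rw [hwdef]; exact hv.derivWithin hIu (by norm_num)
  have hwc : ContinuousOn w (Icc 0 π) := hwC.continuousOn
  obtain ⟨w2, hw2def⟩ : ∃ f : ℝ → ℝ, f = derivWithin w (Icc 0 π) := ⟨_, rfl⟩
  have hwd : ∀ x ∈ Icc (0:ℝ) π, HasDerivWithinAt w (w2 x) (Icc 0 π) x := fun x hx => by
    rw [hw2def]; exact ((hwC.differentiableOn (by norm_num)) x hx).hasDerivWithinAt
  have hw2C : ContDiffOn ℝ 0 w2 (Icc 0 π) := by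
    rw [hw2def]; exact hwC.derivWithin hIu (by norm_num)
  have hw2c : ContinuousOn w2 (Icc 0 π) := hw2C.continuousOn
  obtain ⟨A₁, hA₁def⟩ : ∃ f : ℝ → ℝ, f = fun x => (∫ t in (0:ℝ)..x, v t)/2 := ⟨_, rfl⟩
  have hA₁d : ∀ x ∈ Icc (0:ℝ) π, HasDerivWithinAt A₁ (v x/2) (Icc 0 π) x := fun x hx => by
    rw [hA₁def]; exact (prim_hasDerivWithinAt hvc hx).div_const 2
  have hA₁c : ContinuousOn A₁ (Icc 0 π) := fun x hx => (hA₁d x hx).continuousWithinAt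
  obtain ⟨A₂, hA₂def⟩ : ∃ f : ℝ → ℝ, f = fun x => A₁ x * A₁ x/2 - (v x + v 0)/4 := ⟨_, rfl⟩
  obtain ⟨D₂, hD₂def⟩ : ∃ f : ℝ → ℝ, f = fun x => A₁ x * v x/2 - w x/4 := ⟨_, rfl⟩
  have hA₂d : ∀ x ∈ Icc (0:ℝ) π, HasDerivWithinAt A₂ (D₂ x) (Icc 0 π) x := by
    intro x hx
    have h1 := (((hA₁d x hx).mul (hA₁d x hx)).div_const 2).sub
      (((hvd x hx).add_const (v 0)).div_const 4)
    rw [hA₂def]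
    convert h1 using 1
    · exact rfl
    · exact rfl
    · exact rfl
    rw [hD₂def]; ring
  have hA₂c : ContinuousOn A₂ (Icc 0 π) := fun x hx => (hA₂d x hx).continuousWithinAt
  obtain ⟨E, hEdef⟩ : ∃ f : ℝ → ℝ, f = fun x => v x^2/4 + A₁ x * w x/2 - w2 x/4 := ⟨_, rfl⟩
  have hD₂d : ∀ x ∈ Icc (0:ℝ) π, HasDerivWithinAt D₂ (E x) (Icc 0 π) x := by
    intro x hx
    have h1 := (((hA₁d x hx).mul (hvd x hx)).div_const 2).sub ((hwd x hx).div_const 4)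
    rw [hD₂def]
    convert h1 using 1
    · exact rfl
    · exact rfl
    · exact rfl
    rw [hEdef]; ring
  have hD₂c : ContinuousOn D₂ (Icc 0 π) := fun x hx => (hD₂d x hx).continuousWithinAt
  have hEc : ContinuousOn E (Icc 0 π) := by
    rw [hEdef]
    exact (((hvc.pow 2).div_const 4).add ((hA₁c.mul hwc).div_const 2)).sub (hw2c.div_const 4)
  -- bounds
  obtain ⟨V₀, hV₀⟩ := isCompact_Icc.exists_bound_of_continuousOn hvc
  obtain ⟨V, hVdef⟩ : ∃ c : ℝ, c = max V₀ 1 := ⟨_, rfl⟩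
  have hV1 : (1:ℝ) ≤ V := by rw [hVdef]; exact le_max_right _ _
  have hV : ∀ x ∈ Icc (0:ℝ) π, |v x| ≤ V := fun x hx => by
    rw [hVdef]; exact le_trans (hV₀ x hx) (le_max_left _ _)
  obtain ⟨M₀, hM₀⟩ := isCompact_Icc.exists_bound_of_continuousOn (hEc.sub (hvc.mul hA₂c))
  obtain ⟨M, hMdef⟩ : ∃ c : ℝ, c = max M₀ 0 := ⟨_, rfl⟩
  have hM0 : (0:ℝ) ≤ M := by rw [hMdef]; exact le_max_right _ _
  have hM : ∀ x ∈ Icc (0:ℝ) π, |E x - v x * A₂ x| ≤ M := fun x hx => by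
    rw [hMdef]; exact le_trans (hM₀ x hx) (le_max_left _ _)
  obtain ⟨CQ, hCQdef⟩ : ∃ c : ℝ, c = 1 + |A₁ π| + |A₂ π| := ⟨_, rfl⟩
  have hCQ1 : (1:ℝ) ≤ CQ := by
    have h1 := abs_nonneg (A₁ π); have h2 := abs_nonneg (A₂ π); rw [hCQdef]; linarith
  have hCa : (0:ℝ) ≤ π * M * Real.exp (V*π)/2 :=
    div_nonneg (mul_nonneg (mul_nonneg hπ.le hM0) (Real.exp_pos _).le) (by norm_num)
  refine ⟨π * M * Real.exp (V*π)/2 + CQ/2 + 1, by linarith, 1, ?_⟩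
  intro k hk
  have hk0 : (0:ℝ) < k := lt_of_lt_of_le one_pos hk
  have hkne : k ≠ 0 := ne_of_gt hk0
  obtain ⟨u, hudef⟩ : ∃ f : ℝ → ℝ, f = y₁ (-(k^2)) := ⟨_, rfl⟩
  obtain ⟨u1, hu1def⟩ : ∃ f : ℝ → ℝ, f = y₁' (-(k^2)) := ⟨_, rfl⟩
  have hud : ∀ x ∈ Icc (0:ℝ) π, HasDerivWithinAt u (u1 x) (Icc 0 π) x := by
    rw [hudef, hu1def]; exact hy₁ _
  have hudd : ∀ x ∈ Icc (0:ℝ) π, HasDerivWithinAt u1 ((v x + k^2) * u x) (Icc 0 π) x := by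
    intro x hx
    have h1 := hy₁' (-(k^2)) x hx
    rw [hu1def, hudef]
    convert h1 using 1
    ring
  obtain ⟨eP, hePdef⟩ : ∃ f : ℝ → ℝ, f = fun x => Real.exp (k*x) := ⟨_, rfl⟩
  obtain ⟨eM, heMdef⟩ : ∃ f : ℝ → ℝ, f = fun x => Real.exp (-(k*x)) := ⟨_, rfl⟩
  have hePd : ∀ x : ℝ, HasDerivAt eP (k * eP x) x := by
    intro x
    rw [hePdef]
    simpa [mul_comm] using ((hasDerivAt_id x).const_mul k).exp
  have heMd : ∀ x : ℝ, HasDerivAt eM (-k * eM x) x := by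
    intro x
    rw [heMdef]
    simpa [mul_comm] using (((hasDerivAt_id x).const_mul k).neg).exp
  have hePc : Continuous eP := by rw [hePdef]; fun_prop
  have heMc : Continuous eM := by rw [heMdef]; fun_prop
  have hEPpos : ∀ x:ℝ, 0 < eP x := fun x => by rw [hePdef]; exact Real.exp_pos _
  have hEMpos : ∀ x:ℝ, 0 < eM x := fun x => by rw [heMdef]; exact Real.exp_pos _
  have hee : ∀ t:ℝ, eM t * eP t = 1 := by
    intro t; rw [hePdef, heMdef, ← Real.exp_add]; simp
  obtain ⟨P, hPdef⟩ : ∃ f : ℝ → ℝ, f = fun x => 1 + A₁ x/k + A₂ x/k^2 := ⟨_, rfl⟩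
  obtain ⟨Q, hQdef⟩ : ∃ f : ℝ → ℝ, f = fun x => 1 - A₁ x/k + A₂ x/k^2 := ⟨_, rfl⟩
  obtain ⟨P1, hP1def⟩ : ∃ f : ℝ → ℝ, f = fun x => v x/(2*k) + D₂ x/k^2 := ⟨_, rfl⟩
  obtain ⟨Q1, hQ1def⟩ : ∃ f : ℝ → ℝ, f = fun x => -(v x/(2*k)) + D₂ x/k^2 := ⟨_, rfl⟩
  have hPd : ∀ x ∈ Icc (0:ℝ) π, HasDerivWithinAt P (P1 x) (Icc 0 π) x := by
    intro x hx
    have h1 := (((hA₁d x hx).div_const k).add ((hA₂d x hx).div_const (k^2))).const_add 1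
    rw [show P = fun x => 1 + (A₁ x/k + A₂ x/k^2) by rw [hPdef]; funext y; ring]
    convert h1 using 1
    · exact rfl
    · exact rfl
    · exact rfl
    rw [hP1def]; field_simp
  have hQd : ∀ x ∈ Icc (0:ℝ) π, HasDerivWithinAt Q (Q1 x) (Icc 0 π) x := by
    intro x hx
    have h1 := ((((hA₁d x hx).div_const k).neg).add ((hA₂d x hx).div_const (k^2))).const_add 1
    rw [show Q = fun x => 1 + (-(A₁ x/k) + A₂ x/k^2) by rw [hQdef]; funext y; ring]
    convert h1 using 1
    · exact rfl
    · exact rfl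
    · exact rfl
    rw [hQ1def]; field_simp
  have hP1d : ∀ x ∈ Icc (0:ℝ) π,
      HasDerivWithinAt P1 (w x/(2*k) + E x/k^2) (Icc 0 π) x := by
    intro x hx
    rw [hP1def]
    exact ((hvd x hx).div_const (2*k)).add ((hD₂d x hx).div_const (k^2))
  have hQ1d : ∀ x ∈ Icc (0:ℝ) π,
      HasDerivWithinAt Q1 (-(w x/(2*k)) + E x/k^2) (Icc 0 π) x := by
    intro x hx
    rw [hQ1def]
    exact (((hvd x hx).div_const (2*k)).neg).add ((hD₂d x hx).div_const (k^2))
  obtain ⟨φ, hφdef⟩ : ∃ f : ℝ → ℝ, f = fun x => (eP x * P x - eM x * Q x)/(2*k) := ⟨_, rfl⟩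
  obtain ⟨φ1, hφ1def⟩ : ∃ f : ℝ → ℝ, f = fun x => (eP x * (k*P x + P1 x) - eM x * (-k*Q x + Q1 x))/(2*k) := ⟨_, rfl⟩
  have hφd : ∀ x ∈ Icc (0:ℝ) π, HasDerivWithinAt φ (φ1 x) (Icc 0 π) x := by
    intro x hx
    have h1 := (((hePd x).hasDerivWithinAt.mul (hPd x hx)).sub
      ((heMd x).hasDerivWithinAt.mul (hQd x hx))).div_const (2*k)
    rw [hφdef]
    convert h1 using 1
    · exact rfl
    · exact rfl
    · exact rfl
    rw [hφ1def]; ring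
  obtain ⟨r, hrdef⟩ : ∃ f : ℝ → ℝ, f = fun x => (E x - v x * A₂ x) * (eP x - eM x)/(2*k^3) := ⟨_, rfl⟩
  have hφdd : ∀ x ∈ Icc (0:ℝ) π,
      HasDerivWithinAt φ1 ((v x + k^2) * φ x + r x) (Icc 0 π) x := by
    intro x hx
    have h1 := (((hePd x).hasDerivWithinAt.mul (((hPd x hx).const_mul k).add (hP1d x hx))).sub
      ((heMd x).hasDerivWithinAt.mul (((hQd x hx).const_mul (-k)).add (hQ1d x hx)))).div_const (2*k)
    rw [hφ1def]
    convert h1 using 1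
    · exact rfl
    · exact rfl
    · exact rfl
    rw [hφdef, hrdef, hPdef, hQdef, hP1def, hQ1def, hD₂def, hEdef, hA₂def]
    simp only [Pi.add_apply, Pi.sub_apply, Pi.mul_apply]
    field_simp
    ring
  obtain ⟨ψ, hψdef⟩ : ∃ f : ℝ → ℝ, f = fun x => u x - φ x := ⟨_, rfl⟩
  obtain ⟨ψ1, hψ1def⟩ : ∃ f : ℝ → ℝ, f = fun x => u1 x - φ1 x := ⟨_, rfl⟩
  have hψd : ∀ x ∈ Icc (0:ℝ) π, HasDerivWithinAt ψ (ψ1 x) (Icc 0 π) x := by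
    intro x hx
    rw [hψdef, hψ1def]
    exact (hud x hx).sub (hφd x hx)
  have hψdd : ∀ x ∈ Icc (0:ℝ) π,
      HasDerivWithinAt ψ1 ((v x + k^2) * ψ x - r x) (Icc 0 π) x := by
    intro x hx
    rw [hψ1def]
    have h1 := (hudd x hx).sub (hφdd x hx)
    convert h1 using 1
    · exact rfl
    · exact rfl
    · exact rfl
    rw [hψdef]; ring
  have hψc : ContinuousOn ψ (Icc 0 π) := fun x hx => (hψd x hx).continuousWithinAt
  have hrc : ContinuousOn r (Icc 0 π) := by
    rw [hrdef]
    exact ((hEc.sub (hvc.mul hA₂c)).mul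
      (hePc.continuousOn.sub heMc.continuousOn)).div_const (2*k^3)
  obtain ⟨q₁, hq₁def⟩ : ∃ f : ℝ → ℝ, f = fun x => eM x * (ψ1 x + k * ψ x) := ⟨_, rfl⟩
  obtain ⟨q₂, hq₂def⟩ : ∃ f : ℝ → ℝ, f = fun x => eP x * (ψ1 x - k * ψ x) := ⟨_, rfl⟩
  obtain ⟨g₁, hg₁def⟩ : ∃ f : ℝ → ℝ, f = fun t => eM t * (v t * ψ t - r t) := ⟨_, rfl⟩
  obtain ⟨g₂, hg₂def⟩ : ∃ f : ℝ → ℝ, f = fun t => eP t * (v t * ψ t - r t) := ⟨_, rfl⟩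
  have hg₁c : ContinuousOn g₁ (Icc 0 π) := by
    rw [hg₁def]; exact heMc.continuousOn.mul ((hvc.mul hψc).sub hrc)
  have hg₂c : ContinuousOn g₂ (Icc 0 π) := by
    rw [hg₂def]; exact hePc.continuousOn.mul ((hvc.mul hψc).sub hrc)
  have hq₁d : ∀ x ∈ Icc (0:ℝ) π, HasDerivWithinAt q₁ (g₁ x) (Icc 0 π) x := by
    intro x hx
    have h1 := (heMd x).hasDerivWithinAt.mul ((hψdd x hx).add ((hψd x hx).const_mul k))
    rw [hq₁def, hg₁def]
    convert h1 using 1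
    · exact rfl
    · exact rfl
    · exact rfl
    simp only [Pi.add_apply, Pi.sub_apply, Pi.mul_apply]
    ring
  have hq₂d : ∀ x ∈ Icc (0:ℝ) π, HasDerivWithinAt q₂ (g₂ x) (Icc 0 π) x := by
    intro x hx
    have h1 := (hePd x).hasDerivWithinAt.mul ((hψdd x hx).sub ((hψd x hx).const_mul k))
    rw [hq₂def, hg₂def]
    convert h1 using 1
    · exact rfl
    · exact rfl
    · exact rfl
    simp only [Pi.add_apply, Pi.sub_apply, Pi.mul_apply]
    ring
  -- values at 0
  have hA₁0 : A₁ 0 = 0 := by rw [hA₁def]; simp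
  have hA₂0 : A₂ 0 = -(v 0)/2 := by rw [hA₂def]; simp only [hA₁0]; ring
  have hψ0 : ψ 0 = 0 := by
    rw [hψdef]
    simp only [hφdef, hPdef, hQdef, hePdef, heMdef, hudef, hA₁0, hA₂0, mul_zero, neg_zero,
      Real.exp_zero, h10]
    ring
  have hψ10 : ψ1 0 = 0 := by
    rw [hψ1def]
    simp only [hφ1def, hPdef, hQdef, hP1def, hQ1def, hePdef, heMdef, hu1def, hA₁0, hA₂0,
      mul_zero, neg_zero, Real.exp_zero, h11]
    field_simp
    ring
  have hq₁0 : q₁ 0 = 0 := by rw [hq₁def]; simp [hψ0, hψ10]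
  have hq₂0 : q₂ 0 = 0 := by rw [hq₂def]; simp [hψ0, hψ10]
  -- integral representations
  have hq₁x : ∀ x ∈ Icc (0:ℝ) π, q₁ x = ∫ t in (0:ℝ)..x, g₁ t := by
    intro x hx
    have h1 := myFTC (f := q₁) (f' := g₁) (b := x) hx.1
      (fun t ht => (hq₁d t ⟨ht.1, le_trans ht.2 hx.2⟩).mono (Icc_subset_Icc le_rfl hx.2))
      (hg₁c.mono (Icc_subset_Icc le_rfl hx.2))
    rw [hq₁0, sub_zero] at h1
    exact h1.symm
  have hq₂x : ∀ x ∈ Icc (0:ℝ) π, q₂ x = ∫ t in (0:ℝ)..x, g₂ t := by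
    intro x hx
    have h1 := myFTC (f := q₂) (f' := g₂) (b := x) hx.1
      (fun t ht => (hq₂d t ⟨ht.1, le_trans ht.2 hx.2⟩).mono (Icc_subset_Icc le_rfl hx.2))
      (hg₂c.mono (Icc_subset_Icc le_rfl hx.2))
    rw [hq₂0, sub_zero] at h1
    exact h1.symm
  -- pointwise bounds
  have hsinh : ∀ t ∈ Icc (0:ℝ) π, 0 ≤ eP t - eM t := by
    intro t ht
    rw [hePdef, heMdef, sub_nonneg]
    apply Real.exp_le_exp.2
    nlinarith [ht.1, hk0]
  have hr : ∀ t ∈ Icc (0:ℝ) π, |r t| ≤ M * (eP t - eM t)/(2*k^3) := by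
    intro t ht
    rw [hrdef]
    rw [abs_div, abs_mul, abs_of_pos (show (0:ℝ) < 2*k^3 by positivity),
      abs_of_nonneg (hsinh t ht)]
    gcongr
    · exact hsinh t ht
    · exact hM t ht
  obtain ⟨h, hhdef⟩ : ∃ f : ℝ → ℝ, f = fun t => eM t * |ψ t| := ⟨_, rfl⟩
  have hhc : ContinuousOn h (Icc 0 π) := by rw [hhdef]; exact heMc.continuousOn.mul hψc.abs
  have hhnn : ∀ t ∈ Icc (0:ℝ) π, 0 ≤ h t := by
    intro t ht; rw [hhdef]; exact mul_nonneg (hEMpos t).le (abs_nonneg _)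
  obtain ⟨hfun, hfundef⟩ : ∃ f : ℝ → ℝ, f = fun t => V * h t + M/(2*k^3) := ⟨_, rfl⟩
  have hfunc : ContinuousOn hfun (Icc 0 π) := by
    rw [hfundef]; exact (continuousOn_const.mul hhc).add continuousOn_const
  have habs : ∀ a b : ℝ, |a - b| ≤ |a| + |b| := fun a b => abs_sub a b
  have hg₁bd : ∀ t ∈ Icc (0:ℝ) π, |g₁ t| ≤ hfun t := by
    intro t ht
    rw [hg₁def, hfundef, hhdef]
    have h1 : |eM t * (v t * ψ t - r t)| ≤ eM t * (|v t| * |ψ t| + |r t|) := by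
      rw [abs_mul, abs_of_pos (hEMpos t)]
      exact mul_le_mul_of_nonneg_left ((habs _ _).trans (by rw [abs_mul])) (hEMpos t).le
    refine h1.trans ?_
    have h2 : eM t * (|v t| * |ψ t| + |r t|)
        ≤ eM t * (V * |ψ t| + M * (eP t - eM t)/(2*k^3)) := by
      gcongr
      · exact (hEMpos t).le
      · exact hV t ht
      · exact hr t ht
    refine h2.trans ?_
    have h3 : eM t * (V * |ψ t| + M * (eP t - eM t)/(2*k^3))
        = V * (eM t * |ψ t|) + (eM t * eP t - eM t * eM t) * M/(2*k^3) := by ring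
    rw [h3, hee t]
    have h4 : (1 - eM t * eM t) * M ≤ M := by nlinarith [mul_pos (hEMpos t) (hEMpos t), hM0]
    have h6 : (0:ℝ) < 2*k^3 := by positivity
    have h5 : (1 - eM t * eM t) * M/(2*k^3) ≤ M/(2*k^3) := (div_le_div_iff_of_pos_right h6).2 h4
    linarith
  have hg₂bd : ∀ x ∈ Icc (0:ℝ) π, ∀ t ∈ Icc (0:ℝ) x, eM x^2 * |g₂ t| ≤ hfun t := by
    intro x hx t ht
    have htI : t ∈ Icc (0:ℝ) π := ⟨ht.1, le_trans ht.2 hx.2⟩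
    have hle : eM x * eP t ≤ 1 := by
      rw [heMdef, hePdef, ← Real.exp_add, ← Real.exp_zero]
      apply Real.exp_le_exp.2
      nlinarith [ht.2, hk0]
    have hs0 : 0 < eM x * eP t := mul_pos (hEMpos x) (hEPpos t)
    rw [hg₂def, hfundef, hhdef]
    have h1 : eM x^2 * |eP t * (v t * ψ t - r t)|
        ≤ eM x^2 * (eP t * (V * |ψ t| + M * (eP t - eM t)/(2*k^3))) := by
      rw [abs_mul, abs_of_pos (hEPpos t)]
      refine mul_le_mul_of_nonneg_left (mul_le_mul_of_nonneg_left ?_ (hEPpos t).le)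
        (sq_nonneg _)
      calc |v t * ψ t - r t| ≤ |v t| * |ψ t| + |r t| := (habs _ _).trans (by rw [abs_mul])
        _ ≤ V * |ψ t| + M * (eP t - eM t)/(2*k^3) :=
            add_le_add (mul_le_mul_of_nonneg_right (hV t htI) (abs_nonneg _)) (hr t htI)
    refine h1.trans ?_
    have hψsub : |ψ t| = eP t * (eM t * |ψ t|) := by
      rw [← mul_assoc, mul_comm (eP t) (eM t), hee t, one_mul]
    rw [hψsub]
    have h2 : eM x^2 * (eP t * (V * (eP t * (eM t * |ψ t|)) + M * (eP t - eM t)/(2*k^3)))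
        = V * (eM t * |ψ t|) * (eM x * eP t)^2
          + ((eM x * eP t)^2 - eM x^2 * (eP t * eM t)) * M/(2*k^3) := by ring
    rw [h2]
    have h3 : (0:ℝ) < 2*k^3 := by positivity
    have h4 : (eM x * eP t)^2 ≤ 1 := by nlinarith
    have h5 : 0 ≤ eM t * |ψ t| := mul_nonneg (hEMpos t).le (abs_nonneg _)
    have h6 : 0 < eP t * eM t := mul_pos (hEPpos t) (hEMpos t)
    have h7 : V * (eM t * |ψ t|) * (eM x * eP t)^2 ≤ V * (eM t * |ψ t|) := by
      nlinarith [mul_nonneg (mul_nonneg (le_trans zero_le_one hV1) h5) (sub_nonneg.2 h4)]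
    have h8 : ((eM x * eP t)^2 - eM x^2 * (eP t * eM t)) * M/(2*k^3) ≤ M/(2*k^3) := by
      apply (div_le_div_iff_of_pos_right h3).2
      nlinarith [sq_nonneg (eM x), mul_pos (mul_pos (hEMpos x) (hEMpos x)) h6]
    linarith
  -- key integral inequality
  have hkne2 : (0:ℝ) < 2*k := by positivity
  have hkey : ∀ x ∈ Icc (0:ℝ) π, h x ≤ (V/k) * (∫ t in (0:ℝ)..x, h t) + π*M/(2*k^4) := by
    intro x hx
    have hsub : Icc (0:ℝ) x ⊆ Icc (0:ℝ) π := Icc_subset_Icc le_rfl hx.2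
    have huicc : uIcc (0:ℝ) x = Icc 0 x := uIcc_of_le hx.1
    have hfint : IntervalIntegrable hfun volume 0 x :=
      (show ContinuousOn hfun (uIcc 0 x) by rw [huicc]; exact hfunc.mono hsub).intervalIntegrable
    have hg₁int : IntervalIntegrable (fun t => |g₁ t|) volume 0 x :=
      (show ContinuousOn (fun t => |g₁ t|) (uIcc 0 x) by
        rw [huicc]; exact (hg₁c.mono hsub).abs).intervalIntegrable
    have hg₂int : IntervalIntegrable (fun t => eM x^2 * |g₂ t|) volume 0 x :=
      (show ContinuousOn (fun t => eM x^2 * |g₂ t|) (uIcc 0 x) by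
        rw [huicc]; exact continuousOn_const.mul (hg₂c.mono hsub).abs).intervalIntegrable
    have hb₁ : |q₁ x| ≤ ∫ t in (0:ℝ)..x, hfun t := by
      rw [hq₁x x hx]
      refine (intervalIntegral.abs_integral_le_integral_abs hx.1).trans ?_
      exact intervalIntegral.integral_mono_on hx.1 hg₁int hfint (fun t ht => hg₁bd t (hsub ht))
    have hb₂ : eM x^2 * |q₂ x| ≤ ∫ t in (0:ℝ)..x, hfun t := by
      rw [hq₂x x hx]
      have e1 : eM x^2 * |∫ t in (0:ℝ)..x, g₂ t| ≤ eM x^2 * ∫ t in (0:ℝ)..x, |g₂ t| :=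
        mul_le_mul_of_nonneg_left (intervalIntegral.abs_integral_le_integral_abs hx.1)
          (sq_nonneg _)
      refine e1.trans ?_
      rw [← intervalIntegral.integral_const_mul]
      exact intervalIntegral.integral_mono_on hx.1 hg₂int hfint (fun t ht => hg₂bd x hx t ht)
    have hid : 2*k*ψ x = eP x * q₁ x - eM x * q₂ x := by
      rw [hq₁def, hq₂def]
      have h3 := hee x
      linear_combination (-(2*k*ψ x)) * h3
    have e2 : 2*k*(h x) = eM x * |2*k*ψ x| := by
      simp only [hhdef]
      rw [abs_mul, abs_of_pos hkne2]
      ring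
    have hkey1 : 2*k*(h x) ≤ 2*(∫ t in (0:ℝ)..x, hfun t) := by
      rw [e2, hid]
      calc eM x * |eP x * q₁ x - eM x * q₂ x|
          ≤ eM x * (eP x * |q₁ x| + eM x * |q₂ x|) := by
            refine mul_le_mul_of_nonneg_left ?_ (hEMpos x).le
            refine (habs _ _).trans ?_
            rw [abs_mul, abs_mul, abs_of_pos (hEPpos x), abs_of_pos (hEMpos x)]
        _ = eM x * eP x * |q₁ x| + eM x^2 * |q₂ x| := by ring
        _ = |q₁ x| + eM x^2 * |q₂ x| := by rw [hee x]; ring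
        _ ≤ (∫ t in (0:ℝ)..x, hfun t) + (∫ t in (0:ℝ)..x, hfun t) := add_le_add hb₁ hb₂
        _ = 2*(∫ t in (0:ℝ)..x, hfun t) := by ring
    have hIh : IntervalIntegrable h volume 0 x :=
      (show ContinuousOn h (uIcc 0 x) by rw [huicc]; exact hhc.mono hsub).intervalIntegrable
    have hsplit : (∫ t in (0:ℝ)..x, hfun t) = V * (∫ t in (0:ℝ)..x, h t) + M/(2*k^3)*x := by
      rw [hfundef]
      rw [intervalIntegral.integral_add (hIh.const_mul V) intervalIntegrable_const,
        intervalIntegral.integral_const_mul, intervalIntegral.integral_const]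
      simp [smul_eq_mul]
      ring
    have e3 : 2*k*((V/k) * (∫ t in (0:ℝ)..x, h t) + π*M/(2*k^4))
        = 2*V*(∫ t in (0:ℝ)..x, h t) + π*M/k^3 := by field_simp
    have e4 : (M/(2*k^3))*x ≤ (M/(2*k^3))*π :=
      mul_le_mul_of_nonneg_left hx.2 (div_nonneg hM0 (by positivity))
    have e6 : 2*k*(h x) ≤ 2*k*((V/k)*(∫ t in (0:ℝ)..x, h t) + π*M/(2*k^4)) := by
      rw [e3]
      rw [hsplit] at hkey1
      have e5 : 2*((M/(2*k^3))*π) = π*M/k^3 := by field_simp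
      linarith
    exact le_of_mul_le_mul_left e6 hkne2
  -- Gronwall
  have hgron : h π ≤ π*M/(2*k^4) * Real.exp ((V/k) * π) :=
    gronwall_int hπ.le hhc hhnn (div_pos (lt_of_lt_of_le one_pos hV1) hk0) hkey
  have hexp2 : Real.exp ((V/k)*π) ≤ Real.exp (V*π) := by
    apply Real.exp_le_exp.2
    rw [div_mul_eq_mul_div]
    exact div_le_self (mul_nonneg (by linarith) hπ.le) hk
  have hψπ : |ψ π| ≤ (π*M*Real.exp (V*π)/2) * (Real.exp (π*k)/k^4) := by
    have h8 : |ψ π| = eP π * h π := by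
      simp only [hhdef]
      rw [← mul_assoc, mul_comm (eP π) (eM π), hee π, one_mul]
    rw [h8]
    have h9 : h π ≤ π*M/(2*k^4) * Real.exp (V*π) :=
      hgron.trans (mul_le_mul_of_nonneg_left hexp2
        (div_nonneg (mul_nonneg hπ.le hM0) (by positivity)))
    calc eP π * h π ≤ eP π * (π*M/(2*k^4) * Real.exp (V*π)) :=
          mul_le_mul_of_nonneg_left h9 (hEPpos π).le
      _ = (π*M*Real.exp (V*π)/2) * (Real.exp (π*k)/k^4) := by
          simp only [hePdef]
          rw [show k*π = π*k by ring]
          field_simp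
  -- tail bound
  have h9 : k^3 * eM π ≤ eP π := by
    have hkexp : k^3 ≤ eP π * eP π := by
      have hke : k ≤ Real.exp k := by linarith [Real.add_one_le_exp k]
      calc k^3 ≤ (Real.exp k)^3 := pow_le_pow_left₀ hk0.le hke 3
        _ = Real.exp (3*k) := by
            rw [show (3:ℝ)*k = ((3:ℕ):ℝ)*k by norm_num, Real.exp_nat_mul]
        _ ≤ Real.exp (k*π + k*π) := Real.exp_le_exp.2 (by nlinarith [Real.pi_gt_three, hk0.le])
        _ = eP π * eP π := by rw [Real.exp_add, hePdef]
    calc k^3 * eM π ≤ (eP π * eP π) * eM π := mul_le_mul_of_nonneg_right hkexp (hEMpos π).le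
      _ = eP π * (eM π * eP π) := by ring
      _ = eP π := by rw [hee π, mul_one]
  have hCQ0 : (0:ℝ) ≤ CQ := by linarith
  have hQπ : |Q π| ≤ CQ := by
    simp only [hQdef]
    rw [hCQdef]
    have e1 : |A₁ π/k| = |A₁ π|/k := by rw [abs_div, abs_of_pos hk0]
    have e2 : |A₂ π/k^2| = |A₂ π|/k^2 := by
      rw [abs_div, abs_of_pos (show (0:ℝ) < k^2 by positivity)]
    have e3 : |A₁ π|/k ≤ |A₁ π| := div_le_self (abs_nonneg _) hk
    have e4 : |A₂ π|/k^2 ≤ |A₂ π| := div_le_self (abs_nonneg _) (by nlinarith)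
    calc |1 - A₁ π/k + A₂ π/k^2| ≤ |1 - A₁ π/k| + |A₂ π/k^2| := abs_add_le _ _
      _ ≤ (|(1:ℝ)| + |A₁ π/k|) + |A₂ π/k^2| := add_le_add (habs _ _) le_rfl
      _ ≤ 1 + |A₁ π| + |A₂ π| := by rw [abs_one, e1, e2]; linarith
  have htail : eM π * |Q π| / (2*k) ≤ (CQ/2) * (Real.exp (π*k)/k^4) := by
    have h11 := mul_le_mul_of_nonneg_right h9
      (show (0:ℝ) ≤ CQ/(2*k^4) from div_nonneg hCQ0 (by positivity))
    have h12 : eM π * |Q π| / (2*k) ≤ eM π * CQ/(2*k) :=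
      (div_le_div_iff_of_pos_right hkne2).2 (mul_le_mul_of_nonneg_left hQπ (hEMpos π).le)
    refine h12.trans ?_
    calc eM π * CQ/(2*k) = k^3 * eM π * (CQ/(2*k^4)) := by field_simp
      _ ≤ eP π * (CQ/(2*k^4)) := h11
      _ = (CQ/2) * (Real.exp (π*k)/k^4) := by
          simp only [hePdef]
          rw [show k*π = π*k by ring]
          field_simp
  -- final decomposition and bound
  have hdecomp : u π - Real.exp (π * k) / (2 * k) *
      (1 + π * ((1 / π) * ∫ x in (0:ℝ)..π, v x) / (2 * k) +
        (π ^ 2 * ((1 / π) * ∫ x in (0:ℝ)..π, v x) ^ 2 - 2 * (v 0 + v π)) / (8 * k ^ 2))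
      = ψ π - eM π * Q π / (2*k) := by
    obtain ⟨S, hSdef⟩ : ∃ c : ℝ, c = ∫ x in (0:ℝ)..π, v x := ⟨_, rfl⟩
    have hA₁π : A₁ π = S/2 := by rw [hA₁def, hSdef]
    have hA₂π : A₂ π = (S/2)*(S/2)/2 - (v π + v 0)/4 := by
      rw [hA₂def]; simp only; rw [hA₁π]
    have hPπ : eP π * P π
        = Real.exp (π*k) * (1 + (S/2)/k + ((S/2)*(S/2)/2 - (v π + v 0)/4)/k^2) := by
      rw [hPdef]; simp only; rw [hA₁π, hA₂π, hePdef]; simp only; rw [mul_comm k π]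
    have hT : Real.exp (π * k)/(2*k) * (1 + π*((1/π)*S)/(2*k)
          + (π^2*((1/π)*S)^2 - 2*(v 0 + v π))/(8*k^2)) = eP π * P π / (2*k) := by
      rw [hPπ]
      field_simp
      ring
    rw [← hSdef, hT]
    simp only [hψdef, hφdef]
    ring
  rw [← hudef, hdecomp]
  have hEq4 : (0:ℝ) < Real.exp (π*k)/k^4 := by positivity
  calc |ψ π - eM π * Q π/(2*k)| ≤ |ψ π| + |eM π * Q π/(2*k)| := habs _ _
    _ = |ψ π| + eM π * |Q π|/(2*k) := by
        rw [abs_div, abs_mul, abs_of_pos (hEMpos π), abs_of_pos hkne2]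
    _ ≤ (π*M*Real.exp (V*π)/2) * (Real.exp (π*k)/k^4) + (CQ/2) * (Real.exp (π*k)/k^4) :=
        add_le_add hψπ htail
    _ = (π * M * Real.exp (V*π)/2 + CQ/2) * Real.exp (π * k) / k ^ 4 := by ring
    _ ≤ (π * M * Real.exp (V*π)/2 + CQ/2 + 1) * Real.exp (π * k) / k ^ 4 := by
        apply (div_le_div_iff_of_pos_right (show (0:ℝ) < k^4 by positivity)).2
        exact mul_le_mul_of_nonneg_right (by linarith) (Real.exp_pos _).le
end

section
/- Let v : ℝ → ℝ be continuous with ∫_ℝ (1+|x|)|v(x)|dx < ∞ and let k ∈ ℝ, k ≠ 0. Then the functions f₁(·,k) and f₁(·,−k) form a basis of the solution space of −f'' + vf = k²f, so there are unique complex numbers a(k), b(k) with f₂(x,k) = a(k) f₁(x,−k) + b(k) f₁(x,k) for all x ∈ ℝ; moreover a(k) = W(f₁(·,k), f₂(·,k))/(2ik), and the transition coefficients satisfy |a(k)|² = 1 + |b(k)|². -/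
open Real Set MeasureTheory Filter Complex

/-- `f` (with derivative `f'` and second derivative `f''`) is a twice continuously
differentiable solution of the one-dimensional Schrödinger equation `-f'' + v·f = k²·f` on `ℝ`. -/
def IsSchrodingerSolution (v : ℝ → ℝ) (k : ℂ) (f f' f'' : ℝ → ℂ) : Prop :=
  (∀ x : ℝ, HasDerivAt f (f' x) x) ∧ (∀ x : ℝ, HasDerivAt f' (f'' x) x) ∧
    Continuous f'' ∧ (∀ x : ℝ, -(f'' x) + (v x : ℂ) * f x = k ^ 2 * f x)

/-- The Jost asymptotics at `+∞`: `e^{-ikx} f(x) → 1` and `e^{-ikx} f'(x) → ik` as `x → +∞`. -/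
def IsJostAtPlusInfinity (k : ℂ) (f f' : ℝ → ℂ) : Prop :=
  Tendsto (fun x : ℝ => Complex.exp (-Complex.I * k * x) * f x) atTop (nhds 1) ∧
    Tendsto (fun x : ℝ => Complex.exp (-Complex.I * k * x) * f' x) atTop (nhds (Complex.I * k))

/-- The Jost asymptotics at `-∞`: `e^{ikx} f(x) → 1` and `e^{ikx} f'(x) → -ik` as `x → -∞`. -/
def IsJostAtMinusInfinity (k : ℂ) (f f' : ℝ → ℂ) : Prop :=
  Tendsto (fun x : ℝ => Complex.exp (Complex.I * k * x) * f x) atBot (nhds 1) ∧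
    Tendsto (fun x : ℝ => Complex.exp (Complex.I * k * x) * f' x) atBot (nhds (-Complex.I * k))


lemma sol_neg_k {v : ℝ → ℝ} {k : ℂ} {f f' f'' : ℝ → ℂ}
    (h : IsSchrodingerSolution v (-k) f f' f'') : IsSchrodingerSolution v k f f' f'' :=
  ⟨h.1, h.2.1, h.2.2.1, fun x => by have := h.2.2.2 x; linear_combination this⟩

lemma sol_sub {v : ℝ → ℝ} {k : ℂ} {p p' p'' q q' q'' : ℝ → ℂ}
    (hp : IsSchrodingerSolution v k p p' p'') (hq : IsSchrodingerSolution v k q q' q'') :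
    IsSchrodingerSolution v k (fun x => p x - q x) (fun x => p' x - q' x)
      (fun x => p'' x - q'' x) :=
  ⟨fun x => (hp.1 x).sub (hq.1 x), fun x => (hp.2.1 x).sub (hq.2.1 x),
    hp.2.2.1.sub hq.2.2.1, fun x => by linear_combination hp.2.2.2 x - hq.2.2.2 x⟩

lemma sol_combo {v : ℝ → ℝ} {k : ℂ} {p p' p'' q q' q'' : ℝ → ℂ} (c₁ c₂ : ℂ)
    (hp : IsSchrodingerSolution v k p p' p'') (hq : IsSchrodingerSolution v k q q' q'') :
    IsSchrodingerSolution v k (fun x => c₁ * p x + c₂ * q x)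
      (fun x => c₁ * p' x + c₂ * q' x) (fun x => c₁ * p'' x + c₂ * q'' x) :=
  ⟨fun x => ((hp.1 x).const_mul c₁).add ((hq.1 x).const_mul c₂),
    fun x => ((hp.2.1 x).const_mul c₁).add ((hq.2.1 x).const_mul c₂),
    ((continuous_const.mul hp.2.2.1).add (continuous_const.mul hq.2.2.1)),
    fun x => by linear_combination c₁ * hp.2.2.2 x + c₂ * hq.2.2.2 x⟩

lemma sol_conj {v : ℝ → ℝ} {k : ℝ} {f f' f'' : ℝ → ℂ}
    (h : IsSchrodingerSolution v (k : ℂ) f f' f'') :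
    IsSchrodingerSolution v (k : ℂ) (fun x => (starRingEnd ℂ) (f x))
      (fun x => (starRingEnd ℂ) (f' x)) (fun x => (starRingEnd ℂ) (f'' x)) := by
  refine ⟨fun x => ?_, fun x => ?_, ?_, fun x => ?_⟩
  · exact (h.1 x).star
  · exact (h.2.1 x).star
  · exact Complex.continuous_conj.comp h.2.2.1
  · have := congrArg (starRingEnd ℂ) (h.2.2.2 x)
    simpa [map_add, map_mul, map_neg, map_pow, Complex.conj_ofReal] using this

lemma wronskian_eq {v : ℝ → ℝ} {k : ℂ} {f f' f'' g g' g'' : ℝ → ℂ}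
    (hf : IsSchrodingerSolution v k f f' f'') (hg : IsSchrodingerSolution v k g g' g'')
    (x y : ℝ) : f' x * g x - f x * g' x = f' y * g y - f y * g' y := by
  have hx : ∀ t : ℝ, HasDerivAt (fun t => f' t * g t - f t * g' t) 0 t := by
    intro t
    have h1 : HasDerivAt (fun t => f' t * g t - f t * g' t)
        ((f'' t * g t + f' t * g' t) - (f' t * g' t + f t * g'' t)) t :=
      ((hf.2.1 t).mul (hg.1 t)).sub ((hf.1 t).mul (hg.2.1 t))
    convert h1 using 1
    have e1 := hf.2.2.2 t
    have e2 := hg.2.2.2 t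
    linear_combination (g t) * e1 - (f t) * e2
  exact is_const_of_deriv_eq_zero (fun t => (hx t).differentiableAt) (fun t => (hx t).deriv) x y

lemma deriv_eq_of_eq {f g f' g' : ℝ → ℂ} (hf : ∀ x, HasDerivAt f (f' x) x)
    (hg : ∀ x, HasDerivAt g (g' x) x) (h : ∀ x, f x = g x) (x : ℝ) : f' x = g' x := by
  have hfg : f = g := funext h
  exact (hf x).unique (hfg ▸ hg x)
lemma schrodinger_zero (v : ℝ → ℝ) (hv : Continuous v) (k : ℂ) (f f' f'' : ℝ → ℂ)
    (hs : IsSchrodingerSolution v k f f' f'') (h0 : f 0 = 0) (h0' : f' 0 = 0) (x : ℝ) :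
    f x = 0 := by
  obtain ⟨hf, hf', hcont, hode⟩ := hs
  have heq : ∀ t, f'' t = ((v t : ℂ) - k ^ 2) * f t := fun t => by linear_combination -hode t
  set a : ℝ := min x 0 - 1 with ha
  set b : ℝ := max x 0 + 1 with hb
  have hax : a < 0 := by have := min_le_right x 0; simp only [ha]; linarith
  have hbx : 0 < b := by have := le_max_right x 0; simp only [hb]; linarith
  have hab : a ≤ b := le_of_lt (lt_trans hax hbx)
  have hxmem : x ∈ Icc a b := by
    constructor
    · nlinarith [min_le_left x 0]
    · nlinarith [le_max_left x 0]
  set cl : ℝ → ℝ := fun t => max a (min t b) with hcl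
  have hclmem : ∀ t, cl t ∈ Icc a b := fun t =>
    ⟨le_max_left _ _, max_le hab (min_le_right _ _)⟩
  have hclid : ∀ t ∈ Icc a b, cl t = t := fun t ht => by
    simp [hcl, min_eq_left ht.2, max_eq_right ht.1]
  obtain ⟨C, hC⟩ := IsCompact.exists_bound_of_continuousOn (isCompact_Icc (a := a) (b := b))
    (Continuous.continuousOn (f := fun s : ℝ => ((v s : ℂ) - k ^ 2)) (by continuity))
  have hC0 : 0 ≤ C := le_trans (norm_nonneg _) (hC a ⟨le_refl a, hab⟩)
  set c : ℝ → ℂ := fun t => (v (cl t) : ℂ) - k ^ 2 with hc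
  have hcb : ∀ t, ‖c t‖ ≤ C := fun t => hC _ (hclmem t)
  set K : NNReal := Real.toNNReal (max 1 C) with hK
  have hK1 : (1 : ℝ) ≤ K := by
    rw [hK, Real.coe_toNNReal _ (le_trans zero_le_one (le_max_left 1 C))]
    exact le_max_left 1 C
  have hKC : C ≤ K := by
    rw [hK, Real.coe_toNNReal _ (le_trans zero_le_one (le_max_left 1 C))]
    exact le_max_right 1 C
  set F : ℝ → ℂ × ℂ → ℂ × ℂ := fun t y => (y.2, c t * y.1) with hF
  have hlip : ∀ t, LipschitzOnWith K (F t) univ := by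
    intro t
    apply LipschitzWith.lipschitzOnWith
    apply LipschitzWith.of_dist_le_mul
    intro y z
    rw [Prod.dist_eq, Prod.dist_eq]
    have h2 : dist (c t * y.1) (c t * z.1) = ‖c t‖ * dist y.1 z.1 := by
      rw [dist_eq_norm, dist_eq_norm, ← mul_sub, norm_mul]
    apply max_le
    · calc dist y.2 z.2 ≤ max (dist y.1 z.1) (dist y.2 z.2) := le_max_right _ _
        _ ≤ K * max (dist y.1 z.1) (dist y.2 z.2) := by
            nlinarith [le_max_of_le_left (dist_nonneg (x := y.1) (y := z.1)) (c := dist y.2 z.2), dist_nonneg (x := y.1) (y := z.1), dist_nonneg (x := y.2) (y := z.2)]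
    · rw [h2]
      have := hcb t
      have h3 : dist y.1 z.1 ≤ max (dist y.1 z.1) (dist y.2 z.2) := le_max_left _ _
      nlinarith [dist_nonneg (x := y.1) (y := z.1), norm_nonneg (c t),
        le_max_of_le_left (le_refl (dist y.1 z.1)) (c := dist y.2 z.2)]
  have hmain : EqOn (fun t => (f t, f' t)) (fun _ : ℝ => ((0 : ℂ), (0 : ℂ))) (Icc a b) := by
    apply ODE_solution_unique_of_mem_Icc (fun t _ => hlip t) (t₀ := 0) ⟨hax, hbx⟩
    · exact Continuous.continuousOn (Continuous.prodMk
        (continuous_iff_continuousAt.2 fun t => (hf t).continuousAt)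
        (continuous_iff_continuousAt.2 fun t => (hf' t).continuousAt))
    · intro t ht
      have : F t (f t, f' t) = (f' t, f'' t) := by
        simp only [hF]
        rw [hc]
        simp only
        rw [hclid t (Ioo_subset_Icc_self ht), heq t]
      rw [this]
      exact (hf t).prodMk (hf' t)
    · exact fun t _ => mem_univ _
    · exact continuousOn_const
    · intro t ht
      have : F t ((0 : ℂ), (0 : ℂ)) = (0, 0) := by simp [hF]
      rw [this]
      exact hasDerivAt_const t _
    · exact fun t _ => mem_univ _
    · exact Prod.ext h0 h0'
  have := hmain hxmem
  simpa using congrArg Prod.fst this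
/-- for real `k ≠ 0` the Jost solutions `f₁(·,k)`, `f₁(·,-k)` form a basis of the
solution space of `-f'' + v·f = k²·f`; in the decomposition
`f₂(x,k) = a(k) f₁(x,-k) + b(k) f₁(x,k)` the coefficients `a, b` are unique, satisfy
`a(k) = W(f₁(·,k), f₂(·,k))/(2ik)` (with `W(f,g) = f'g - fg'`) and `|a(k)|² = 1 + |b(k)|²`. -/
theorem transition_coefficients
    (v : ℝ → ℝ) (hv : Continuous v)
    (hint : Integrable (fun x : ℝ => (1 + |x|) * |v x|))
    (k : ℝ) (hk : k ≠ 0)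
    (f₁ f₁' f₁'' g₁ g₁' g₁'' f₂ f₂' f₂'' : ℝ → ℂ)
    (h1 : IsSchrodingerSolution v (k : ℂ) f₁ f₁' f₁'')
    (hj1 : IsJostAtPlusInfinity (k : ℂ) f₁ f₁')
    (hg : IsSchrodingerSolution v (-(k : ℂ)) g₁ g₁' g₁'')
    (hjg : IsJostAtPlusInfinity (-(k : ℂ)) g₁ g₁')
    (h2 : IsSchrodingerSolution v (k : ℂ) f₂ f₂' f₂'')
    (hj2 : IsJostAtMinusInfinity (k : ℂ) f₂ f₂') :
    (∀ c₁ c₂ : ℂ, (∀ x : ℝ, c₁ * g₁ x + c₂ * f₁ x = 0) → c₁ = 0 ∧ c₂ = 0) ∧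
    (∀ h h' h'' : ℝ → ℂ, IsSchrodingerSolution v (k : ℂ) h h' h'' →
      ∃ c₁ c₂ : ℂ, ∀ x : ℝ, h x = c₁ * g₁ x + c₂ * f₁ x) ∧
    (∃! p : ℂ × ℂ, ∀ x : ℝ, f₂ x = p.1 * g₁ x + p.2 * f₁ x) ∧
    (∀ a b : ℂ, (∀ x : ℝ, f₂ x = a * g₁ x + b * f₁ x) →
      (∀ x : ℝ, a = (f₁' x * f₂ x - f₁ x * f₂' x) / (2 * Complex.I * k)) ∧
      ‖a‖ ^ 2 = 1 + ‖b‖ ^ 2) := by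
  -- normalized Jost limits
  have hj1a : Tendsto (fun x : ℝ => Complex.exp (-(Complex.I * k * x)) * f₁ x) atTop (nhds 1) := by
    simpa [neg_mul] using hj1.1
  have hj1b : Tendsto (fun x : ℝ => Complex.exp (-(Complex.I * k * x)) * f₁' x) atTop
      (nhds (Complex.I * k)) := by simpa [neg_mul] using hj1.2
  have hjga : Tendsto (fun x : ℝ => Complex.exp (Complex.I * k * x) * g₁ x) atTop (nhds 1) := by
    simpa [neg_mul, mul_neg, neg_neg] using hjg.1
  have hjgb : Tendsto (fun x : ℝ => Complex.exp (Complex.I * k * x) * g₁' x) atTop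
      (nhds (-(Complex.I * k))) := by simpa [neg_mul, mul_neg, neg_neg] using hjg.2
  have hj2a : Tendsto (fun x : ℝ => Complex.exp (Complex.I * k * x) * f₂ x) atBot (nhds 1) :=
    hj2.1
  have hj2b : Tendsto (fun x : ℝ => Complex.exp (Complex.I * k * x) * f₂' x) atBot
      (nhds (-(Complex.I * k))) := by simpa [neg_mul] using hj2.2
  have hknz : (k : ℂ) ≠ 0 := Complex.ofReal_ne_zero.mpr hk
  have hk2 : (2 * Complex.I * (k : ℂ)) ≠ 0 :=
    mul_ne_zero (mul_ne_zero two_ne_zero Complex.I_ne_zero) hknz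
  have hsg : IsSchrodingerSolution v (k : ℂ) g₁ g₁' g₁'' := sol_neg_k hg
  have hEmul : ∀ x : ℝ, Complex.exp (-(Complex.I * k * x)) * Complex.exp (Complex.I * k * x) = 1 :=
    fun x => by rw [← Complex.exp_add, neg_add_cancel, Complex.exp_zero]
  have hconjE : ∀ x : ℝ, (starRingEnd ℂ) (Complex.exp (-(Complex.I * k * x)))
      = Complex.exp (Complex.I * k * x) := fun x => by
    rw [← Complex.exp_conj]
    congr 1
    simp [map_neg, map_mul, Complex.conj_I, Complex.conj_ofReal]
  have hconjE2 : ∀ x : ℝ, (starRingEnd ℂ) (Complex.exp (Complex.I * k * x))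
      = Complex.exp (-(Complex.I * k * x)) := fun x => by
    rw [← Complex.exp_conj]
    congr 1
    simp [map_mul, Complex.conj_I, Complex.conj_ofReal]
  have hTconj : ∀ {F : ℝ → ℂ} {c : ℂ} {l : Filter ℝ}, Tendsto F l (nhds c) →
      Tendsto (fun x => (starRingEnd ℂ) (F x)) l (nhds ((starRingEnd ℂ) c)) :=
    fun h => (Complex.continuous_conj.tendsto _).comp h
  -- the Wronskian of f₁ and g₁ is 2ik
  have hWfun := wronskian_eq h1 hsg
  have hW : ∀ x : ℝ, f₁' x * g₁ x - f₁ x * g₁' x = 2 * Complex.I * k := by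
    intro x
    have hkey : (fun y : ℝ => f₁' y * g₁ y - f₁ y * g₁' y) = fun y : ℝ =>
        (Complex.exp (-(Complex.I * k * y)) * f₁' y) * (Complex.exp (Complex.I * k * y) * g₁ y)
        - (Complex.exp (-(Complex.I * k * y)) * f₁ y) * (Complex.exp (Complex.I * k * y) * g₁' y) := by
      funext y
      linear_combination (-(f₁' y * g₁ y - f₁ y * g₁' y)) * hEmul y
    have hconstT : Tendsto (fun y : ℝ => f₁' y * g₁ y - f₁ y * g₁' y) atTop
        (nhds (f₁' x * g₁ x - f₁ x * g₁' x)) := by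
      rw [show (fun y : ℝ => f₁' y * g₁ y - f₁ y * g₁' y)
        = fun _ => f₁' x * g₁ x - f₁ x * g₁' x from funext fun y => hWfun y x]
      exact tendsto_const_nhds
    have hlimT : Tendsto (fun y : ℝ => f₁' y * g₁ y - f₁ y * g₁' y) atTop
        (nhds ((Complex.I * k) * 1 - 1 * (-(Complex.I * k)))) := by
      rw [hkey]; exact (hj1b.mul hjga).sub (hj1a.mul hjgb)
    rw [tendsto_nhds_unique hconstT hlimT]; ring
  -- independence
  have hindep : ∀ c₁ c₂ : ℂ, (∀ x : ℝ, c₁ * g₁ x + c₂ * f₁ x = 0) → c₁ = 0 ∧ c₂ = 0 := by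
    intro c₁ c₂ hcc
    have hd : ∀ x : ℝ, c₁ * g₁' x + c₂ * f₁' x = 0 :=
      deriv_eq_of_eq (sol_combo c₁ c₂ hsg h1).1 (fun x => hasDerivAt_const x 0) hcc
    have hc₁ : c₁ = 0 := by
      have h0 := hcc 0
      have h0' := hd 0
      have hww := hW 0
      have : c₁ * (2 * Complex.I * k) = 0 := by
        linear_combination (-c₁) * hww + f₁' 0 * h0 - f₁ 0 * h0'
      exact (mul_eq_zero.mp this).resolve_right hk2
    refine ⟨hc₁, ?_⟩
    by_contra hc
    have hf0 : ∀ x : ℝ, f₁ x = 0 := by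
      intro x
      have := hcc x
      rw [hc₁, zero_mul, zero_add] at this
      exact (mul_eq_zero.mp this).resolve_left hc
    have hz : Tendsto (fun x : ℝ => Complex.exp (-(Complex.I * k * x)) * f₁ x) atTop
        (nhds 0) := by
      rw [show (fun x : ℝ => Complex.exp (-(Complex.I * k * x)) * f₁ x)
        = fun _ => (0 : ℂ) from funext fun x => by rw [hf0 x, mul_zero]]
      exact tendsto_const_nhds
    exact one_ne_zero (tendsto_nhds_unique hj1a hz)
  -- span
  have hspan : ∀ h h' h'' : ℝ → ℂ, IsSchrodingerSolution v (k : ℂ) h h' h'' →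
      ∃ c₁ c₂ : ℂ, ∀ x : ℝ, h x = c₁ * g₁ x + c₂ * f₁ x := by
    intro h h' h'' hh
    refine ⟨(f₁' 0 * h 0 - f₁ 0 * h' 0) / (2 * Complex.I * k),
      (g₁ 0 * h' 0 - g₁' 0 * h 0) / (2 * Complex.I * k), ?_⟩
    set c₁ : ℂ := (f₁' 0 * h 0 - f₁ 0 * h' 0) / (2 * Complex.I * k) with hc₁def
    set c₂ : ℂ := (g₁ 0 * h' 0 - g₁' 0 * h 0) / (2 * Complex.I * k) with hc₂def
    have hdsol := sol_sub hh (sol_combo c₁ c₂ hsg h1)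
    have hww := hW 0
    have hd0 : h 0 - (c₁ * g₁ 0 + c₂ * f₁ 0) = 0 := by
      rw [hc₁def, hc₂def]
      field_simp
      linear_combination (-(h 0)) * hww
    have hd0' : h' 0 - (c₁ * g₁' 0 + c₂ * f₁' 0) = 0 := by
      rw [hc₁def, hc₂def]
      field_simp
      linear_combination (-(h' 0)) * hww
    have hz := schrodinger_zero v hv k _ _ _ hdsol hd0 hd0'
    intro x
    linear_combination hz x
  -- conjugation: g₁ = conj f₁
  have hcsol := sol_conj h1
  have hdconj := sol_sub hsg hcsol
  obtain ⟨e₁, e₂, hd⟩ := hspan _ _ _ hdconj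
  have hd' : ∀ x : ℝ, g₁' x - (starRingEnd ℂ) (f₁' x) = e₁ * g₁' x + e₂ * f₁' x :=
    deriv_eq_of_eq hdconj.1 (sol_combo e₁ e₂ hsg h1).1 hd
  have hdT : Tendsto (fun x : ℝ => Complex.exp (Complex.I * k * x)
      * (g₁ x - (starRingEnd ℂ) (f₁ x))) atTop (nhds 0) := by
    have heq : (fun x : ℝ => Complex.exp (Complex.I * k * x) * (g₁ x - (starRingEnd ℂ) (f₁ x)))
        = fun x : ℝ => Complex.exp (Complex.I * k * x) * g₁ x
          - (starRingEnd ℂ) (Complex.exp (-(Complex.I * k * x)) * f₁ x) := by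
      funext x
      rw [map_mul, hconjE x]
      ring
    rw [heq]
    have := hjga.sub (hTconj hj1a)
    simpa using this
  have hdT' : Tendsto (fun x : ℝ => Complex.exp (Complex.I * k * x)
      * (g₁' x - (starRingEnd ℂ) (f₁' x))) atTop (nhds 0) := by
    have heq : (fun x : ℝ => Complex.exp (Complex.I * k * x) * (g₁' x - (starRingEnd ℂ) (f₁' x)))
        = fun x : ℝ => Complex.exp (Complex.I * k * x) * g₁' x
          - (starRingEnd ℂ) (Complex.exp (-(Complex.I * k * x)) * f₁' x) := by
      funext x
      rw [map_mul, hconjE x]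
      ring
    rw [heq]
    have hlim := hjgb.sub (hTconj hj1b)
    have hval : (-(Complex.I * (k : ℂ)) - (starRingEnd ℂ) (Complex.I * (k : ℂ))) = 0 := by
      simp [map_mul, Complex.conj_I, Complex.conj_ofReal]
    rw [hval] at hlim
    exact hlim
  have hnorm : ∀ x : ℝ, ‖Complex.exp (Complex.I * k * x)‖ = 1 := fun x => by
    simp [Complex.norm_exp]
  have hnorm' : ∀ x : ℝ, ‖Complex.exp (-(Complex.I * k * x))‖ = 1 := fun x => by
    simp [Complex.norm_exp]
  have hflip : ∀ F : ℝ → ℂ, Tendsto (fun x : ℝ => Complex.exp (Complex.I * k * x) * F x) atTop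
      (nhds 0) → Tendsto (fun x : ℝ => Complex.exp (-(Complex.I * k * x)) * F x) atTop (nhds 0) := by
    intro F h
    rw [tendsto_zero_iff_norm_tendsto_zero] at h ⊢
    refine h.congr fun x => ?_
    rw [norm_mul, norm_mul, hnorm x, hnorm' x]
  have hdnT := hflip _ hdT
  have hdnT' := hflip _ hdT'
  have he₁ : e₁ = 0 := by
    have hWd : ∀ x : ℝ, f₁' x * (g₁ x - (starRingEnd ℂ) (f₁ x))
        - f₁ x * (g₁' x - (starRingEnd ℂ) (f₁' x)) = e₁ * (2 * Complex.I * k) := by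
      intro x
      rw [hd x, hd' x]
      linear_combination e₁ * hW x
    have hcT : Tendsto (fun x : ℝ => f₁' x * (g₁ x - (starRingEnd ℂ) (f₁ x))
        - f₁ x * (g₁' x - (starRingEnd ℂ) (f₁' x))) atTop (nhds (e₁ * (2 * Complex.I * k))) := by
      rw [funext hWd]
      exact tendsto_const_nhds
    have hlT : Tendsto (fun x : ℝ => f₁' x * (g₁ x - (starRingEnd ℂ) (f₁ x))
        - f₁ x * (g₁' x - (starRingEnd ℂ) (f₁' x))) atTop (nhds ((Complex.I * k) * 0 - 1 * 0)) := by
      have hkey : (fun x : ℝ => f₁' x * (g₁ x - (starRingEnd ℂ) (f₁ x))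
          - f₁ x * (g₁' x - (starRingEnd ℂ) (f₁' x))) = fun x : ℝ =>
          (Complex.exp (-(Complex.I * k * x)) * f₁' x)
            * (Complex.exp (Complex.I * k * x) * (g₁ x - (starRingEnd ℂ) (f₁ x)))
          - (Complex.exp (-(Complex.I * k * x)) * f₁ x)
            * (Complex.exp (Complex.I * k * x) * (g₁' x - (starRingEnd ℂ) (f₁' x))) := by
        funext x
        linear_combination (-(f₁' x * (g₁ x - (starRingEnd ℂ) (f₁ x))
          - f₁ x * (g₁' x - (starRingEnd ℂ) (f₁' x)))) * hEmul x
      rw [hkey]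
      exact (hj1b.mul hdT).sub (hj1a.mul hdT')
    have := tendsto_nhds_unique hcT hlT
    rw [mul_zero, mul_zero, sub_zero] at this
    exact (mul_eq_zero.mp this).resolve_right hk2
  have he₂ : e₂ = 0 := by
    have hWd : ∀ x : ℝ, g₁' x * (g₁ x - (starRingEnd ℂ) (f₁ x))
        - g₁ x * (g₁' x - (starRingEnd ℂ) (f₁' x)) = -(e₂ * (2 * Complex.I * k)) := by
      intro x
      rw [hd x, hd' x]
      linear_combination (-e₂) * hW x
    have hcT : Tendsto (fun x : ℝ => g₁' x * (g₁ x - (starRingEnd ℂ) (f₁ x))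
        - g₁ x * (g₁' x - (starRingEnd ℂ) (f₁' x))) atTop
        (nhds (-(e₂ * (2 * Complex.I * k)))) := by
      rw [funext hWd]
      exact tendsto_const_nhds
    have hlT : Tendsto (fun x : ℝ => g₁' x * (g₁ x - (starRingEnd ℂ) (f₁ x))
        - g₁ x * (g₁' x - (starRingEnd ℂ) (f₁' x))) atTop
        (nhds ((-(Complex.I * k)) * 0 - 1 * 0)) := by
      have hkey : (fun x : ℝ => g₁' x * (g₁ x - (starRingEnd ℂ) (f₁ x))
          - g₁ x * (g₁' x - (starRingEnd ℂ) (f₁' x))) = fun x : ℝ =>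
          (Complex.exp (Complex.I * k * x) * g₁' x)
            * (Complex.exp (-(Complex.I * k * x)) * (g₁ x - (starRingEnd ℂ) (f₁ x)))
          - (Complex.exp (Complex.I * k * x) * g₁ x)
            * (Complex.exp (-(Complex.I * k * x)) * (g₁' x - (starRingEnd ℂ) (f₁' x))) := by
        funext x
        linear_combination (-(g₁' x * (g₁ x - (starRingEnd ℂ) (f₁ x))
          - g₁ x * (g₁' x - (starRingEnd ℂ) (f₁' x)))) * hEmul x
      rw [hkey]
      exact (hjgb.mul hdnT).sub (hjga.mul hdnT')
    have := tendsto_nhds_unique hcT hlT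
    rw [mul_zero, mul_zero, sub_zero] at this
    have h0 : e₂ * (2 * Complex.I * k) = 0 := by linear_combination -this
    exact (mul_eq_zero.mp h0).resolve_right hk2
  have hcg : ∀ x : ℝ, g₁ x = (starRingEnd ℂ) (f₁ x) := by
    intro x
    have := hd x
    rw [he₁, he₂, zero_mul, zero_mul, add_zero] at this
    linear_combination this
  have hcg' : ∀ x : ℝ, g₁' x = (starRingEnd ℂ) (f₁' x) := by
    intro x
    have := hd' x
    rw [he₁, he₂, zero_mul, zero_mul, add_zero] at this
    linear_combination this
  -- assemble
  obtain ⟨a₀, b₀, hab₀⟩ := hspan f₂ f₂' f₂'' h2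
  refine ⟨hindep, hspan, ?_, ?_⟩
  · refine ⟨(a₀, b₀), hab₀, ?_⟩
    rintro ⟨q₁, q₂⟩ hq
    have := hindep (q₁ - a₀) (q₂ - b₀) (fun x => by linear_combination hab₀ x - hq x)
    have h1' : q₁ = a₀ := by linear_combination this.1
    have h2' : q₂ = b₀ := by linear_combination this.2
    simp [h1', h2']
  · intro a b hab
    have hab' : ∀ x : ℝ, f₂' x = a * g₁' x + b * f₁' x :=
      deriv_eq_of_eq h2.1 (sol_combo a b hsg h1).1 hab
    constructor
    · intro x
      rw [hab x, hab' x, eq_div_iff hk2]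
      linear_combination (-a) * hW x
    · have hWc : ∀ x : ℝ, f₁' x * (starRingEnd ℂ) (f₁ x)
          - f₁ x * (starRingEnd ℂ) (f₁' x) = 2 * Complex.I * k := fun x => by
        rw [← hcg x, ← hcg' x]; exact hW x
      have hwconst : ∀ x : ℝ, f₂' x * (starRingEnd ℂ) (f₂ x) - f₂ x * (starRingEnd ℂ) (f₂' x)
          = (b * (starRingEnd ℂ) b - a * (starRingEnd ℂ) a) * (2 * Complex.I * k) := by
        intro x
        have e1 : f₂ x = a * (starRingEnd ℂ) (f₁ x) + b * f₁ x := by rw [hab x, hcg x]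
        have e2 : f₂' x = a * (starRingEnd ℂ) (f₁' x) + b * f₁' x := by rw [hab' x, hcg' x]
        have e1c : (starRingEnd ℂ) (f₂ x) = (starRingEnd ℂ) a * f₁ x
            + (starRingEnd ℂ) b * (starRingEnd ℂ) (f₁ x) := by
          rw [e1]; simp [map_add, map_mul, Complex.conj_conj]
        have e2c : (starRingEnd ℂ) (f₂' x) = (starRingEnd ℂ) a * f₁' x
            + (starRingEnd ℂ) b * (starRingEnd ℂ) (f₁' x) := by
          rw [e2]; simp [map_add, map_mul, Complex.conj_conj]
        rw [e1c, e2c, e1, e2]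
        linear_combination (b * (starRingEnd ℂ) b - a * (starRingEnd ℂ) a) * hWc x
      have hEmul2 : ∀ x : ℝ, Complex.exp (Complex.I * k * x)
          * Complex.exp (-(Complex.I * k * x)) = 1 := fun x => by
        rw [← Complex.exp_add, add_neg_cancel, Complex.exp_zero]
      have hwfun : (fun x : ℝ => f₂' x * (starRingEnd ℂ) (f₂ x)
          - f₂ x * (starRingEnd ℂ) (f₂' x)) = fun x : ℝ =>
          (Complex.exp (Complex.I * k * x) * f₂' x)
            * (starRingEnd ℂ) (Complex.exp (Complex.I * k * x) * f₂ x)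
          - (Complex.exp (Complex.I * k * x) * f₂ x)
            * (starRingEnd ℂ) (Complex.exp (Complex.I * k * x) * f₂' x) := by
        funext x
        rw [map_mul, map_mul, hconjE2 x]
        linear_combination (-(f₂' x * (starRingEnd ℂ) (f₂ x)
          - f₂ x * (starRingEnd ℂ) (f₂' x))) * hEmul2 x
      have hcTB : Tendsto (fun x : ℝ => f₂' x * (starRingEnd ℂ) (f₂ x)
          - f₂ x * (starRingEnd ℂ) (f₂' x)) atBot
          (nhds ((b * (starRingEnd ℂ) b - a * (starRingEnd ℂ) a) * (2 * Complex.I * k))) := by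
        rw [funext hwconst]
        exact tendsto_const_nhds
      have hlimB : Tendsto (fun x : ℝ => f₂' x * (starRingEnd ℂ) (f₂ x)
          - f₂ x * (starRingEnd ℂ) (f₂' x)) atBot
          (nhds ((-(Complex.I * k)) * (starRingEnd ℂ) 1
            - 1 * (starRingEnd ℂ) (-(Complex.I * k)))) := by
        rw [hwfun]
        exact (hj2b.mul (hTconj hj2a)).sub (hj2a.mul (hTconj hj2b))
      have hE := tendsto_nhds_unique hcTB hlimB
      have hval : ((-(Complex.I * (k : ℂ))) * (starRingEnd ℂ) 1
          - 1 * (starRingEnd ℂ) (-(Complex.I * (k : ℂ)))) = (-1) * (2 * Complex.I * k) := by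
        simp [map_neg, map_mul, Complex.conj_I, Complex.conj_ofReal]
        ring
      rw [hval] at hE
      have hE2 : b * (starRingEnd ℂ) b - a * (starRingEnd ℂ) a = -1 :=
        mul_right_cancel₀ hk2 hE
      have hna : a * (starRingEnd ℂ) a = ((‖a‖ ^ 2 : ℝ) : ℂ) := by
        rw [Complex.mul_conj]
        norm_cast
        rw [Complex.normSq_eq_norm_sq]
      have hnb : b * (starRingEnd ℂ) b = ((‖b‖ ^ 2 : ℝ) : ℂ) := by
        rw [Complex.mul_conj]
        norm_cast
        rw [Complex.normSq_eq_norm_sq]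
      rw [hna, hnb] at hE2
      have hfin : (‖b‖ ^ 2 : ℝ) - ‖a‖ ^ 2 = -1 := by exact_mod_cast hE2
      linarith
end

section
/- Let v : ℝ → ℝ be continuous with ∫_ℝ (1+|x|)|v(x)|dx < ∞ and let κ > 0. Then a(iκ) = 0 if and only if −κ² is an eigenvalue of the one-dimensional Schrödinger operator, i.e. if and only if there exists a nonzero twice continuously differentiable function ψ ∈ L²(ℝ) with −ψ'' + v(x)ψ = −κ²ψ on ℝ. -/
open Real Set MeasureTheory Filter Complex

lemma schrodinger_unique {v : ℝ → ℝ} {k : ℂ} (hv : Continuous v)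
    {f f' f'' g g' g'' : ℝ → ℂ}
    (hf : IsSchrodingerSolution v k f f' f'') (hg : IsSchrodingerSolution v k g g' g'')
    {x₀ : ℝ} (h0 : f x₀ = g x₀) (h0' : f' x₀ = g' x₀) :
    ∀ x, f x = g x := by
  intro t
  set a : ℝ := min x₀ t - 1 with ha
  set b : ℝ := max x₀ t + 1 with hb
  have hx₀ : x₀ ∈ Ioo a b :=
    ⟨by simp [ha]; nlinarith [min_le_left x₀ t, le_max_left x₀ t],
     by simp [hb]; nlinarith [min_le_left x₀ t, le_max_left x₀ t]⟩
  have ht : t ∈ Icc a b :=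
    ⟨by nlinarith [min_le_right x₀ t], by nlinarith [le_max_right x₀ t]⟩
  have hab : a ≤ b := le_trans ht.1 ht.2
  set cl : ℝ → ℝ := fun s => max a (min s b) with hcl
  have hclmem : ∀ s, cl s ∈ Icc a b := fun s =>
    ⟨le_max_left _ _, max_le hab (min_le_right _ _)⟩
  have hcleq : ∀ s ∈ Ioo a b, cl s = s := by
    intro s hs
    simp only [hcl]
    rw [min_eq_left hs.2.le, max_eq_right hs.1.le]
  obtain ⟨C, hC⟩ := isCompact_Icc.exists_bound_of_continuousOn
    (Continuous.continuousOn (by continuity : Continuous fun s : ℝ => ‖((v s : ℂ)) - k ^ 2‖))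
  have hC0 : 0 ≤ max C 1 := le_trans zero_le_one (le_max_right _ _)
  set K : NNReal := ⟨max C 1, hC0⟩ with hK
  set V : ℝ → ℂ × ℂ → ℂ × ℂ := fun s p => (p.2, ((v (cl s) : ℂ) - k ^ 2) * p.1) with hV
  have hlip : ∀ s, LipschitzOnWith K (V s) univ := by
    intro s
    apply LipschitzWith.lipschitzOnWith
    apply LipschitzWith.of_dist_le_mul
    intro p q
    have hc : ‖((v (cl s) : ℂ)) - k ^ 2‖ ≤ C := by simpa using hC _ (hclmem s)
    have hd1 : dist p.1 q.1 ≤ dist p q := by rw [Prod.dist_eq]; exact le_max_left _ _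
    have hd2 : dist p.2 q.2 ≤ dist p q := by rw [Prod.dist_eq]; exact le_max_right _ _
    have hK' : (K : ℝ) = max C 1 := rfl
    rw [Prod.dist_eq (x := V s p)]
    apply max_le
    · calc dist (V s p).1 (V s q).1 = dist p.2 q.2 := rfl
        _ ≤ dist p q := hd2
        _ ≤ (K : ℝ) * dist p q := by
            nlinarith [dist_nonneg (x := p) (y := q), le_max_right C 1]
    · have : dist (V s p).2 (V s q).2 = ‖((v (cl s) : ℂ)) - k ^ 2‖ * dist p.1 q.1 := by
        simp only [hV, dist_eq_norm, ← mul_sub, norm_mul]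
      rw [this]
      calc ‖((v (cl s) : ℂ)) - k ^ 2‖ * dist p.1 q.1 ≤ C * dist p q := by
            nlinarith [dist_nonneg (x := p.1) (y := q.1), dist_nonneg (x := p) (y := q),
              norm_nonneg (((v (cl s) : ℂ)) - k ^ 2)]
        _ ≤ (K : ℝ) * dist p q := by
            nlinarith [dist_nonneg (x := p) (y := q), le_max_left C 1]
  have contf : Continuous f := continuous_iff_continuousAt.2 fun x => (hf.1 x).continuousAt
  have contf' : Continuous f' := continuous_iff_continuousAt.2 fun x => (hf.2.1 x).continuousAt
  have contg : Continuous g := continuous_iff_continuousAt.2 fun x => (hg.1 x).continuousAt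
  have contg' : Continuous g' := continuous_iff_continuousAt.2 fun x => (hg.2.1 x).continuousAt
  have hFd : ∀ (F F' F'' : ℝ → ℂ), IsSchrodingerSolution v k F F' F'' →
      ∀ s ∈ Ioo a b, HasDerivAt (fun x => (F x, F' x)) (V s (F s, F' s)) s := by
    intro F F' F'' hF s hs
    have h1 : V s (F s, F' s) = (F' s, F'' s) := by
      simp only [hV, hcleq s hs, Prod.mk.injEq]
      exact ⟨trivial, by linear_combination hF.2.2.2 s⟩
    rw [h1]
    exact (hF.1 s).prodMk (hF.2.1 s)
  have heq := ODE_solution_unique_of_mem_Icc (v := V) (K := K) (s := fun _ => univ) (fun s _ => hlip s)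
    hx₀ ((contf.prodMk contf').continuousOn) (fun s hs => hFd f f' f'' hf s hs)
    (fun _ _ => mem_univ _) ((contg.prodMk contg').continuousOn)
    (fun s hs => hFd g g' g'' hg s hs) (fun _ _ => mem_univ _)
    (by rw [Prod.mk.injEq]; exact ⟨h0, h0'⟩)
  have := heq ht
  exact congrArg Prod.fst this

lemma wronskian_const {v : ℝ → ℝ} {k : ℂ} {f f' f'' g g' g'' : ℝ → ℂ}
    (hf : IsSchrodingerSolution v k f f' f'') (hg : IsSchrodingerSolution v k g g' g'')
    (x : ℝ) : f' x * g x - f x * g' x = f' 0 * g 0 - f 0 * g' 0 := by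
  have key : ∀ y : ℝ, HasDerivAt (fun x => f' x * g x - f x * g' x) 0 y := by
    intro y
    have h := ((hf.2.1 y).mul (hg.1 y)).sub ((hf.1 y).mul (hg.2.1 y))
    refine h.congr_deriv ?_
    linear_combination -((g y) * (hf.2.2.2 y) - (f y) * (hg.2.2.2 y))
  exact is_const_of_deriv_eq_zero (fun y => (key y).differentiableAt)
    (fun y => (key y).deriv) x 0

lemma eq_smul_of_wronskian_zero {v : ℝ → ℝ} {k : ℂ} (hv : Continuous v)
    {f f' f'' g g' g'' : ℝ → ℂ}
    (hf : IsSchrodingerSolution v k f f' f'') (hg : IsSchrodingerSolution v k g g' g'')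
    {x₀ : ℝ} (hx₀ : f x₀ ≠ 0) (hW : f' 0 * g 0 - f 0 * g' 0 = 0) :
    ∀ x, g x = (g x₀ / f x₀) * f x := by
  set c : ℂ := g x₀ / f x₀ with hc
  have hW' : f' x₀ * g x₀ - f x₀ * g' x₀ = 0 := by
    rw [wronskian_const hf hg x₀]; exact hW
  have hcf : IsSchrodingerSolution v k (fun x => c * f x) (fun x => c * f' x)
      (fun x => c * f'' x) :=
    ⟨fun x => (hf.1 x).const_mul c, fun x => (hf.2.1 x).const_mul c,
     continuous_const.mul hf.2.2.1, fun x => by linear_combination c * (hf.2.2.2 x)⟩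
  have h1 : g x₀ = c * f x₀ := by
    rw [hc]; field_simp
  have h2 : g' x₀ = c * f' x₀ := by
    rw [hc, div_mul_eq_mul_div, eq_div_iff hx₀]
    linear_combination -hW'
  exact fun x => schrodinger_unique hv hg hcf h1 h2 x

lemma jost_plus_bounds {κ : ℝ} (hκ : 0 < κ) {f : ℝ → ℂ}
    (hj : Tendsto (fun x : ℝ => Complex.exp (-Complex.I * (Complex.I * κ) * x) * f x)
      atTop (nhds 1)) :
    ∃ M : ℝ, 0 ≤ M ∧ ∀ x ≥ M,
      f x ≠ 0 ∧ ‖f x‖ ≤ 2 * (Real.exp (κ * x))⁻¹ ∧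
      (1/2) * (Real.exp (κ * x))⁻¹ ≤ ‖f x‖ ∧
      (1/2) * (Real.exp (κ * x)) ^ 2 ≤ (1 / f x ^ 2).re := by
  have hexp : ∀ x : ℝ, -Complex.I * (Complex.I * κ) * x = (κ : ℂ) * x := by
    intro x
    linear_combination (-(κ : ℂ) * x) * Complex.I_mul_I
  set u : ℝ → ℂ := fun x => Complex.exp ((κ : ℂ) * x) * f x with hu
  have hut : Tendsto u atTop (nhds 1) := by
    apply hj.congr
    intro x
    rw [hexp x]
  have hnormu : ∀ x, ‖u x‖ = Real.exp (κ * x) * ‖f x‖ := by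
    intro x
    rw [hu]
    simp only [norm_mul, Complex.norm_exp]
    norm_num
  have hnorm : Tendsto (fun x => ‖u x‖) atTop (nhds 1) := by
    simpa using hut.norm
  have hre : Tendsto (fun x => ((u x ^ 2)⁻¹).re) atTop (nhds 1) := by
    have h2 : Tendsto (fun x => (u x ^ 2)⁻¹) atTop (nhds 1) := by
      have := ((hut.pow 2).inv₀ (by norm_num))
      simpa using this
    have h3 := (Complex.continuous_re.tendsto 1).comp h2
    rw [Complex.one_re] at h3
    exact h3
  have e1 : ∀ᶠ x in atTop, ‖u x‖ ∈ Ioo (1/2 : ℝ) 2 :=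
    hnorm (Ioo_mem_nhds (by norm_num) (by norm_num))
  have e2 : ∀ᶠ x in atTop, ((u x ^ 2)⁻¹).re ∈ Ioi (1/2 : ℝ) :=
    hre (Ioi_mem_nhds (by norm_num))
  obtain ⟨M₀, hM₀⟩ := (e1.and e2).exists_forall_of_atTop
  refine ⟨max M₀ 0, le_max_right _ _, ?_⟩
  intro x hx
  obtain ⟨h1, h2⟩ := hM₀ x (le_trans (le_max_left _ _) hx)
  have hE : 0 < Real.exp (κ * x) := Real.exp_pos _
  have hnu := hnormu x
  rw [hnu] at h1
  have hfge : (1/2) * (Real.exp (κ * x))⁻¹ ≤ ‖f x‖ := by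
    calc (1/2) * (Real.exp (κ * x))⁻¹
        ≤ (Real.exp (κ * x) * ‖f x‖) * (Real.exp (κ * x))⁻¹ :=
          mul_le_mul_of_nonneg_right h1.1.le (by positivity)
      _ = ‖f x‖ := by field_simp
  have hfle : ‖f x‖ ≤ 2 * (Real.exp (κ * x))⁻¹ := by
    calc ‖f x‖ = (Real.exp (κ * x) * ‖f x‖) * (Real.exp (κ * x))⁻¹ := by field_simp
      _ ≤ 2 * (Real.exp (κ * x))⁻¹ :=
          mul_le_mul_of_nonneg_right h1.2.le (by positivity)
  have hfne : f x ≠ 0 := by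
    intro h
    have hcontr := h1.1
    rw [h] at hcontr
    norm_num at hcontr
  refine ⟨hfne, hfle, hfge, ?_⟩
  -- Re(1/f x ^ 2) = Re((u x ^2)⁻¹) * exp(κx)^2
  have hexpne : Complex.exp ((κ : ℂ) * x) ≠ 0 := Complex.exp_ne_zero _
  have hcast : Complex.exp ((κ : ℂ) * x) = ((Real.exp (κ * x) : ℝ) : ℂ) := by
    rw [show ((κ : ℂ) * x) = ((κ * x : ℝ) : ℂ) by push_cast; ring, ← Complex.ofReal_exp]
  have hkey : (1 / f x ^ 2) = ((Real.exp (κ * x) ^ 2 : ℝ) : ℂ) * (u x ^ 2)⁻¹ := by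
    rw [hu]
    rw [show (((Real.exp (κ * x) ^ 2 : ℝ)) : ℂ) = Complex.exp ((κ : ℂ) * x) ^ 2 by
      rw [hcast]; push_cast; ring]
    field_simp
  rw [hkey, Complex.re_ofReal_mul]
  have h2' : (1/2 : ℝ) ≤ ((u x ^ 2)⁻¹).re := le_of_lt h2
  nlinarith [sq_nonneg (Real.exp (κ * x))]

lemma wronskian_eq_zero_of_sq_integrable {v : ℝ → ℝ} {κ : ℝ} (hκ : 0 < κ)
    {f f' f'' ψ ψ' ψ'' : ℝ → ℂ}
    (hf : IsSchrodingerSolution v (Complex.I * κ) f f' f'')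
    (hjf : Tendsto (fun x : ℝ => Complex.exp (-Complex.I * (Complex.I * κ) * x) * f x)
      atTop (nhds 1))
    (hψ : IsSchrodingerSolution v (Complex.I * κ) ψ ψ' ψ'')
    (hmem : Integrable (fun x => ‖ψ x‖ ^ 2) volume) :
    f' 0 * ψ 0 - f 0 * ψ' 0 = 0 := by
  by_contra hc0
  set c : ℂ := f' 0 * ψ 0 - f 0 * ψ' 0 with hcdef
  have hcn : 0 < ‖c‖ := norm_pos_iff.2 hc0
  obtain ⟨M, hM0, hM⟩ := jost_plus_bounds hκ hjf
  set q : ℝ → ℂ := fun x => ψ x / f x with hqdef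
  have hq : ∀ x ∈ Ici M, HasDerivAt q (-c / f x ^ 2) x := by
    intro x hx
    have hfx := (hM x hx).1
    have h := (hψ.1 x).div (hf.1 x) hfx
    have hnum : ψ' x * f x - ψ x * f' x = -c := by
      have hw := wronskian_const hf hψ x
      linear_combination -hw
    rw [hnum] at h
    exact h
  set r : ℝ → ℝ := fun x => ((starRingEnd ℂ) c * q x).re with hrdef
  have hr : ∀ x ∈ Ici M, HasDerivAt r (((starRingEnd ℂ) c * (-c / f x ^ 2)).re) x := by
    intro x hx
    have h := (hq x hx).const_mul ((starRingEnd ℂ) c)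
    have h3 := (Complex.reCLM.hasFDerivAt.comp x h.hasFDerivAt).hasDerivAt
    simpa [hrdef, Function.comp_def] using h3
  set A : ℝ := Complex.normSq c with hAdef
  have hA : 0 < A := Complex.normSq_pos.2 hc0
  have hrebound : ∀ x ∈ Ici M,
      ((starRingEnd ℂ) c * (-c / f x ^ 2)).re ≤ -(A/2) * Real.exp (κ * x) ^ 2 := by
    intro x hx
    have h4 := (hM x hx).2.2.2
    have hcc : (starRingEnd ℂ) c * (-c / f x ^ 2) = ((-A : ℝ) : ℂ) * (1 / f x ^ 2) := by
      have h5 : (starRingEnd ℂ) c * c = (A : ℂ) := by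
        rw [mul_comm, Complex.mul_conj]
      calc (starRingEnd ℂ) c * (-c / f x ^ 2)
          = -((starRingEnd ℂ) c * c) * (1 / f x ^ 2) := by ring
        _ = ((-A : ℝ) : ℂ) * (1 / f x ^ 2) := by rw [h5]; push_cast; ring
    rw [hcc, Complex.re_ofReal_mul]
    nlinarith
  have hexp2 : ∀ x : ℝ, Real.exp (2*κ*x) = Real.exp (κ * x) ^ 2 := by
    intro x
    rw [pow_two, ← Real.exp_add]
    congr 1
    ring
  set G : ℝ → ℝ := fun x => -(A/(4*κ)) * Real.exp (2*κ*x) with hGdef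
  have hG : ∀ x : ℝ, HasDerivAt G (-(A/2) * Real.exp (κ * x) ^ 2) x := by
    intro x
    have h : HasDerivAt G (-(A/(4*κ)) * (Real.exp (2*κ*x) * (2*κ*1))) x :=
      (((hasDerivAt_id x).const_mul (2*κ)).exp).const_mul (-(A/(4*κ)))
    convert h using 1
    rw [hexp2]
    field_simp
    ring
  set F : ℝ → ℝ := fun x => G x - r x with hFdef
  have hFd : ∀ x ∈ Ici M, HasDerivAt F
      (-(A/2) * Real.exp (κ * x) ^ 2 - ((starRingEnd ℂ) c * (-c / f x ^ 2)).re) x :=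
    fun x hx => (hG x).sub (hr x hx)
  have hmono : MonotoneOn F (Ici M) := by
    apply monotoneOn_of_deriv_nonneg (convex_Ici M)
    · exact fun x hx => (hFd x hx).continuousAt.continuousWithinAt
    · intro x hx
      rw [interior_Ici] at hx
      exact ((hFd x (mem_Ici.2 (le_of_lt hx))).differentiableAt).differentiableWithinAt
    · intro x hx
      rw [interior_Ici] at hx
      rw [(hFd x (mem_Ici.2 (le_of_lt hx))).deriv]
      have := hrebound x (mem_Ici.2 (le_of_lt hx))
      linarith
  set B : ℝ := r M + (A/(4*κ)) * Real.exp (2*κ*M) with hBdef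
  have hlow : ∀ x ∈ Ici M, (A/(4*κ)) * Real.exp (κ * x) ^ 2 - B ≤ ‖c‖ * ‖q x‖ := by
    intro x hx
    have h5 := hmono (self_mem_Ici (a := M)) hx hx
    have h6 : -(r x) ≤ ‖(starRingEnd ℂ) c * q x‖ := by
      have h6a := Complex.abs_re_le_norm ((starRingEnd ℂ) c * q x)
      simp only [hrdef]
      linarith [abs_le.1 h6a]
    have h8 : ‖(starRingEnd ℂ) c * q x‖ = ‖c‖ * ‖q x‖ := by
      rw [norm_mul, RCLike.norm_conj]
    rw [h8] at h6
    simp only [hFdef, hGdef] at h5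
    rw [hexp2 x] at h5
    linarith
  -- lower bound for ‖c‖ * ‖ψ x‖
  have hψlow : ∀ x ∈ Ici M,
      (A/(8*κ)) * Real.exp (κ * x) - |B| ≤ ‖c‖ * ‖ψ x‖ := by
    intro x hx
    have hfx := (hM x hx).1
    set E : ℝ := Real.exp (κ * x) with hEdef
    have hE : 0 < E := Real.exp_pos _
    have hE1 : (1:ℝ) ≤ E := by
      rw [hEdef, show (1:ℝ) = Real.exp 0 by simp]
      apply Real.exp_le_exp.2
      have hx0 : (0:ℝ) ≤ x := le_trans hM0 hx
      exact mul_nonneg hκ.le hx0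
    have hEinv : E⁻¹ ≤ 1 := by
      rw [inv_le_one_iff₀]
      right; exact hE1
    have hψeq : ψ x = q x * f x := by
      simp only [hqdef]
      field_simp
    have hnq : (1/2) * E⁻¹ * ‖q x‖ ≤ ‖ψ x‖ := by
      rw [hψeq, norm_mul]
      have := (hM x hx).2.2.1
      nlinarith [norm_nonneg (q x)]
    have h9 := hlow x hx
    have hB' : (B * E⁻¹) ≤ |B| := by
      rcases le_or_gt B 0 with h | h
      · have hh : B * E⁻¹ ≤ 0 := mul_nonpos_of_nonpos_of_nonneg h (by positivity)
        linarith [abs_nonneg B]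
      · calc B * E⁻¹ ≤ B * 1 := mul_le_mul_of_nonneg_left hEinv h.le
          _ = B := by ring
          _ ≤ |B| := le_abs_self B
    have s1 : (1/2) * (E⁻¹ * (‖c‖ * ‖q x‖)) ≤ ‖c‖ * ‖ψ x‖ := by
      have hs := mul_le_mul_of_nonneg_left hnq (norm_nonneg c)
      calc (1/2) * (E⁻¹ * (‖c‖ * ‖q x‖)) = ‖c‖ * ((1/2) * E⁻¹ * ‖q x‖) := by ring
        _ ≤ ‖c‖ * ‖ψ x‖ := hs
    have s2 : (1/2) * (E⁻¹ * ((A/(4*κ)) * E ^ 2 - B)) ≤ (1/2) * (E⁻¹ * (‖c‖ * ‖q x‖)) := by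
      apply mul_le_mul_of_nonneg_left _ (by norm_num)
      apply mul_le_mul_of_nonneg_left h9 (le_of_lt (inv_pos.2 hE))
    have s3 : (1/2) * (E⁻¹ * ((A/(4*κ)) * E ^ 2 - B)) = (A/(8*κ)) * E - (1/2) * (B * E⁻¹) := by
      have hEne : E ≠ 0 := ne_of_gt hE
      field_simp
      ring
    have s4 : (A/(8*κ)) * E - |B| ≤ (A/(8*κ)) * E - (1/2) * (B * E⁻¹) := by
      nlinarith [abs_nonneg B]
    linarith
  -- choose N with constant lower bound
  have htend : Tendsto (fun x : ℝ => (A/(8*κ)) * Real.exp (κ * x) - |B|) atTop atTop := by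
    apply tendsto_atTop_add_const_right
    apply Tendsto.const_mul_atTop (by positivity)
    exact Real.tendsto_exp_atTop.comp (Tendsto.const_mul_atTop hκ tendsto_id)
  obtain ⟨N, hN⟩ := (htend.eventually_ge_atTop ‖c‖).exists_forall_of_atTop
  set N' : ℝ := max N M with hN'def
  have hfinal : ∀ x ∈ Ici N', 1 ≤ ‖ψ x‖ ^ 2 := by
    intro x hx
    have hx1 : x ≥ N := le_trans (le_max_left _ _) hx
    have hx2 : x ∈ Ici M := mem_Ici.2 (le_trans (le_max_right _ _) hx)
    have h13 : ‖c‖ ≤ ‖c‖ * ‖ψ x‖ := le_trans (hN x hx1) (hψlow x hx2)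
    have h14 : (1:ℝ) ≤ ‖ψ x‖ := by
      by_contra h15
      push_neg at h15
      nlinarith
    nlinarith
  have hIci : IntegrableOn (fun x => ‖ψ x‖ ^ 2) (Ici N') volume := hmem.integrableOn
  have hone : Integrable (fun _ : ℝ => (1:ℝ)) (volume.restrict (Ici N')) := by
    apply hIci.mono' aestronglyMeasurable_const
    rw [ae_restrict_iff' measurableSet_Ici]
    filter_upwards with x hx
    have := hfinal x hx
    simpa using this
  have hcontr := (integrable_const_iff).1 hone
  simp [Measure.restrict_apply_univ, Real.volume_Ici, isFiniteMeasure_restrict] at hcontr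

lemma reflect_solution {v : ℝ → ℝ} {k : ℂ} {f f' f'' : ℝ → ℂ}
    (h : IsSchrodingerSolution v k f f' f'') :
    IsSchrodingerSolution (fun x => v (-x)) k (fun x => f (-x)) (fun x => -(f' (-x)))
      (fun x => f'' (-x)) := by
  refine ⟨fun x => ?_, fun x => ?_, ?_, fun x => h.2.2.2 (-x)⟩
  · have h1 : HasDerivAt (f ∘ Neg.neg) ((-1 : ℝ) • f' (-x)) x :=
      (h.1 (-x)).scomp x (hasDerivAt_neg x)
    simpa [Function.comp_def] using h1
  · have h1 : HasDerivAt (f' ∘ Neg.neg) ((-1 : ℝ) • f'' (-x)) x :=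
      (h.2.1 (-x)).scomp x (hasDerivAt_neg x)
    have h2 := h1.neg
    simpa [Function.comp_def, Pi.neg_def] using h2
  · exact h.2.2.1.comp continuous_neg

lemma reflect_jost {κ : ℝ} {f f' : ℝ → ℂ}
    (hj : IsJostAtMinusInfinity (Complex.I * κ) f f') :
    Tendsto (fun x : ℝ => Complex.exp (-Complex.I * (Complex.I * κ) * x) * f (-x))
      atTop (nhds 1) := by
  have h := hj.1.comp tendsto_neg_atTop_atBot
  apply h.congr
  intro x
  show Complex.exp (Complex.I * (Complex.I * κ) * ((-x : ℝ) : ℂ)) * f (-x) = _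
  rw [show ((-x : ℝ) : ℂ) = -(x : ℂ) by push_cast; ring,
    show Complex.I * (Complex.I * κ) * (-(x : ℂ)) = -Complex.I * (Complex.I * κ) * (x : ℂ) by ring]

lemma integrableOn_exp_mul_Iic' (b a : ℝ) (hb : 0 < b) :
    IntegrableOn (fun x : ℝ => Real.exp (b * x)) (Iic a) := by
  have h1 : IntegrableOn (fun x : ℝ => Real.exp (-b * x)) (Ioi (-a)) :=
    exp_neg_integrableOn_Ioi (-a) hb
  have h2 : Integrable ((Ioi (-a)).indicator fun x : ℝ => Real.exp (-b * x)) volume :=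
    (integrable_indicator_iff measurableSet_Ioi).2 h1
  have h3 := h2.comp_neg
  have h4 : (fun x : ℝ => (Ioi (-a)).indicator (fun x : ℝ => Real.exp (-b * x)) (-x))
      = (Iio a).indicator fun x : ℝ => Real.exp (b * x) := by
    funext x
    by_cases hx : x < a
    · rw [Set.indicator_of_mem (show -x ∈ Ioi (-a) by simpa using hx),
        Set.indicator_of_mem (show x ∈ Iio a from hx)]
      congr 1
      ring
    · rw [Set.indicator_of_notMem (show -x ∉ Ioi (-a) by simpa using hx),
        Set.indicator_of_notMem (show x ∉ Iio a from hx)]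
  rw [h4] at h3
  have h5 : IntegrableOn (fun x : ℝ => Real.exp (b * x)) (Iio a) :=
    (integrable_indicator_iff measurableSet_Iio).1 h3
  rw [IntegrableOn, Measure.restrict_congr_set Iio_ae_eq_Iic] at h5
  exact h5


/-- for `κ > 0`, `a(iκ) = 0` iff `-κ²` is an eigenvalue of the one-dimensional
Schrödinger operator, i.e. iff there is a nonzero twice continuously differentiable
`ψ ∈ L²(ℝ)` with `-ψ'' + v·ψ = -κ²·ψ`. Here `a(iκ) = W(f₁(·,iκ), f₂(·,iκ))/(2i·(iκ))` is
computed from the Jost solutions via the (x-independent) Wronskian `W(f,g) = f'g - fg'`. -/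
theorem bound_state_iff_a_vanishes
    (v : ℝ → ℝ) (hv : Continuous v)
    (hint : Integrable (fun x : ℝ => (1 + |x|) * |v x|))
    (κ : ℝ) (hκ : 0 < κ)
    (f₁ f₁' f₁'' f₂ f₂' f₂'' : ℝ → ℂ)
    (h1 : IsSchrodingerSolution v (Complex.I * κ) f₁ f₁' f₁'')
    (hj1 : IsJostAtPlusInfinity (Complex.I * κ) f₁ f₁')
    (h2 : IsSchrodingerSolution v (Complex.I * κ) f₂ f₂' f₂'')
    (hj2 : IsJostAtMinusInfinity (Complex.I * κ) f₂ f₂') :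
    (f₁' 0 * f₂ 0 - f₁ 0 * f₂' 0) / (2 * Complex.I * (Complex.I * κ)) = 0 ↔
      ∃ ψ ψ' ψ'' : ℝ → ℂ, IsSchrodingerSolution v (Complex.I * κ) ψ ψ' ψ'' ∧
        MemLp ψ 2 volume ∧ ψ ≠ 0 := by
  have hden : (2 * Complex.I * (Complex.I * κ)) = ((-2 * κ : ℝ) : ℂ) := by
    push_cast
    linear_combination (2 * (κ : ℂ)) * Complex.I_mul_I
  have hdne : (2 * Complex.I * (Complex.I * κ)) ≠ 0 := by
    rw [hden]
    simp only [ne_eq, Complex.ofReal_eq_zero]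
    intro h
    nlinarith
  rw [div_eq_zero_iff]
  simp only [hdne, or_false]
  obtain ⟨M₁, hM₁0, hb₁⟩ := jost_plus_bounds hκ hj1.1
  obtain ⟨M₂, hM₂0, hb₂⟩ := jost_plus_bounds hκ (reflect_jost hj2)
  have hx₁ : f₁ M₁ ≠ 0 := (hb₁ M₁ le_rfl).1
  have hx₂ : f₂ (-M₂) ≠ 0 := (hb₂ M₂ le_rfl).1
  constructor
  · -- a = 0 implies bound state
    intro hW
    have hprop := eq_smul_of_wronskian_zero hv h1 h2 hx₁ hW
    set ccoef : ℂ := f₂ M₁ / f₁ M₁ with hccoef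
    have hcne : ccoef ≠ 0 := by
      intro h0
      apply hx₂
      rw [hprop (-M₂), h0, zero_mul]
    have hcont : Continuous f₁ := continuous_iff_continuousAt.2 fun x => (h1.1 x).continuousAt
    refine ⟨f₁, f₁', f₁'', h1, ?_, ?_⟩
    · rw [memLp_two_iff_integrable_sq_norm hcont.aestronglyMeasurable]
      set N : ℝ := max M₁ M₂ with hN
      have hNM₁ : M₁ ≤ N := le_max_left _ _
      have hNM₂ : M₂ ≤ N := le_max_right _ _
      have hmeas : AEStronglyMeasurable (fun x : ℝ => ‖f₁ x‖ ^ 2) volume :=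
        ((hcont.norm).pow 2).aestronglyMeasurable
      have hIci : IntegrableOn (fun x : ℝ => ‖f₁ x‖ ^ 2) (Ici N) volume := by
        have hg : IntegrableOn (fun x : ℝ => 4 * Real.exp (-(2 * κ) * x)) (Ici N) volume := by
          rw [integrableOn_Ici_iff_integrableOn_Ioi]
          exact (exp_neg_integrableOn_Ioi N (by positivity)).const_mul 4
        apply Integrable.mono' hg (hmeas.restrict)
        rw [ae_restrict_iff' measurableSet_Ici]
        filter_upwards with x hx
        have hx1 : x ≥ M₁ := le_trans hNM₁ hx
        have hbd := (hb₁ x hx1).2.1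
        have hsq : ((Real.exp (κ * x))⁻¹) ^ 2 = Real.exp (-(2 * κ) * x) := by
          rw [← Real.exp_neg, pow_two, ← Real.exp_add]
          congr 1
          ring
        have habs : ‖‖f₁ x‖ ^ 2‖ = ‖f₁ x‖ ^ 2 := by
          rw [Real.norm_eq_abs]
          exact abs_of_nonneg (by positivity)
        rw [habs]
        nlinarith [norm_nonneg (f₁ x), inv_pos.2 (Real.exp_pos (κ * x))]
      have hIic : IntegrableOn (fun x : ℝ => ‖f₁ x‖ ^ 2) (Iic (-N)) volume := by
        have hg : IntegrableOn
            (fun x : ℝ => (4 / ‖ccoef‖ ^ 2) * Real.exp ((2 * κ) * x)) (Iic (-N)) volume :=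
          (integrableOn_exp_mul_Iic' (2 * κ) (-N) (by positivity)).const_mul _
        apply Integrable.mono' hg (hmeas.restrict)
        rw [ae_restrict_iff' measurableSet_Iic]
        filter_upwards with x hx
        have hx2 : -x ≥ M₂ := by
          simp only [mem_Iic] at hx
          linarith
        have hbd := (hb₂ (-x) hx2).2.1
        -- ‖f₂ (-(-x))‖ = ‖f₂ x‖ ≤ 2 * (exp (κ * (-x)))⁻¹
        rw [neg_neg] at hbd
        have hcpos : 0 < ‖ccoef‖ := norm_pos_iff.2 hcne
        have hf1 : ‖f₁ x‖ = ‖f₂ x‖ / ‖ccoef‖ := by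
          rw [hprop x, norm_mul, mul_comm, mul_div_assoc, div_self (ne_of_gt hcpos), mul_one]
        have hexp : (Real.exp (κ * -x))⁻¹ ^ 2 = Real.exp ((2 * κ) * x) := by
          rw [← Real.exp_neg, pow_two, ← Real.exp_add]
          congr 1
          ring
        have habs : ‖‖f₁ x‖ ^ 2‖ = ‖f₁ x‖ ^ 2 := by
          rw [Real.norm_eq_abs]
          exact abs_of_nonneg (by positivity)
        rw [habs, hf1]
        rw [div_pow, div_le_iff₀ (by positivity)]
        calc ‖f₂ x‖ ^ 2 ≤ (2 * (Real.exp (κ * -x))⁻¹) ^ 2 := by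
              nlinarith [norm_nonneg (f₂ x), inv_pos.2 (Real.exp_pos (κ * -x))]
          _ = 4 * Real.exp ((2 * κ) * x) := by rw [mul_pow, ← hexp]; norm_num
          _ = 4 / ‖ccoef‖ ^ 2 * Real.exp (2 * κ * x) * ‖ccoef‖ ^ 2 := by
              field_simp
      have hIcc : IntegrableOn (fun x : ℝ => ‖f₁ x‖ ^ 2) (Icc (-N) N) volume :=
        ((hcont.norm).pow 2).integrableOn_Icc
      have hunion : Iic (-N) ∪ (Icc (-N) N ∪ Ici N) = univ := by
        apply eq_univ_of_forall
        intro x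
        rcases le_total x (-N) with h | h
        · exact Or.inl h
        · rcases le_total x N with h' | h'
          · exact Or.inr (Or.inl ⟨h, h'⟩)
          · exact Or.inr (Or.inr h')
      have htotal := hIic.union (hIcc.union hIci)
      rw [hunion] at htotal
      exact integrableOn_univ.1 htotal
    · intro h0
      exact hx₁ (by simp [h0])
  · -- bound state implies a = 0
    rintro ⟨ψ, ψ', ψ'', hψ, hmem, hne⟩
    have hψc : Continuous ψ := continuous_iff_continuousAt.2 fun x => (hψ.1 x).continuousAt
    have hInt : Integrable (fun x => ‖ψ x‖ ^ 2) volume :=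
      (memLp_two_iff_integrable_sq_norm hψc.aestronglyMeasurable).1 hmem
    have W1 : f₁' 0 * ψ 0 - f₁ 0 * ψ' 0 = 0 :=
      wronskian_eq_zero_of_sq_integrable hκ h1 hj1.1 hψ hInt
    have hIntr : Integrable (fun x => ‖ψ (-x)‖ ^ 2) volume := hInt.comp_neg
    have W2' := wronskian_eq_zero_of_sq_integrable hκ (reflect_solution h2) (reflect_jost hj2)
      (reflect_solution hψ) hIntr
    have W2 : f₂' 0 * ψ 0 - f₂ 0 * ψ' 0 = 0 := by
      simp only [neg_zero] at W2'
      linear_combination -W2'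
    have hpa := eq_smul_of_wronskian_zero hv h1 hψ hx₁ W1
    have hpb := eq_smul_of_wronskian_zero hv h2 hψ hx₂ W2
    set a : ℂ := ψ M₁ / f₁ M₁ with hadef
    set b : ℂ := ψ (-M₂) / f₂ (-M₂) with hbdef
    have hb0 : b ≠ 0 := by
      intro h0
      apply hne
      funext x
      have := hpb x
      rw [h0, zero_mul] at this
      simpa using this
    have hprop2 : ∀ x, f₂ x = (a / b) * f₁ x := by
      intro x
      have e1 := hpa x
      have e2 := hpb x
      field_simp
      linear_combination e1 - e2
    have hder : f₂' 0 = (a / b) * f₁' 0 := by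
      have hfun : f₂ = fun x => (a / b) * f₁ x := funext hprop2
      have hd2 : HasDerivAt f₂ ((a / b) * f₁' 0) 0 := by
        rw [hfun]
        exact (h1.1 0).const_mul (a / b)
      exact HasDerivAt.unique (h2.1 0) hd2
    rw [hprop2 0, hder]
    ring
end

section
/- Let v : ℝ → ℝ be continuous and bounded with |v(x)| ≤ C(1+|x|)^{−3−ε} for some ε > 0, C > 0, and let k satisfy Im k > 0 and a(k) ≠ 0. Then for every continuous compactly supported f : ℝ → ℂ, the function u(x) = −(1/(2ik a(k))) ( f₁(x,k) ∫_{−∞}^{x} f₂(y,k) f(y) dy + f₂(x,k) ∫_{x}^{∞} f₁(y,k) f(y) dy ) is twice continuously differentiable, belongs to L²(ℝ), and satisfies −u'' + v(x)u − k²u = f on ℝ. -/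
open Real Set MeasureTheory Filter Complex

lemma aux_exp_Iic {b : ℝ} (hb : 0 < b) (c : ℝ) :
    IntegrableOn (fun x : ℝ => Real.exp (b * x)) (Iic c) := by
  rw [← (Measure.measurePreserving_neg (volume : Measure ℝ)).integrableOn_comp_preimage
      (Homeomorph.neg ℝ).measurableEmbedding]
  simp only [Function.comp_def, neg_preimage, neg_Iic, mul_neg, ← neg_mul]
  exact Iff.mpr integrableOn_Ici_iff_integrableOn_Ioi (exp_neg_integrableOn_Ioi (-c) hb)

lemma aux_deriv_Iic (g : ℝ → ℂ) (hgc : Continuous g) (hgi : Integrable g) (x : ℝ) :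
    HasDerivAt (fun t => ∫ y in Iic t, g y) (g x) x := by
  have h := intervalIntegral.integral_hasDerivAt_right (a := 0) (b := x)
    hgi.intervalIntegrable hgc.stronglyMeasurable.stronglyMeasurableAtFilter hgc.continuousAt
  apply (h.const_add (∫ y in Iic (0:ℝ), g y)).congr_of_eventuallyEq
  filter_upwards with t
  rw [← intervalIntegral.integral_Iic_sub_Iic hgi.integrableOn hgi.integrableOn]; ring

lemma aux_Ici_eq (g : ℝ → ℂ) (hgi : Integrable g) (t : ℝ) :
    (∫ y in Ici t, g y) = (∫ y, g y) - ∫ y in Iic t, g y := by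
  rw [MeasureTheory.integral_Iic_eq_integral_Iio, eq_sub_iff_add_eq',
    intervalIntegral.integral_Iio_add_Ici hgi.integrableOn hgi.integrableOn]

lemma aux_deriv_Ici (g : ℝ → ℂ) (hgc : Continuous g) (hgi : Integrable g) (x : ℝ) :
    HasDerivAt (fun t => ∫ y in Ici t, g y) (-(g x)) x := by
  have h := (aux_deriv_Iic g hgc hgi x).const_sub (∫ y, g y)
  apply h.congr_of_eventuallyEq
  filter_upwards with t
  exact aux_Ici_eq g hgi t


/-- for `Im k > 0` with `a(k) ≠ 0`, applying the resolvent kernel of the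
one-dimensional Schrödinger operator to a continuous compactly supported `f` gives a twice
continuously differentiable function `u ∈ L²(ℝ)` solving `-u'' + v·u - k²·u = f`. Here
`a(k) = W(f₁(·,k), f₂(·,k))/(2ik)` and
`u(x) = -(1/(2ik a(k))) (f₁(x,k) ∫_{-∞}^x f₂ f + f₂(x,k) ∫_x^∞ f₁ f)`. -/
theorem schrodinger_resolvent_solves
    (v : ℝ → ℝ) (hv : Continuous v)
    (ε C₀ : ℝ) (hε : 0 < ε) (hC₀ : 0 < C₀)
    (hbound : ∀ x : ℝ, |v x| ≤ C₀ * (1 + |x|) ^ (-(3 + ε)))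
    (k : ℂ) (hk : 0 < k.im)
    (f₁ f₁' f₁'' f₂ f₂' f₂'' : ℝ → ℂ)
    (h1 : IsSchrodingerSolution v k f₁ f₁' f₁'')
    (hj1 : IsJostAtPlusInfinity k f₁ f₁')
    (h2 : IsSchrodingerSolution v k f₂ f₂' f₂'')
    (hj2 : IsJostAtMinusInfinity k f₂ f₂')
    (a : ℂ) (hadef : a = (f₁' 0 * f₂ 0 - f₁ 0 * f₂' 0) / (2 * Complex.I * k)) (ha : a ≠ 0)
    (f : ℝ → ℂ) (hf : Continuous f) (hsupp : HasCompactSupport f)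
    (u : ℝ → ℂ)
    (hu : ∀ x : ℝ, u x = -(1 / (2 * Complex.I * k * a)) *
      (f₁ x * (∫ y in Iic x, f₂ y * f y) + f₂ x * (∫ y in Ici x, f₁ y * f y))) :
    ∃ u' u'' : ℝ → ℂ,
      (∀ x : ℝ, HasDerivAt u (u' x) x) ∧ (∀ x : ℝ, HasDerivAt u' (u'' x) x) ∧
      Continuous u'' ∧ MemLp u 2 volume ∧
      (∀ x : ℝ, -(u'' x) + (v x : ℂ) * u x - k ^ 2 * u x = f x) := by
  obtain ⟨hd1, hd1', hc1, ho1⟩ := h1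
  obtain ⟨hd2, hd2', hc2, ho2⟩ := h2
  have hk0 : k ≠ 0 := by
    intro h; rw [h] at hk; simp at hk
  have h2ik : (2 : ℂ) * Complex.I * k ≠ 0 := by
    simp [Complex.I_ne_zero, hk0]
  have h2ika : (2 : ℂ) * Complex.I * k * a ≠ 0 := mul_ne_zero h2ik ha
  set c : ℂ := -(1 / (2 * Complex.I * k * a)) with hc
  have hcf₁ : Continuous f₁ := continuous_iff_continuousAt.mpr fun x => (hd1 x).continuousAt
  have hcf₂ : Continuous f₂ := continuous_iff_continuousAt.mpr fun x => (hd2 x).continuousAt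
  have hcf₁' : Continuous f₁' := continuous_iff_continuousAt.mpr fun x => (hd1' x).continuousAt
  have hcf₂' : Continuous f₂' := continuous_iff_continuousAt.mpr fun x => (hd2' x).continuousAt
  set g₁ : ℝ → ℂ := fun y => f₁ y * f y with hg₁
  set g₂ : ℝ → ℂ := fun y => f₂ y * f y with hg₂
  have hg₁c : Continuous g₁ := hcf₁.mul hf
  have hg₂c : Continuous g₂ := hcf₂.mul hf
  have hg₁i : Integrable g₁ := hg₁c.integrable_of_hasCompactSupport hsupp.mul_left
  have hg₂i : Integrable g₂ := hg₂c.integrable_of_hasCompactSupport hsupp.mul_left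
  set G₂ : ℝ → ℂ := fun x => ∫ y in Iic x, g₂ y with hG₂def
  set G₁ : ℝ → ℂ := fun x => ∫ y in Ici x, g₁ y with hG₁def
  have hG₂ : ∀ x, HasDerivAt G₂ (g₂ x) x := aux_deriv_Iic g₂ hg₂c hg₂i
  have hG₁ : ∀ x, HasDerivAt G₁ (-(g₁ x)) x := aux_deriv_Ici g₁ hg₁c hg₁i
  have hG₂c : Continuous G₂ := continuous_iff_continuousAt.mpr fun x => (hG₂ x).continuousAt
  have hG₁c : Continuous G₁ := continuous_iff_continuousAt.mpr fun x => (hG₁ x).continuousAt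
  have hueq : ∀ x, u x = c * (f₁ x * G₂ x + f₂ x * G₁ x) := fun x => hu x
  -- Wronskian
  have hW : ∀ x, f₁' x * f₂ x - f₁ x * f₂' x = 2 * Complex.I * k * a := by
    have e1 : ∀ x, f₁'' x = (v x : ℂ) * f₁ x - k ^ 2 * f₁ x := fun x => by
      linear_combination - ho1 x
    have e2 : ∀ x, f₂'' x = (v x : ℂ) * f₂ x - k ^ 2 * f₂ x := fun x => by
      linear_combination - ho2 x
    have hWd : ∀ x, HasDerivAt (fun t => f₁' t * f₂ t - f₁ t * f₂' t) 0 x := by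
      intro x
      have h := ((hd1' x).mul (hd2 x)).sub ((hd1 x).mul (hd2' x))
      refine h.congr_deriv ?_
      rw [e1 x, e2 x]; ring
    have hconst := is_const_of_deriv_eq_zero (𝕜 := ℝ)
      (f := fun t => f₁' t * f₂ t - f₁ t * f₂' t)
      (fun x => (hWd x).differentiableAt) (fun x => (hWd x).deriv)
    intro x
    have h0 : f₁' x * f₂ x - f₁ x * f₂' x = f₁' 0 * f₂ 0 - f₁ 0 * f₂' 0 := hconst x 0
    rw [h0, hadef]
    field_simp
  have hcW : ∀ x, c * ((f₁' x * f₂ x - f₁ x * f₂' x) * f x) = -f x := by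
    intro x
    rw [hW x, hc]
    field_simp
  set u' : ℝ → ℂ := fun x => c * (f₁' x * G₂ x + f₂' x * G₁ x) with hu'def
  set u'' : ℝ → ℂ := fun x => c * (f₁'' x * G₂ x + f₂'' x * G₁ x) - f x with hu''def
  have hdu : ∀ x, HasDerivAt u (u' x) x := by
    intro x
    have h := (((hd1 x).mul (hG₂ x)).add ((hd2 x).mul (hG₁ x))).const_mul c
    have h' := h.congr_of_eventuallyEq (Filter.Eventually.of_forall hueq)
    refine h'.congr_deriv ?_
    simp only [hu'def, hg₁, hg₂]
    ring
  have hdu' : ∀ x, HasDerivAt u' (u'' x) x := by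
    intro x
    have h := (((hd1' x).mul (hG₂ x)).add ((hd2' x).mul (hG₁ x))).const_mul c
    refine h.congr_deriv ?_
    have := hcW x
    simp only [hu''def, hg₁, hg₂]
    linear_combination this
  have hc'' : Continuous u'' := (continuous_const.mul
    ((hc1.mul hG₂c).add (hc2.mul hG₁c))).sub hf
  have hsol : ∀ x, -(u'' x) + (v x : ℂ) * u x - k ^ 2 * u x = f x := by
    intro x
    have e1 : f₁'' x = (v x : ℂ) * f₁ x - k ^ 2 * f₁ x := by linear_combination - ho1 x
    have e2 : f₂'' x = (v x : ℂ) * f₂ x - k ^ 2 * f₂ x := by linear_combination - ho2 x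
    rw [hueq x]
    simp only [hu''def]
    rw [e1, e2]
    ring
  refine ⟨u', u'', hdu, hdu', hc'', ?_, hsol⟩
  -- Memℒp
  have hucont : Continuous u := continuous_iff_continuousAt.mpr fun x => (hdu x).continuousAt
  have hexp1 : ∀ x : ℝ, ‖Complex.exp (-Complex.I * k * x)‖ = rexp (k.im * x) := by
    intro x; rw [Complex.norm_exp]; congr 1; simp [Complex.mul_re]
  have hexp2 : ∀ x : ℝ, ‖Complex.exp (Complex.I * k * x)‖ = rexp (-(k.im * x)) := by
    intro x; rw [Complex.norm_exp]; congr 1; simp [Complex.mul_re]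
  have h₁b : ∀ᶠ x : ℝ in atTop, ‖f₁ x‖ ≤ 2 * rexp (-(k.im * x)) := by
    have h := (hj1.1.norm).eventually_le_const (by norm_num : ‖(1:ℂ)‖ < 2)
    filter_upwards [h] with x hx
    rw [norm_mul, hexp1] at hx
    have hp : (0:ℝ) < rexp (k.im * x) := Real.exp_pos _
    calc ‖f₁ x‖ = (rexp (k.im * x) * ‖f₁ x‖) / rexp (k.im * x) := by field_simp
      _ ≤ 2 / rexp (k.im * x) := by gcongr
      _ = 2 * rexp (-(k.im * x)) := by rw [Real.exp_neg]; ring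
  have h₂b : ∀ᶠ x : ℝ in atBot, ‖f₂ x‖ ≤ 2 * rexp (k.im * x) := by
    have h := (hj2.1.norm).eventually_le_const (by norm_num : ‖(1:ℂ)‖ < 2)
    filter_upwards [h] with x hx
    rw [norm_mul, hexp2] at hx
    have hp : (0:ℝ) < rexp (-(k.im * x)) := Real.exp_pos _
    calc ‖f₂ x‖ = (rexp (-(k.im * x)) * ‖f₂ x‖) / rexp (-(k.im * x)) := by field_simp
      _ ≤ 2 / rexp (-(k.im * x)) := by gcongr
      _ = 2 * rexp (k.im * x) := by rw [Real.exp_neg]; field_simp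
  obtain ⟨R, hR⟩ := hsupp.isBounded.subset_closedBall (0 : ℝ)
  have hfz : ∀ y : ℝ, R < |y| → f y = 0 := by
    intro y hy
    apply image_eq_zero_of_notMem_tsupport
    intro hmem
    have := hR hmem
    rw [Metric.mem_closedBall, Real.dist_eq, sub_zero] at this
    linarith
  have hG₁z : ∀ x : ℝ, R < x → G₁ x = 0 := by
    intro x hx
    have heq : EqOn g₁ 0 (Ici x) := by
      intro y hy
      have hy' : R < |y| := lt_of_lt_of_le hx (le_trans hy (le_abs_self y))
      simp [hg₁, hfz y hy']
    show (∫ y in Ici x, g₁ y) = 0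
    rw [setIntegral_congr_fun measurableSet_Ici heq]
    simp
  have hG₂z : ∀ x : ℝ, x < -R → G₂ x = 0 := by
    intro x hx
    have heq : EqOn g₂ 0 (Iic x) := by
      intro y hy
      have hy' : R < |y| := by
        have : R < -y := by
          have : y ≤ x := hy
          linarith
        exact lt_of_lt_of_le this (neg_le_abs y)
      simp [hg₂, hfz y hy']
    show (∫ y in Iic x, g₂ y) = 0
    rw [setIntegral_congr_fun measurableSet_Iic heq]
    simp
  set B₂ : ℝ := ∫ y, ‖g₂ y‖ with hB₂def
  set B₁ : ℝ := ∫ y, ‖g₁ y‖ with hB₁def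
  have hB₂ : ∀ x, ‖G₂ x‖ ≤ B₂ := fun x => le_trans (norm_integral_le_integral_norm _)
    (setIntegral_le_integral hg₂i.norm (ae_of_all _ fun y => norm_nonneg _))
  have hB₁ : ∀ x, ‖G₁ x‖ ≤ B₁ := fun x => le_trans (norm_integral_le_integral_norm _)
    (setIntegral_le_integral hg₁i.norm (ae_of_all _ fun y => norm_nonneg _))
  have htop : ∀ᶠ x : ℝ in atTop, ‖u x‖ ≤ (2 * ‖c‖ * B₂) * rexp (-(k.im * x)) := by
    filter_upwards [h₁b, eventually_gt_atTop R] with x hx hxR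
    rw [hueq x, hG₁z x hxR]
    have hnn : ‖c * (f₁ x * G₂ x + f₂ x * 0)‖ = ‖c‖ * (‖f₁ x‖ * ‖G₂ x‖) := by
      rw [mul_zero, add_zero, norm_mul, norm_mul]
    rw [hnn]
    calc ‖c‖ * (‖f₁ x‖ * ‖G₂ x‖) ≤ ‖c‖ * ((2 * rexp (-(k.im * x))) * B₂) :=
          mul_le_mul_of_nonneg_left
            (mul_le_mul hx (hB₂ x) (norm_nonneg _) (by positivity)) (norm_nonneg _)
      _ = (2 * ‖c‖ * B₂) * rexp (-(k.im * x)) := by ring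
  have hbot : ∀ᶠ x : ℝ in atBot, ‖u x‖ ≤ (2 * ‖c‖ * B₁) * rexp (k.im * x) := by
    filter_upwards [h₂b, eventually_lt_atBot (-R)] with x hx hxR
    rw [hueq x, hG₂z x hxR]
    have hnn : ‖c * (f₁ x * 0 + f₂ x * G₁ x)‖ = ‖c‖ * (‖f₂ x‖ * ‖G₁ x‖) := by
      rw [mul_zero, zero_add, norm_mul, norm_mul]
    rw [hnn]
    calc ‖c‖ * (‖f₂ x‖ * ‖G₁ x‖) ≤ ‖c‖ * ((2 * rexp (k.im * x)) * B₁) :=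
          mul_le_mul_of_nonneg_left
            (mul_le_mul hx (hB₁ x) (norm_nonneg _) (by positivity)) (norm_nonneg _)
      _ = (2 * ‖c‖ * B₁) * rexp (k.im * x) := by ring
  obtain ⟨X, hX⟩ := eventually_atTop.mp htop
  obtain ⟨Y₀, hY₀⟩ := eventually_atBot.mp hbot
  set Y : ℝ := min Y₀ X with hYdef
  have hY : ∀ x ≤ Y, ‖u x‖ ≤ (2 * ‖c‖ * B₁) * rexp (k.im * x) :=
    fun x hx => hY₀ x (hx.trans (min_le_left _ _))
  have him : (0:ℝ) < 2 * k.im := by linarith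
  have hsq : Integrable (fun x : ℝ => ‖u x‖ ^ 2) := by
    have hmeas : AEStronglyMeasurable (fun x : ℝ => ‖u x‖ ^ 2) volume :=
      ((hucont.norm.pow 2)).aestronglyMeasurable
    rw [← integrableOn_univ]
    have hcov : (univ : Set ℝ) = Iic Y ∪ (Icc Y X ∪ Ici X) := by
      ext x
      simp only [mem_univ, mem_union, mem_Iic, mem_Icc, mem_Ici, true_iff]
      rcases le_total x Y with h | h
      · exact Or.inl h
      · rcases le_total x X with h' | h'
        · exact Or.inr (Or.inl ⟨h, h'⟩)
        · exact Or.inr (Or.inr h')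
    rw [hcov, integrableOn_union, integrableOn_union]
    refine ⟨?_, ?_, ?_⟩
    · apply Integrable.mono' ((aux_exp_Iic him Y).const_mul ((2 * ‖c‖ * B₁) ^ 2))
        hmeas.restrict
      refine (ae_restrict_iff' measurableSet_Iic).2 (ae_of_all _ fun x hx => ?_)
      rw [norm_of_nonneg (by positivity)]
      calc ‖u x‖ ^ 2 ≤ ((2 * ‖c‖ * B₁) * rexp (k.im * x)) ^ 2 :=
            pow_le_pow_left₀ (norm_nonneg _) (hY x hx) 2
        _ = (2 * ‖c‖ * B₁) ^ 2 * rexp (2 * k.im * x) := by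
            rw [mul_pow, sq (rexp _), ← Real.exp_add]
            congr 2
            ring
    · exact (hucont.norm.pow 2).continuousOn.integrableOn_compact isCompact_Icc
    · rw [integrableOn_Ici_iff_integrableOn_Ioi]
      apply Integrable.mono' ((exp_neg_integrableOn_Ioi X him).const_mul ((2 * ‖c‖ * B₂) ^ 2))
        hmeas.restrict
      refine (ae_restrict_iff' measurableSet_Ioi).2 (ae_of_all _ fun x hx => ?_)
      rw [norm_of_nonneg (by positivity)]
      calc ‖u x‖ ^ 2 ≤ ((2 * ‖c‖ * B₂) * rexp (-(k.im * x))) ^ 2 :=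
            pow_le_pow_left₀ (norm_nonneg _) (hX x (le_of_lt hx)) 2
        _ = (2 * ‖c‖ * B₂) ^ 2 * rexp (-(2 * k.im) * x) := by
            rw [mul_pow, sq (rexp _), ← Real.exp_add]
            congr 2
            ring
  exact (memLp_two_iff_integrable_sq_norm hucont.aestronglyMeasurable).2 hsq
end

section
/- For u > 0 and s ∈ ℂ with σ = Re s > 0, define φ(u,s) = (1/(4π)) ∫₀¹ [t(1−t)]^{s−1} (t+u)^{−s} dt. Then for each fixed such s: (i) φ(u,s) = −(1/(4π)) log u + O(1) as u → 0⁺, i.e. there exist C > 0 and δ > 0 such that |φ(u,s) + (1/(4π)) log u| ≤ C for all 0 < u < δ; and (ii) φ(u,s) = O(u^{−σ}) as u → ∞, i.e. there exist C > 0 and M > 0 such that |φ(u,s)| ≤ C u^{−σ} for all u ≥ M. -/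
open Real MeasureTheory intervalIntegral

/-- The integral kernel `φ(u,s) = (1/(4π)) ∫₀¹ [t(1-t)]^{s-1} (t+u)^{-s} dt` of the resolvent
`(A₀ - s(1-s)I)⁻¹` of the hyperbolic Laplace operator on the upper half-plane, as a function of
the point-pair invariant `u`. -/
noncomputable def resolventKernelPhi (u : ℝ) (s : ℂ) : ℂ :=
  (1 / (4 * (π : ℂ))) *
    ∫ t in (0:ℝ)..1, ((t * (1 - t) : ℝ) : ℂ) ^ (s - 1) * (((t + u : ℝ)) : ℂ) ^ (-s)


lemma norm_ofReal_cpow_le {x : ℝ} (hx : 0 ≤ x) (z : ℂ) : ‖((x : ℝ) : ℂ) ^ z‖ ≤ x ^ z.re := by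
  rcases eq_or_lt_of_le hx with h | h
  · rcases eq_or_ne z 0 with rfl | hz
    · simp
    · rw [← h]; simp [Complex.zero_cpow hz, Real.rpow_natCast]
      positivity
  · rw [Complex.norm_cpow_eq_rpow_re_of_pos h]

lemma norm_exp_sub_one_le' (z : ℂ) : ‖Complex.exp z - 1‖ ≤ 2 * ‖z‖ * Real.exp ‖z‖ := by
  rcases le_or_gt ‖z‖ 1 with h | h
  · calc ‖Complex.exp z - 1‖ ≤ 2 * ‖z‖ := by
          simpa using Complex.norm_exp_sub_one_le (by simpa using h)
      _ ≤ 2 * ‖z‖ * Real.exp ‖z‖ := by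
          nlinarith [Real.one_le_exp (norm_nonneg z), norm_nonneg z]
  · have h1 : ‖Complex.exp z‖ ≤ Real.exp ‖z‖ := by
      rw [Complex.norm_exp]
      exact Real.exp_le_exp.2 ((Complex.re_le_norm z).trans le_rfl)
    calc ‖Complex.exp z - 1‖ ≤ ‖Complex.exp z‖ + 1 := by
          simpa using norm_sub_le (Complex.exp z) 1
      _ ≤ 2 * Real.exp ‖z‖ := by nlinarith [Real.one_le_exp (norm_nonneg z)]
      _ ≤ 2 * ‖z‖ * Real.exp ‖z‖ := by nlinarith [Real.exp_pos ‖z‖]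


lemma kernel_integrable {s : ℂ} (hs : 0 < s.re) {u : ℝ} (hu : 0 < u) :
    IntervalIntegrable (fun t : ℝ => ((t * (1 - t) : ℝ) : ℂ) ^ (s - 1) * (((t + u : ℝ)) : ℂ) ^ (-s))
      volume 0 1 := by
  have hbeta := Complex.betaIntegral_convergent hs hs
  have hcont : ContinuousOn (fun t : ℝ => (((t + u : ℝ)) : ℂ) ^ (-s)) (Set.uIcc 0 1) := by
    intro t ht
    rw [Set.uIcc_of_le (by norm_num : (0:ℝ) ≤ 1)] at ht
    have htu : 0 < t + u := by linarith [ht.1]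
    apply ContinuousAt.continuousWithinAt
    apply ContinuousAt.cpow
    · exact (Complex.continuous_ofReal.comp (continuous_id.add continuous_const)).continuousAt
    · exact continuousAt_const
    · exact Complex.ofReal_mem_slitPlane.2 htu
  have h1 : IntervalIntegrable
      (fun t : ℝ => ((t:ℂ) ^ (s-1) * (1 - (t:ℂ)) ^ (s-1)) * (((t + u : ℝ)) : ℂ) ^ (-s)) volume 0 1 :=
    hbeta.mul_continuousOn hcont
  apply h1.congr_ae
  rw [Filter.EventuallyEq, ae_restrict_iff' measurableSet_uIoc]
  filter_upwards with t ht
  rw [Set.uIoc_of_le (by norm_num : (0:ℝ) ≤ 1)] at ht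
  have h2 : ((t * (1 - t) : ℝ) : ℂ) ^ (s - 1) = ((t:ℝ):ℂ) ^ (s-1) * (((1 - t : ℝ)):ℂ) ^ (s-1) := by
    rw [Complex.ofReal_mul]
    exact Complex.mul_cpow_ofReal_nonneg (a := t) (b := 1 - t) ht.1.le (by linarith [ht.2]) (s-1)
  rw [h2]
  push_cast
  ring

lemma real_beta_integrable {s : ℂ} (hs : 0 < s.re) :
    IntervalIntegrable (fun t : ℝ => (t * (1 - t)) ^ (s.re - 1)) volume 0 1 := by
  apply (Complex.betaIntegral_convergent hs hs).norm.congr_ae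
  rw [Filter.EventuallyEq, ae_restrict_iff' measurableSet_uIoc]
  have h1 : ∀ᵐ t : ℝ ∂volume, t ≠ 1 := by
    rw [MeasureTheory.ae_iff]
    simpa using Real.volume_singleton
  filter_upwards [h1] with t hne ht
  rw [Set.uIoc_of_le (by norm_num : (0:ℝ) ≤ 1)] at ht
  have ht0 : 0 < t := ht.1
  have ht1 : t < 1 := lt_of_le_of_ne ht.2 hne
  rw [norm_mul]
  have e1 : (1 - (t:ℂ)) = (((1 - t : ℝ)) : ℂ) := by push_cast; ring
  rw [e1, Complex.norm_cpow_eq_rpow_re_of_pos ht0, Complex.norm_cpow_eq_rpow_re_of_pos (by linarith),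
    ← Real.mul_rpow ht0.le (by linarith)]
  simp

lemma phi_const_norm : ‖(1 / (4 * (π : ℂ)))‖ = 1 / (4 * π) := by
  rw [norm_div, norm_one, norm_mul]
  simp [Complex.norm_real, abs_of_pos Real.pi_pos]


lemma Jval {u : ℝ} (hu : 0 < u) :
    (∫ t in (0:ℝ)..1, (((t + u : ℝ)):ℂ)⁻¹) = ((Real.log (1+u) - Real.log u : ℝ) : ℂ) := by
  have h1 : (∫ t in (0:ℝ)..1, (((t + u : ℝ)):ℂ)⁻¹)
      = ((∫ t in (0:ℝ)..1, (t + u)⁻¹ : ℝ) : ℂ) := by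
    rw [← intervalIntegral.integral_ofReal]
    congr 1; ext t; push_cast; ring
  rw [h1]
  have h2 : (∫ t in (0:ℝ)..1, (t + u)⁻¹ : ℝ) = ∫ x in u..(1+u), x⁻¹ := by
    have := intervalIntegral.integral_comp_add_right (a := (0:ℝ)) (b := 1) (fun x : ℝ => x⁻¹) u
    simpa using this
  rw [h2, integral_inv (by rw [Set.uIcc_of_le (by linarith)]; intro h; exact absurd h.1 (by linarith)),
    Real.log_div (by linarith) (by linarith)]


lemma cpow_exp_repr {x : ℝ} (hx : 0 < x) (z : ℂ) :
    ((x : ℝ) : ℂ) ^ z = Complex.exp ((Real.log x : ℂ) * z) := by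
  rw [Complex.cpow_def_of_ne_zero (by exact_mod_cast hx.ne'), Complex.ofReal_log hx.le]

lemma inv_exp_repr {x : ℝ} (hx : 0 < x) :
    ((x : ℝ) : ℂ)⁻¹ = Complex.exp (-(Real.log x : ℂ)) := by
  rw [Complex.exp_neg]
  congr 1
  rw [← Complex.ofReal_exp, Real.exp_log hx]

lemma D_repr {s : ℂ} {t u : ℝ} (ht : 0 < t) (ht1 : t < 1) (hu : 0 < u) :
    ((t * (1 - t) : ℝ) : ℂ) ^ (s - 1) * (((t + u : ℝ)) : ℂ) ^ (-s) - (((t + u : ℝ)) : ℂ)⁻¹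
    = (((t + u : ℝ)) : ℂ)⁻¹ *
      (Complex.exp ((s - 1) * (Real.log (1 - t) : ℂ)
        + (s - 1) * ((Real.log t : ℂ) - (Real.log (t + u) : ℂ))) - 1) := by
  have htu : 0 < t + u := by linarith
  have hmul : 0 < t * (1 - t) := by nlinarith
  have hr : ∀ L Z : ℂ, Complex.exp L * (Complex.exp Z - 1)
      = Complex.exp (L + Z) - Complex.exp L := by
    intro L Z; rw [Complex.exp_add]; ring
  rw [cpow_exp_repr hmul, cpow_exp_repr htu, inv_exp_repr htu, ← Complex.exp_add, hr]
  congr 2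
  rw [Real.log_mul ht.ne' (by linarith)]
  push_cast
  ring

lemma regionB_bound {s : ℂ} {t u : ℝ} (hu : 0 < u) (hut : u ≤ t) (ht : t ≤ 1/2) :
    ‖((t * (1 - t) : ℝ) : ℂ) ^ (s - 1) * (((t + u : ℝ)) : ℂ) ^ (-s) - (((t + u : ℝ)) : ℂ)⁻¹‖
    ≤ 4 * ‖s - 1‖ * Real.exp ‖s - 1‖ * Real.exp ‖s - 1‖
      + 2 * ‖s - 1‖ * Real.exp ‖s - 1‖ * (u * (t:ℝ) ^ (-2 : ℤ)) := by
  set W := ‖s - 1‖ with hW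
  have hW0 : 0 ≤ W := norm_nonneg _
  have ht0 : 0 < t := lt_of_lt_of_le hu hut
  have ht1 : t < 1 := by linarith
  have htu : 0 < t + u := by linarith
  set z₁ := (s - 1) * (Real.log (1 - t) : ℂ) with hz1def
  set z₂ := (s - 1) * ((Real.log t : ℂ) - (Real.log (t + u) : ℂ)) with hz2def
  -- norms of z₁, z₂
  have hz1 : ‖z₁‖ ≤ W * (2 * t) := by
    rw [hz1def, norm_mul]
    apply mul_le_mul_of_nonneg_left _ hW0
    rw [Complex.norm_real, Real.norm_eq_abs,
      abs_of_nonpos (Real.log_nonpos (by linarith) (by linarith))]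
    have h2 : -Real.log (1 - t) = Real.log (1 - t)⁻¹ := (Real.log_inv _).symm
    rw [h2]
    have h3 : Real.log (1 - t)⁻¹ ≤ (1 - t)⁻¹ - 1 :=
      Real.log_le_sub_one_of_pos (inv_pos.2 (by linarith))
    have h4 : (1 - t)⁻¹ - 1 = t / (1 - t) := by
      rw [inv_eq_one_div, div_sub' (by linarith : (1:ℝ) - t ≠ 0)]
      ring_nf
    have h5 : t / (1 - t) ≤ 2 * t := by
      rw [div_le_iff₀ (by linarith)]
      nlinarith
    linarith
  have hz1' : ‖z₁‖ ≤ W := by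
    calc ‖z₁‖ ≤ W * (2 * t) := hz1
      _ ≤ W * 1 := by nlinarith
      _ = W := mul_one W
  have hz2 : ‖z₂‖ ≤ W * (u / t) := by
    rw [hz2def, norm_mul]
    apply mul_le_mul_of_nonneg_left _ hW0
    have e1 : (Real.log t : ℂ) - (Real.log (t + u) : ℂ) = ((Real.log t - Real.log (t + u) : ℝ) : ℂ) := by
      push_cast; ring
    rw [e1, Complex.norm_real, Real.norm_eq_abs]
    have h5 : Real.log t - Real.log (t + u) = -(Real.log ((t + u) / t)) := by
      rw [Real.log_div htu.ne' ht0.ne']; ring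
    rw [h5, abs_neg, abs_of_nonneg (Real.log_nonneg (by rw [le_div_iff₀ ht0]; linarith))]
    have h6 : Real.log ((t + u) / t) ≤ (t + u) / t - 1 :=
      Real.log_le_sub_one_of_pos (by positivity)
    have h7 : (t + u) / t - 1 = u / t := by field_simp; ring
    linarith
  have hz2' : ‖z₂‖ ≤ W := by
    calc ‖z₂‖ ≤ W * (u / t) := hz2
      _ ≤ W * 1 := by
          apply mul_le_mul_of_nonneg_left _ hW0
          rw [div_le_one ht0]; linarith
      _ = W := mul_one W
  -- main assembly
  rw [D_repr ht0 ht1 hu]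
  have hsplit : Complex.exp (z₁ + z₂) - 1
      = Complex.exp z₂ * (Complex.exp z₁ - 1) + (Complex.exp z₂ - 1) := by
    rw [Complex.exp_add]; ring
  rw [norm_mul, hsplit]
  have hinv : ‖(((t + u : ℝ)) : ℂ)⁻¹‖ ≤ t⁻¹ := by
    rw [norm_inv, Complex.norm_real, Real.norm_eq_abs, abs_of_pos htu]
    exact inv_anti₀ ht0 (by linarith)
  have hez2 : ‖Complex.exp z₂‖ ≤ Real.exp W := by
    rw [Complex.norm_exp]
    exact Real.exp_le_exp.2 ((Complex.re_le_norm z₂).trans hz2')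
  have h8 : ‖Complex.exp z₁ - 1‖ ≤ 2 * (W * (2 * t)) * Real.exp W := by
    calc ‖Complex.exp z₁ - 1‖ ≤ 2 * ‖z₁‖ * Real.exp ‖z₁‖ := norm_exp_sub_one_le' z₁
      _ ≤ 2 * (W * (2 * t)) * Real.exp W := by
          apply mul_le_mul (by linarith) (Real.exp_le_exp.2 hz1') (Real.exp_pos _).le
          positivity
  have h9 : ‖Complex.exp z₂ - 1‖ ≤ 2 * (W * (u / t)) * Real.exp W := by
    calc ‖Complex.exp z₂ - 1‖ ≤ 2 * ‖z₂‖ * Real.exp ‖z₂‖ := norm_exp_sub_one_le' z₂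
      _ ≤ 2 * (W * (u / t)) * Real.exp W := by
          apply mul_le_mul (by linarith) (Real.exp_le_exp.2 hz2') (Real.exp_pos _).le
          positivity
  have h10 : ‖Complex.exp z₂ * (Complex.exp z₁ - 1) + (Complex.exp z₂ - 1)‖
      ≤ Real.exp W * (2 * (W * (2 * t)) * Real.exp W) + 2 * (W * (u / t)) * Real.exp W := by
    calc ‖Complex.exp z₂ * (Complex.exp z₁ - 1) + (Complex.exp z₂ - 1)‖
        ≤ ‖Complex.exp z₂‖ * ‖Complex.exp z₁ - 1‖ + ‖Complex.exp z₂ - 1‖ := by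
          refine (norm_add_le _ _).trans ?_
          rw [norm_mul]
      _ ≤ Real.exp W * (2 * (W * (2 * t)) * Real.exp W) + 2 * (W * (u / t)) * Real.exp W := by
          have hm := mul_le_mul hez2 h8 (norm_nonneg _)
            (Real.exp_pos W).le
          linarith
  calc ‖(((t + u : ℝ)) : ℂ)⁻¹‖ * ‖Complex.exp z₂ * (Complex.exp z₁ - 1) + (Complex.exp z₂ - 1)‖
      ≤ t⁻¹ * (Real.exp W * (2 * (W * (2 * t)) * Real.exp W) + 2 * (W * (u / t)) * Real.exp W) := by
        apply mul_le_mul hinv h10 (norm_nonneg _) (by positivity)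
    _ = 4 * W * Real.exp W * Real.exp W + 2 * W * Real.exp W * (u * (t:ℝ) ^ (-2 : ℤ)) := by
        have h2 : (t:ℝ) ^ (-2 : ℤ) = (t⁻¹) * t⁻¹ := by
          rw [zpow_neg, zpow_two, mul_inv]
        rw [h2]
        field_simp
        ring

set_option maxHeartbeats 2000000 in
lemma part_one {s : ℂ} (hs : 0 < s.re) :
    ∃ C : ℝ, 0 < C ∧ ∃ δ : ℝ, 0 < δ ∧ ∀ u : ℝ, 0 < u → u < δ →
      ‖resolventKernelPhi u s + (((1 / (4 * π)) * Real.log u : ℝ) : ℂ)‖ ≤ C := by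
  have hπ := Real.pi_pos
  set W : ℝ := ‖s - 1‖ with hWdef
  have hW0 : 0 ≤ W := norm_nonneg _
  have heW : 0 < Real.exp W := Real.exp_pos _
  set K : ℝ := max 1 ((1/2 : ℝ) ^ (s.re - 1)) with hKdef
  have hK0 : 0 < K := lt_of_lt_of_le one_pos (le_max_left _ _)
  have hKb : ∀ x : ℝ, 1/2 ≤ x → x ≤ 1 → x ^ (s.re - 1) ≤ K := by
    intro x hx hx1
    rcases le_or_gt 1 s.re with h | h
    · exact le_trans (Real.rpow_le_one (by linarith) hx1 (by linarith)) (le_max_left _ _)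
    · exact le_trans (Real.rpow_le_rpow_of_nonpos (by norm_num) hx (by linarith)) (le_max_right _ _)
  set CA : ℝ := K / s.re + 1 with hCAdef
  set CB : ℝ := 4 * W * Real.exp W * Real.exp W * (1/2) + 2 * W * Real.exp W with hCBdef
  set CC : ℝ := K * ((1/2:ℝ) ^ (-s.re)) * ((1/2:ℝ) ^ s.re / s.re) + 1 with hCCdef
  have hCA : 0 < CA := by positivity
  have hCB : 0 ≤ CB := by positivity
  have hCC : 0 < CC := by positivity
  refine ⟨1/(4*π) * (CA + CB + CC + 1) + 1, by positivity, 1/2, by norm_num, fun u hu hu2 => ?_⟩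
  have hu2' : u ≤ 1/2 := le_of_lt hu2
  -- integrability
  have hf : IntervalIntegrable
      (fun t : ℝ => ((t * (1 - t) : ℝ) : ℂ) ^ (s - 1) * (((t + u : ℝ)) : ℂ) ^ (-s)) volume 0 1 :=
    kernel_integrable hs hu
  have hg : IntervalIntegrable (fun t : ℝ => (((t + u : ℝ)) : ℂ)⁻¹) volume 0 1 := by
    apply ContinuousOn.intervalIntegrable
    apply ContinuousOn.inv₀
    · exact (Complex.continuous_ofReal.comp (continuous_id.add continuous_const)).continuousOn
    · intro t ht
      rw [Set.uIcc_of_le (by norm_num : (0:ℝ) ≤ 1)] at ht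
      exact Complex.ofReal_ne_zero.2 (by linarith [ht.1] : t + u ≠ 0)
  have hD := hf.sub hg
  have hDn := hD.norm
  have hsub1 : Set.uIcc (0:ℝ) u ⊆ Set.uIcc (0:ℝ) 1 := by
    rw [Set.uIcc_of_le hu.le, Set.uIcc_of_le (by norm_num : (0:ℝ) ≤ 1)]
    exact Set.Icc_subset_Icc le_rfl (by linarith)
  have hsub2 : Set.uIcc u (1/2:ℝ) ⊆ Set.uIcc (0:ℝ) 1 := by
    rw [Set.uIcc_of_le hu2', Set.uIcc_of_le (by norm_num : (0:ℝ) ≤ 1)]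
    exact Set.Icc_subset_Icc hu.le (by norm_num)
  have hsub3 : Set.uIcc (1/2:ℝ) 1 ⊆ Set.uIcc (0:ℝ) 1 := by
    rw [Set.uIcc_of_le (by norm_num : (1/2:ℝ) ≤ 1), Set.uIcc_of_le (by norm_num : (0:ℝ) ≤ 1)]
    exact Set.Icc_subset_Icc (by norm_num) le_rfl
  have hsub4 : Set.uIcc (0:ℝ) (1/2:ℝ) ⊆ Set.uIcc (0:ℝ) 1 := by
    rw [Set.uIcc_of_le (by norm_num : (0:ℝ) ≤ 1/2), Set.uIcc_of_le (by norm_num : (0:ℝ) ≤ 1)]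
    exact Set.Icc_subset_Icc le_rfl (by norm_num)
  have hDnA := hDn.mono_set hsub1
  have hDnB := hDn.mono_set hsub2
  have hDnC := hDn.mono_set hsub3
  have hDnAB := hDn.mono_set hsub4
  -- splitting
  have e1 := intervalIntegral.integral_add_adjacent_intervals hDnA hDnB
  have e2 := intervalIntegral.integral_add_adjacent_intervals hDnAB hDnC
  -- Region A
  have hgAint : IntervalIntegrable
      (fun t : ℝ => K * u ^ (-s.re) * t ^ (s.re - 1) + u⁻¹) volume 0 u :=
    ((intervalIntegrable_rpow' (by linarith)).const_mul _).add intervalIntegrable_const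
  have hA : (∫ t in (0:ℝ)..u,
      ‖((t * (1 - t) : ℝ) : ℂ) ^ (s - 1) * (((t + u : ℝ)) : ℂ) ^ (-s) - (((t + u : ℝ)) : ℂ)⁻¹‖)
      ≤ CA := by
    have step : (∫ t in (0:ℝ)..u,
        ‖((t * (1 - t) : ℝ) : ℂ) ^ (s - 1) * (((t + u : ℝ)) : ℂ) ^ (-s) - (((t + u : ℝ)) : ℂ)⁻¹‖)
        ≤ ∫ t in (0:ℝ)..u, (K * u ^ (-s.re) * t ^ (s.re - 1) + u⁻¹) := by
      apply intervalIntegral.integral_mono_on hu.le hDnA hgAint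
      intro t ht
      have ht0 : 0 ≤ t := ht.1
      have htu : t ≤ u := ht.2
      have ht1 : t ≤ 1/2 := le_trans htu hu2'
      have b1 : ‖((t * (1 - t) : ℝ) : ℂ) ^ (s - 1)‖ ≤ (t * (1 - t)) ^ (s.re - 1) := by
        have := norm_ofReal_cpow_le (x := t * (1 - t)) (by nlinarith) (s - 1)
        simpa using this
      have b2 : ‖(((t + u : ℝ)) : ℂ) ^ (-s)‖ ≤ u ^ (-s.re) := by
        have h1 := norm_ofReal_cpow_le (x := t + u) (by linarith) (-s)
        have h2 : (t + u) ^ ((-s).re) ≤ u ^ (-s.re) := by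
          rw [Complex.neg_re]
          exact Real.rpow_le_rpow_of_nonpos hu (by linarith) (by linarith)
        exact h1.trans h2
      have b3 : (t * (1 - t)) ^ (s.re - 1) ≤ K * t ^ (s.re - 1) := by
        rw [Real.mul_rpow ht0 (by linarith)]
        calc t ^ (s.re - 1) * (1 - t) ^ (s.re - 1)
            ≤ t ^ (s.re - 1) * K := by
              apply mul_le_mul_of_nonneg_left (hKb (1 - t) (by linarith) (by linarith))
                (Real.rpow_nonneg ht0 _)
          _ = K * t ^ (s.re - 1) := by ring
      have b4 : ‖(((t + u : ℝ)) : ℂ)⁻¹‖ ≤ u⁻¹ := by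
        rw [norm_inv, Complex.norm_real, Real.norm_eq_abs, abs_of_pos (by linarith)]
        exact inv_anti₀ hu (by linarith)
      calc ‖((t * (1 - t) : ℝ) : ℂ) ^ (s - 1) * (((t + u : ℝ)) : ℂ) ^ (-s) - (((t + u : ℝ)) : ℂ)⁻¹‖
          ≤ ‖((t * (1 - t) : ℝ) : ℂ) ^ (s - 1) * (((t + u : ℝ)) : ℂ) ^ (-s)‖
            + ‖(((t + u : ℝ)) : ℂ)⁻¹‖ := norm_sub_le _ _
        _ ≤ (t * (1 - t)) ^ (s.re - 1) * (u ^ (-s.re)) + u⁻¹ := by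
            rw [norm_mul]
            have := mul_le_mul b1 b2 (norm_nonneg _) (Real.rpow_nonneg (by nlinarith) _)
            linarith
        _ ≤ K * t ^ (s.re - 1) * (u ^ (-s.re)) + u⁻¹ := by
            have := mul_le_mul_of_nonneg_right b3 (Real.rpow_nonneg hu.le (-s.re))
            linarith
        _ = K * u ^ (-s.re) * t ^ (s.re - 1) + u⁻¹ := by ring
    refine step.trans ?_
    rw [intervalIntegral.integral_add ((intervalIntegrable_rpow' (by linarith)).const_mul _)
      intervalIntegrable_const, intervalIntegral.integral_const_mul,
      integral_rpow (Or.inl (by linarith : (-1:ℝ) < s.re - 1)), intervalIntegral.integral_const]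
    have hexp : s.re - 1 + 1 = s.re := by ring
    rw [hexp, Real.zero_rpow hs.ne', smul_eq_mul]
    have hup : u ^ (-s.re) * u ^ s.re = 1 := by
      rw [← Real.rpow_add hu]; simp
    have huinv : (u - 0) * u⁻¹ = 1 := by
      rw [sub_zero, mul_inv_cancel₀ hu.ne']
    rw [hCAdef]
    have heq : K * u ^ (-s.re) * ((u ^ s.re - 0) / s.re) = K / s.re := by
      rw [sub_zero, mul_assoc, ← mul_div_assoc, hup, mul_one_div]
    rw [heq, huinv]
  -- Region B
  have hgBint : IntervalIntegrable
      (fun t : ℝ => 4 * W * Real.exp W * Real.exp W + 2 * W * Real.exp W * (u * (t:ℝ) ^ (-2 : ℤ)))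
      volume u (1/2) := by
    have hz : IntervalIntegrable (fun t : ℝ => (t:ℝ) ^ (-2 : ℤ)) volume u (1/2) := by
      apply intervalIntegrable_zpow
      right
      rw [Set.uIcc_of_le hu2']
      intro h
      linarith [h.1]
    exact (_root_.intervalIntegrable_const).add ((hz.const_mul u).const_mul (2 * W * Real.exp W))
  have hB : (∫ t in u..(1/2:ℝ),
      ‖((t * (1 - t) : ℝ) : ℂ) ^ (s - 1) * (((t + u : ℝ)) : ℂ) ^ (-s) - (((t + u : ℝ)) : ℂ)⁻¹‖)
      ≤ CB := by
    have step := intervalIntegral.integral_mono_on hu2' hDnB hgBint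
      (fun t ht => regionB_bound hu ht.1 ht.2)
    refine step.trans ?_
    have hz : IntervalIntegrable (fun t : ℝ => (t:ℝ) ^ (-2 : ℤ)) volume u (1/2) := by
      apply intervalIntegrable_zpow
      right
      rw [Set.uIcc_of_le hu2']
      intro h
      linarith [h.1]
    have eq2 : (∫ t in u..(1/2:ℝ), (t:ℝ) ^ (-2 : ℤ)) = u⁻¹ - 2 := by
      rw [integral_zpow (Or.inr ⟨by norm_num, by
        rw [Set.uIcc_of_le hu2']
        intro h
        linarith [h.1]⟩)]
      norm_num
      ring
    have eq1 : (∫ t in u..(1/2:ℝ),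
        (4 * W * Real.exp W * Real.exp W + 2 * W * Real.exp W * (u * (t:ℝ) ^ (-2 : ℤ))))
        = 4 * W * Real.exp W * Real.exp W * (1/2 - u)
          + 2 * W * Real.exp W * (u * (u⁻¹ - 2)) := by
      rw [intervalIntegral.integral_add _root_.intervalIntegrable_const
          ((hz.const_mul u).const_mul (2 * W * Real.exp W)),
        intervalIntegral.integral_const]
      simp only [intervalIntegral.integral_const_mul]
      rw [eq2, smul_eq_mul]
      ring
    rw [eq1, hCBdef]
    have hmu : u * (u⁻¹ - 2) = 1 - 2*u := by
      rw [mul_sub, mul_inv_cancel₀ hu.ne']; ring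
    rw [hmu]
    have h1 : 0 ≤ 4*W*Real.exp W*Real.exp W := by positivity
    have h2 : 0 ≤ 2*W*Real.exp W := by positivity
    have h3 : 4*W*Real.exp W*Real.exp W*(1/2-u) ≤ 4*W*Real.exp W*Real.exp W*(1/2) :=
      mul_le_mul_of_nonneg_left (by linarith) h1
    have h4 : 2*W*Real.exp W*(1-2*u) ≤ 2*W*Real.exp W*1 :=
      mul_le_mul_of_nonneg_left (by linarith) h2
    linarith
  -- Region C
  have hgCint : IntervalIntegrable
      (fun t : ℝ => K * ((1/2:ℝ) ^ (-s.re)) * (1 - t) ^ (s.re - 1) + 2) volume (1/2) 1 := by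
    have h1 : IntervalIntegrable (fun t : ℝ => ((1:ℝ) - t) ^ (s.re - 1)) volume (1/2) 1 := by
      have := ((intervalIntegrable_rpow' (a := 0) (b := 1/2)
        (by linarith : (-1:ℝ) < s.re - 1)).comp_sub_left 1).symm
      norm_num at this
      exact this
    exact (h1.const_mul _).add intervalIntegrable_const
  have hC : (∫ t in (1/2:ℝ)..1,
      ‖((t * (1 - t) : ℝ) : ℂ) ^ (s - 1) * (((t + u : ℝ)) : ℂ) ^ (-s) - (((t + u : ℝ)) : ℂ)⁻¹‖)
      ≤ CC := by
    have step : (∫ t in (1/2:ℝ)..1,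
        ‖((t * (1 - t) : ℝ) : ℂ) ^ (s - 1) * (((t + u : ℝ)) : ℂ) ^ (-s) - (((t + u : ℝ)) : ℂ)⁻¹‖)
        ≤ ∫ t in (1/2:ℝ)..1, (K * ((1/2:ℝ) ^ (-s.re)) * (1 - t) ^ (s.re - 1) + 2) := by
      apply intervalIntegral.integral_mono_on (by norm_num) hDnC hgCint
      intro t ht
      have ht0 : (1/2:ℝ) ≤ t := ht.1
      have ht1 : t ≤ 1 := ht.2
      have b1 : ‖((t * (1 - t) : ℝ) : ℂ) ^ (s - 1)‖ ≤ (t * (1 - t)) ^ (s.re - 1) := by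
        have := norm_ofReal_cpow_le (x := t * (1 - t)) (by nlinarith) (s - 1)
        simpa using this
      have b2 : ‖(((t + u : ℝ)) : ℂ) ^ (-s)‖ ≤ ((1:ℝ)/2) ^ (-s.re) := by
        have h1 := norm_ofReal_cpow_le (x := t + u) (by linarith) (-s)
        have h2 : (t + u) ^ ((-s).re) ≤ ((1:ℝ)/2) ^ (-s.re) := by
          rw [Complex.neg_re]
          exact Real.rpow_le_rpow_of_nonpos (by norm_num) (by linarith) (by linarith)
        exact h1.trans h2
      have b3 : (t * (1 - t)) ^ (s.re - 1) ≤ K * (1 - t) ^ (s.re - 1) := by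
        rw [Real.mul_rpow (by linarith) (by linarith)]
        exact mul_le_mul_of_nonneg_right (hKb t ht0 ht1) (Real.rpow_nonneg (by linarith) _)
      have b4 : ‖(((t + u : ℝ)) : ℂ)⁻¹‖ ≤ 2 := by
        rw [norm_inv, Complex.norm_real, Real.norm_eq_abs, abs_of_pos (by linarith)]
        rw [show (2:ℝ) = ((1:ℝ)/2)⁻¹ from by norm_num]
        exact inv_anti₀ (by norm_num) (by linarith)
      calc ‖((t * (1 - t) : ℝ) : ℂ) ^ (s - 1) * (((t + u : ℝ)) : ℂ) ^ (-s) - (((t + u : ℝ)) : ℂ)⁻¹‖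
          ≤ ‖((t * (1 - t) : ℝ) : ℂ) ^ (s - 1) * (((t + u : ℝ)) : ℂ) ^ (-s)‖
            + ‖(((t + u : ℝ)) : ℂ)⁻¹‖ := norm_sub_le _ _
        _ ≤ (t * (1 - t)) ^ (s.re - 1) * (((1:ℝ)/2) ^ (-s.re)) + 2 := by
            rw [norm_mul]
            have := mul_le_mul b1 b2 (norm_nonneg _) (Real.rpow_nonneg (by nlinarith) _)
            linarith
        _ ≤ K * (1 - t) ^ (s.re - 1) * (((1:ℝ)/2) ^ (-s.re)) + 2 := by
            have := mul_le_mul_of_nonneg_right b3 (Real.rpow_nonneg (by norm_num : (0:ℝ) ≤ 1/2) (-s.re))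
            linarith
        _ = K * ((1/2:ℝ) ^ (-s.re)) * (1 - t) ^ (s.re - 1) + 2 := by ring
    refine step.trans ?_
    have h1 : IntervalIntegrable (fun t : ℝ => ((1:ℝ) - t) ^ (s.re - 1)) volume (1/2) 1 := by
      have := ((intervalIntegrable_rpow' (a := 0) (b := 1/2)
        (by linarith : (-1:ℝ) < s.re - 1)).comp_sub_left 1).symm
      norm_num at this
      exact this
    rw [intervalIntegral.integral_add (h1.const_mul _) intervalIntegrable_const,
      intervalIntegral.integral_const_mul, intervalIntegral.integral_const, smul_eq_mul]
    have eq3 : (∫ t in (1/2:ℝ)..1, ((1:ℝ) - t) ^ (s.re - 1)) = (1/2:ℝ) ^ s.re / s.re := by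
      have := intervalIntegral.integral_comp_sub_left (a := (1/2:ℝ)) (b := 1)
        (fun x : ℝ => x ^ (s.re - 1)) 1
      norm_num at this
      rw [this, integral_rpow (Or.inl (by linarith : (-1:ℝ) < s.re - 1))]
      have hexp : s.re - 1 + 1 = s.re := by ring
      rw [hexp, Real.zero_rpow hs.ne']
      ring
    rw [eq3, hCCdef]
    norm_num
  -- Assembly
  have hsum : (∫ t in (0:ℝ)..1,
      ‖((t * (1 - t) : ℝ) : ℂ) ^ (s - 1) * (((t + u : ℝ)) : ℂ) ^ (-s) - (((t + u : ℝ)) : ℂ)⁻¹‖)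
      ≤ CA + CB + CC := by
    rw [← e2, ← e1]
    linarith
  have hnorm : ‖∫ t in (0:ℝ)..1,
      (((t * (1 - t) : ℝ) : ℂ) ^ (s - 1) * (((t + u : ℝ)) : ℂ) ^ (-s) - (((t + u : ℝ)) : ℂ)⁻¹)‖
      ≤ CA + CB + CC :=
    le_trans (intervalIntegral.norm_integral_le_integral_norm (by norm_num)) hsum
  have hkey : resolventKernelPhi u s + (((1 / (4 * π)) * Real.log u : ℝ) : ℂ)
      = (1 / (4 * (π:ℂ))) * (∫ t in (0:ℝ)..1,
          (((t * (1 - t) : ℝ) : ℂ) ^ (s - 1) * (((t + u : ℝ)) : ℂ) ^ (-s) - (((t + u : ℝ)) : ℂ)⁻¹))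
        + (1 / (4 * (π:ℂ))) * ((Real.log (1 + u) : ℝ) : ℂ) := by
    rw [intervalIntegral.integral_sub hf hg, Jval hu]
    simp only [resolventKernelPhi]
    push_cast
    ring
  rw [hkey]
  have hlog : ‖((Real.log (1 + u) : ℝ) : ℂ)‖ ≤ 1 := by
    rw [Complex.norm_real, Real.norm_eq_abs,
      abs_of_nonneg (Real.log_nonneg (by linarith))]
    have := Real.log_le_sub_one_of_pos (by linarith : (0:ℝ) < 1 + u)
    linarith
  have hstep : ‖(1 / (4 * (π:ℂ))) * (∫ t in (0:ℝ)..1,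
          (((t * (1 - t) : ℝ) : ℂ) ^ (s - 1) * (((t + u : ℝ)) : ℂ) ^ (-s) - (((t + u : ℝ)) : ℂ)⁻¹))
        + (1 / (4 * (π:ℂ))) * ((Real.log (1 + u) : ℝ) : ℂ)‖
      ≤ 1/(4*π) * (CA + CB + CC) + 1/(4*π) * 1 := by
    refine (norm_add_le _ _).trans ?_
    rw [norm_mul, norm_mul, phi_const_norm]
    have h1 := mul_le_mul_of_nonneg_left hnorm (by positivity : (0:ℝ) ≤ 1/(4*π))
    have h2 := mul_le_mul_of_nonneg_left hlog (by positivity : (0:ℝ) ≤ 1/(4*π))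
    linarith
  refine hstep.trans ?_
  have heq : 1/(4*π) * (CA + CB + CC) + 1/(4*π) * 1 = 1/(4*π) * (CA + CB + CC + 1) := by ring
  linarith [heq]

lemma part_two {s : ℂ} (hs : 0 < s.re) :
    ∃ C : ℝ, 0 < C ∧ ∃ M : ℝ, 0 < M ∧ ∀ u : ℝ, M ≤ u →
      ‖resolventKernelPhi u s‖ ≤ C * u ^ (-s.re) := by
  set B : ℝ := ∫ t in (0:ℝ)..1, (t * (1 - t)) ^ (s.re - 1) with hB
  have hBnn : 0 ≤ B := by
    apply intervalIntegral.integral_nonneg (by norm_num)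
    intro t ht; exact Real.rpow_nonneg (by nlinarith [ht.1, ht.2]) _
  refine ⟨1 / (4 * π) * B + 1, by positivity, 1, one_pos, fun u hu => ?_⟩
  have hu0 : (0:ℝ) < u := lt_of_lt_of_le one_pos hu
  have hupow : (0:ℝ) < u ^ (-s.re) := Real.rpow_pos_of_pos hu0 _
  have hint := kernel_integrable hs hu0
  have key : ‖∫ t in (0:ℝ)..1, ((t * (1 - t) : ℝ) : ℂ) ^ (s - 1) * (((t + u : ℝ)) : ℂ) ^ (-s)‖
      ≤ u ^ (-s.re) * B := by
    calc ‖∫ t in (0:ℝ)..1, ((t * (1 - t) : ℝ) : ℂ) ^ (s - 1) * (((t + u : ℝ)) : ℂ) ^ (-s)‖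
        ≤ ∫ t in (0:ℝ)..1, ‖((t * (1 - t) : ℝ) : ℂ) ^ (s - 1) * (((t + u : ℝ)) : ℂ) ^ (-s)‖ :=
          intervalIntegral.norm_integral_le_integral_norm (by norm_num)
      _ ≤ ∫ t in (0:ℝ)..1, u ^ (-s.re) * ((t * (1 - t)) ^ (s.re - 1)) := by
          apply intervalIntegral.integral_mono_on (by norm_num) hint.norm
            ((real_beta_integrable hs).const_mul _)
          intro t ht
          rw [norm_mul]
          have b1 : ‖((t * (1 - t) : ℝ) : ℂ) ^ (s - 1)‖ ≤ (t * (1 - t)) ^ (s.re - 1) := by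
            have := norm_ofReal_cpow_le (x := t * (1-t)) (by nlinarith [ht.1, ht.2]) (s - 1)
            simpa using this
          have b2 : ‖(((t + u : ℝ)) : ℂ) ^ (-s)‖ ≤ u ^ (-s.re) := by
            have h1 := norm_ofReal_cpow_le (x := t + u) (by linarith [ht.1]) (-s)
            have h2 : (t + u) ^ ((-s).re) ≤ u ^ (-s.re) := by
              rw [Complex.neg_re]
              exact Real.rpow_le_rpow_of_nonpos hu0 (by linarith [ht.1]) (by linarith)
            exact h1.trans h2
          calc ‖((t * (1 - t) : ℝ) : ℂ) ^ (s - 1)‖ * ‖(((t + u : ℝ)) : ℂ) ^ (-s)‖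
              ≤ (t * (1 - t)) ^ (s.re - 1) * (u ^ (-s.re)) := by
                exact mul_le_mul b1 b2 (norm_nonneg _) (Real.rpow_nonneg (by nlinarith [ht.1, ht.2]) _)
            _ = u ^ (-s.re) * ((t * (1 - t)) ^ (s.re - 1)) := by ring
      _ = u ^ (-s.re) * B := by rw [intervalIntegral.integral_const_mul]
  rw [resolventKernelPhi, norm_mul, phi_const_norm]
  calc 1 / (4 * π) * ‖_‖ ≤ 1 / (4 * π) * (u ^ (-s.re) * B) := by
        apply mul_le_mul_of_nonneg_left key (by positivity)
    _ ≤ (1 / (4 * π) * B + 1) * u ^ (-s.re) := by nlinarith [hupow, hBnn, Real.pi_pos]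

/-- for fixed `s` with `Re s > 0`, the kernel `φ(u,s)` satisfies
`φ(u,s) = -(1/(4π)) log u + O(1)` as `u → 0⁺` and `φ(u,s) = O(u^{-Re s})` as `u → ∞`. -/
theorem resolvent_kernel_asymptotics (s : ℂ) (hs : 0 < s.re) :
    (∃ C : ℝ, 0 < C ∧ ∃ δ : ℝ, 0 < δ ∧ ∀ u : ℝ, 0 < u → u < δ →
      ‖resolventKernelPhi u s + (((1 / (4 * π)) * Real.log u : ℝ) : ℂ)‖ ≤ C) ∧
    (∃ C : ℝ, 0 < C ∧ ∃ M : ℝ, 0 < M ∧ ∀ u : ℝ, M ≤ u →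
      ‖resolventKernelPhi u s‖ ≤ C * u ^ (-s.re)) :=
  ⟨part_one hs, part_two hs⟩
end

section
/- Let z = x + iy be in the upper half-plane and let s ∈ ℂ with Re s > 1. Then ∑_{(m,n) ∈ ℤ²∖{(0,0)}} y^s / |mz + n|^{2s} = 2 ζ(2s) E(z,s), where ζ is the Riemann zeta function; equivalently, 2 ζ(2s) y^{−s} E(z,s) = ∑'_{m,n} Q(m,n)^{−s} for the positive-definite binary quadratic form Q(m,n) = m² − 2xmn + (x²+y²)n² = |m − nz|² with root z and discriminant −4y². -/
open Real Complex MeasureTheory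

/-- The Eisenstein–Maass series for the modular group,
`E(z,s) = (1/2) ∑_{(c,d) ∈ ℤ², gcd(c,d) = 1} (Im z)^s / |cz + d|^{2s}`,
absolutely convergent for `Re s > 1`. -/
noncomputable def eisensteinMaass (z s : ℂ) : ℂ :=
  (1 / 2) * ∑' p : {q : ℤ × ℤ // Int.gcd q.1 q.2 = 1},
    (z.im : ℂ) ^ s / ((‖(p.1.1 : ℂ) * z + (p.1.2 : ℂ)‖ : ℂ)) ^ (2 * s)

namespace EpsteinAux

/-- Every nonzero integer pair is uniquely a positive multiple of a coprime pair. -/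
def scaleEquiv : ℕ+ × {q : ℤ × ℤ // Int.gcd q.1 q.2 = 1} ≃ {q : ℤ × ℤ // q ≠ 0} where
  toFun p := ⟨((p.1 : ℤ) * p.2.1.1, (p.1 : ℤ) * p.2.1.2), by
    intro h
    have hk : (p.1 : ℤ) ≠ 0 := by exact_mod_cast p.1.ne_zero
    have h1 : (p.1 : ℤ) * p.2.1.1 = 0 := congrArg Prod.fst h
    have h2 : (p.1 : ℤ) * p.2.1.2 = 0 := congrArg Prod.snd h
    have hgcd := p.2.2
    rw [(mul_eq_zero.mp h1).resolve_left hk, (mul_eq_zero.mp h2).resolve_left hk] at hgcd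
    simp [Int.gcd] at hgcd⟩
  invFun q := ⟨⟨Int.gcd q.1.1 q.1.2, by
      rw [Int.gcd_pos_iff]
      by_contra hc
      push_neg at hc
      exact q.2 (Prod.ext hc.1 hc.2)⟩,
    ⟨(q.1.1 / Int.gcd q.1.1 q.1.2, q.1.2 / Int.gcd q.1.1 q.1.2), by
      apply Int.gcd_div_gcd_div_gcd
      rw [Int.gcd_pos_iff]
      by_contra hc
      push_neg at hc
      exact q.2 (Prod.ext hc.1 hc.2)⟩⟩
  left_inv p := by
    obtain ⟨k, ⟨⟨c, d⟩, hcd⟩⟩ := p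
    have hk : (k : ℤ) ≠ 0 := by exact_mod_cast k.ne_zero
    have hg : Int.gcd ((k : ℤ) * c) ((k : ℤ) * d) = (k : ℕ) := by
      rw [Int.gcd_mul_left, hcd, mul_one]
      simp
    dsimp only
    ext
    · exact Subtype.ext (by exact_mod_cast hg)
    · simp only [hg]
      exact Int.mul_ediv_cancel_left c hk
    · simp only [hg]
      exact Int.mul_ediv_cancel_left d hk
  right_inv q := by
    ext
    · exact Int.mul_ediv_cancel' (Int.gcd_dvd_left _ _)
    · exact Int.mul_ediv_cancel' (Int.gcd_dvd_right _ _)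

end EpsteinAux

/-- for `z` in the upper half-plane and `Re s > 1`,
`∑_{(m,n) ∈ ℤ² ∖ {0}} (Im z)^s / |mz + n|^{2s} = 2 ζ(2s) E(z,s)`. -/
theorem epstein_zeta_eq_zeta_mul_eisenstein (z s : ℂ) (hz : 0 < z.im) (hs : 1 < s.re) :
    ∑' p : {q : ℤ × ℤ // q ≠ 0},
        (z.im : ℂ) ^ s / ((‖(p.1.1 : ℂ) * z + (p.1.2 : ℂ)‖ : ℂ)) ^ (2 * s) =
      2 * riemannZeta (2 * s) * eisensteinMaass z s := by
  classical
  set f : ℤ × ℤ → ℂ := fun q =>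
    (z.im : ℂ) ^ s / ((‖(q.1 : ℂ) * z + (q.2 : ℂ)‖ : ℂ)) ^ (2 * s) with hf
  -- summability
  set z' : UpperHalfPlane := ⟨z, hz⟩ with hz'
  have hk2 : (2 : ℝ) < 2 * s.re := by linarith
  have hnorm : ∀ q : ℤ × ℤ, ‖f q‖ ≤
      z.im ^ s.re * ((EisensteinSeries.r z') ^ (-(2 * s.re)) * ‖![q.1, q.2]‖ ^ (-(2 * s.re))) := by
    intro q
    have hb := EisensteinSeries.summand_bound z' (k := 2 * s.re) (by positivity) ![q.1, q.2]
    simp only [Matrix.cons_val_zero, Matrix.cons_val_one, Matrix.head_cons] at hb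
    have hcoe : (z' : ℂ) = z := rfl
    rw [hcoe] at hb
    have hnum : ‖(z.im : ℂ) ^ s‖ = z.im ^ s.re := by
      rw [Complex.norm_cpow_eq_rpow_re_of_pos hz]
    rw [hf]
    simp only [norm_div, hnum]
    set A : ℝ := ‖(q.1 : ℂ) * z + (q.2 : ℂ)‖ with hA
    rcases eq_or_lt_of_le (norm_nonneg ((q.1 : ℂ) * z + (q.2 : ℂ))) with h0 | h0
    · rw [← hA] at h0
      rw [← h0]
      have : ((0 : ℝ) : ℂ) ^ (2 * s) = 0 := by
        rw [Complex.ofReal_zero, Complex.zero_cpow (by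
          intro h
          have := congrArg Complex.re h
          simp at this
          linarith)]
      rw [this, norm_zero, div_zero]
      have hr := (EisensteinSeries.r_pos z').le
      exact mul_nonneg (Real.rpow_nonneg hz.le _)
        (mul_nonneg (Real.rpow_nonneg hr _) (Real.rpow_nonneg (norm_nonneg _) _))
    · rw [← hA] at h0
      have hden : ‖(A : ℂ) ^ (2 * s)‖ = A ^ (2 * s.re) := by
        rw [Complex.norm_cpow_eq_rpow_re_of_pos h0]
        norm_num
      rw [hden, div_eq_mul_inv, ← Real.rpow_neg h0.le]
      rw [mul_le_mul_iff_right₀ (by positivity)]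
      exact hb
  have hsumR : Summable fun q : ℤ × ℤ =>
      z.im ^ s.re * ((EisensteinSeries.r z') ^ (-(2 * s.re)) * ‖![q.1, q.2]‖ ^ (-(2 * s.re))) := by
    have h1 := (EisensteinSeries.summable_one_div_norm_rpow hk2).mul_left
      ((EisensteinSeries.r z') ^ (-(2 * s.re)))
    have h2 := (h1.mul_left (z.im ^ s.re))
    have hinj : Function.Injective (fun q : ℤ × ℤ => (![q.1, q.2] : Fin 2 → ℤ)) := by
      intro a b hab
      have h0 := congrFun hab 0
      have h1' := congrFun hab 1
      simp at h0 h1'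
      exact Prod.ext h0 h1'
    exact (h2.comp_injective hinj).congr (fun q => rfl)
  have hsumf : Summable f := Summable.of_norm <|
    hsumR.of_norm_bounded (fun q => by
      rw [Real.norm_of_nonneg (norm_nonneg _)]; exact hnorm q)
  have hsub : Summable fun q : {q : ℤ × ℤ // q ≠ 0} => f q := hsumf.subtype _
  -- pull back along scaleEquiv
  have hkey : ∀ p : ℕ+ × {q : ℤ × ℤ // Int.gcd q.1 q.2 = 1},
      f (EpsteinAux.scaleEquiv p) = (1 / ((p.1 : ℕ) : ℂ) ^ (2 * s)) * f p.2 := by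
    rintro ⟨k, ⟨⟨c, d⟩, hcd⟩⟩
    have habs : ‖(((k : ℤ) * c : ℤ) : ℂ) * z + (((k : ℤ) * d : ℤ) : ℂ)‖
        = (k : ℝ) * ‖(c : ℂ) * z + (d : ℂ)‖ := by
      have : (((k : ℤ) * c : ℤ) : ℂ) * z + (((k : ℤ) * d : ℤ) : ℂ)
          = ((k : ℕ) : ℂ) * ((c : ℂ) * z + (d : ℂ)) := by push_cast; ring
      rw [this, norm_mul, Complex.norm_natCast]
    rw [hf]
    simp only [EpsteinAux.scaleEquiv, Equiv.coe_fn_mk]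
    rw [habs, Complex.ofReal_mul, Complex.mul_cpow_ofReal_nonneg (Nat.cast_nonneg _) (norm_nonneg _)]
    push_cast
    rw [div_mul_div_comm, one_mul]
  have hsump : Summable fun p : ℕ+ × {q : ℤ × ℤ // Int.gcd q.1 q.2 = 1} =>
      f (EpsteinAux.scaleEquiv p) := EpsteinAux.scaleEquiv.summable_iff.mpr hsub
  have hzeta : ∑' k : ℕ+, 1 / ((k : ℕ) : ℂ) ^ (2 * s) = riemannZeta (2 * s) := by
    rw [zeta_eq_tsum_one_div_nat_add_one_cpow (by simp; linarith)]
    rw [← Equiv.pnatEquivNat.symm.tsum_eq (fun k : ℕ+ => 1 / ((k : ℕ) : ℂ) ^ (2 * s))]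
    apply tsum_congr
    intro n
    congr 2
    simp [Equiv.pnatEquivNat]
  calc ∑' p : {q : ℤ × ℤ // q ≠ 0}, f p
      = ∑' p : ℕ+ × {q : ℤ × ℤ // Int.gcd q.1 q.2 = 1}, f (EpsteinAux.scaleEquiv p) :=
        (EpsteinAux.scaleEquiv.tsum_eq _).symm
    _ = ∑' p : ℕ+ × {q : ℤ × ℤ // Int.gcd q.1 q.2 = 1},
          (1 / ((p.1 : ℕ) : ℂ) ^ (2 * s)) * f p.2 := tsum_congr hkey
    _ = ∑' k : ℕ+, ∑' p : {q : ℤ × ℤ // Int.gcd q.1 q.2 = 1},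
          (1 / ((k : ℕ) : ℂ) ^ (2 * s)) * f p := by
        exact (hsump.congr hkey).tsum_prod
    _ = (∑' k : ℕ+, 1 / ((k : ℕ) : ℂ) ^ (2 * s)) *
          ∑' p : {q : ℤ × ℤ // Int.gcd q.1 q.2 = 1}, f p := by
        rw [← tsum_mul_right]
        exact tsum_congr fun k => tsum_mul_left
    _ = 2 * riemannZeta (2 * s) * eisensteinMaass z s := by
        rw [hzeta, eisensteinMaass]
        ring
end
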